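/- arXiv:2011.13513 — 7 statements merged into one kernel-verified Lean document; each statement's English description precedes it below -/
import Mathlib

section
/- Let h ≥ 2, let X be a countably infinite set, and let 𝒜 be a set of finite subsets of X. For a finite subset S of X, let g(S) be the number of ordered h-tuples (A_1,...,A_h) of pairwise disjoint members of 𝒜 whose union is S. Suppose there is an infinite set W of positive integers such that for every n ∈ W, all but finitely many n-element subsets S of X satisfy g(S) ≥ 1. Then for every integer n there exists a finite subset S of X with g(S) ≥ n. -/
theorem myRamsey (C : Type) [Finite C] :
    ∀ (n : ℕ) (c : Finset ℕ → C) (Z : Set ℕ), Z.Infinite →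
    ∃ Y : Set ℕ, Y ⊆ Z ∧ Y.Infinite ∧ ∃ k : C,
      ∀ s : Finset ℕ, ↑s ⊆ Y → s.card = n → c s = k := by
  intro n
  induction n with
  | zero =>
    intro c Z hZ
    refine ⟨Z, subset_rfl, hZ, c ∅, fun s _ h0 => ?_⟩
    rw [Finset.card_eq_zero] at h0; rw [h0]
  | succ n ih =>
    intro c Z hZ
    choose F hsub hinf K hK using ih
    -- step function on infinite sets
    let step : {S : Set ℕ // S.Infinite} → {S : Set ℕ // S.Infinite} := fun S =>
      ⟨F (fun s => c (insert (sInf S.1) s)) (S.1 \ {sInf S.1})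
          (S.2.diff (Set.finite_singleton _)),
       hinf (fun s => c (insert (sInf S.1) s)) (S.1 \ {sInf S.1})
          (S.2.diff (Set.finite_singleton _))⟩
    let seq : ℕ → {S : Set ℕ // S.Infinite} := fun i => step^[i] ⟨Z, hZ⟩
    have hseq : ∀ i, seq (i + 1) = step (seq i) := by
      intro i
      simp only [seq, Function.iterate_succ_apply']
    let a : ℕ → ℕ := fun i => sInf (seq i).1
    have hmem : ∀ i, a i ∈ (seq i).1 := fun i => Nat.sInf_mem (seq i).2.nonempty
    have hstep : ∀ i, (seq (i + 1)).1 ⊆ (seq i).1 \ {a i} := by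
      intro i
      rw [hseq i]
      exact hsub _ _ _
    have hchain : ∀ i j, i ≤ j → (seq j).1 ⊆ (seq i).1 := by
      intro i j hij
      induction j with
      | zero =>
        have : i = 0 := by omega
        subst this; exact subset_rfl
      | succ j ihj =>
        rcases Nat.lt_or_ge i (j+1) with hlt | hge
        · exact ((hstep j).trans Set.diff_subset).trans (ihj (by omega))
        · have : i = j + 1 := by omega
          subst this; exact subset_rfl
    have ha : StrictMono a := by
      apply strictMono_nat_of_lt_succ
      intro i
      have h1 : a (i+1) ∈ (seq i).1 \ {a i} := hstep i (hmem (i+1))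
      have h2 : a i ≤ a (i+1) := Nat.sInf_le h1.1
      have h3 : a (i+1) ≠ a i := h1.2
      omega
    let kc : ℕ → C := fun i => K (fun s => c (insert (a i) s)) ((seq i).1 \ {a i})
      ((seq i).2.diff (Set.finite_singleton _))
    have hkc : ∀ i, ∀ s : Finset ℕ, ↑s ⊆ (seq (i+1)).1 → s.card = n →
        c (insert (a i) s) = kc i := by
      intro i s hs hcard
      exact hK (fun s => c (insert (a i) s)) ((seq i).1 \ {a i})
        ((seq i).2.diff (Set.finite_singleton _)) s
        (hs.trans (by rw [hseq i])) hcard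
    -- pigeonhole
    obtain ⟨k₀, hk₀⟩ := Finite.exists_infinite_fiber kc
    have hIinf : {i | kc i = k₀}.Infinite := by
      have he : kc ⁻¹' {k₀} = {i | kc i = k₀} := by ext i; simp
      rw [← he, ← Set.infinite_coe_iff]; exact hk₀
    refine ⟨a '' {i | kc i = k₀}, ?_, hIinf.image (ha.injective.injOn), k₀, ?_⟩
    · rintro x ⟨i, _, rfl⟩
      have : (seq i).1 ⊆ (seq 0).1 := hchain 0 i (Nat.zero_le _)
      exact this (hmem i)
    · intro s hsY hcard
      -- index set
      have hsr : ∀ x ∈ s, x ∈ Set.range a := by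
        intro x hx
        obtain ⟨i, _, rfl⟩ := hsY hx
        exact ⟨i, rfl⟩
      classical
      let J : Finset ℕ := s.preimage a (ha.injective.injOn)
      have hJim : J.image a = s := by
        ext x
        simp only [J, Finset.mem_image, Finset.mem_preimage]
        constructor
        · rintro ⟨i, hi, rfl⟩; exact hi
        · intro hx; obtain ⟨i, rfl⟩ := hsr x hx; exact ⟨i, hx, rfl⟩
      have hJcard : J.card = n + 1 := by
        rw [← hcard, ← hJim, Finset.card_image_of_injective _ ha.injective]
      have hJne : J.Nonempty := by
        rw [← Finset.card_pos, hJcard]; omega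
      let i₀ := J.min' hJne
      have hi₀J : i₀ ∈ J := J.min'_mem hJne
      have hks : ∀ j ∈ J, kc j = k₀ := by
        intro j hj
        have : a j ∈ s := by rw [← hJim]; exact Finset.mem_image_of_mem a hj
        obtain ⟨i, hi, hai⟩ := hsY this
        have : i = j := ha.injective hai
        subst this; exact hi
      let rest : Finset ℕ := (J.erase i₀).image a
      have hrest_sub : ↑rest ⊆ (seq (i₀+1)).1 := by
        intro x hx
        simp only [rest, Finset.coe_image, Set.mem_image, Finset.mem_coe,
          Finset.mem_erase] at hx
        obtain ⟨j, ⟨hne, hj⟩, rfl⟩ := hx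
        have hlt : i₀ < j := lt_of_le_of_ne (J.min'_le j hj) (Ne.symm hne)
        exact hchain (i₀+1) j hlt (hmem j)
      have hrest_card : rest.card = n := by
        rw [Finset.card_image_of_injective _ ha.injective, Finset.card_erase_of_mem hi₀J,
          hJcard]
        omega
      have hins : insert (a i₀) rest = s := by
        show insert (a i₀) ((J.erase i₀).image a) = s
        rw [← Finset.image_insert, Finset.insert_erase hi₀J, hJim]
      rw [← hins, hkc i₀ rest hrest_sub hrest_card]
      exact hks i₀ hi₀J


theorem sigmaL (n q : ℕ) (K : Finset (Fin n)) (hK : K.card = q)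
    (u : Finset ℕ) (hu : u.card = q)
    (huM : ∀ x ∈ u, n ∣ x ∧ n ≤ x) :
    ∃ σ : Fin n → ℕ, StrictMono σ ∧ K.image σ = u := by
  classical
  have hqn : q ≤ n := by
    rw [← hK]
    simpa using Finset.card_le_univ K
  set uval : ℕ → ℕ := fun j => if hj : j < q then u.orderEmbOfFin hu ⟨j, hj⟩ else 0 with huval
  have uval_mem : ∀ j, j < q → uval j ∈ u := by
    intro j hj
    simp only [huval, dif_pos hj]
    exact Finset.orderEmbOfFin_mem u hu _
  have uval_lt : ∀ j j', j < j' → j' < q → uval j < uval j' := by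
    intro j j' hjj hj'
    simp only [huval, dif_pos hj', dif_pos (hjj.trans hj')]
    exact (u.orderEmbOfFin hu).strictMono (by exact hjj)
  have uval_ge : ∀ j, j < q → n ≤ uval j := fun j hj => (huM _ (uval_mem j hj)).2
  have uval_gap : ∀ j, j + 1 < q → uval j + n ≤ uval (j+1) := by
    intro j hj
    have h1 := uval_lt j (j+1) (by omega) hj
    have d1 := (huM _ (uval_mem j (by omega))).1
    have d2 := (huM _ (uval_mem (j+1) hj)).1
    have hd : n ∣ uval (j+1) - uval j := Nat.dvd_sub d2 d1
    have := Nat.le_of_dvd (by omega) hd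
    omega
  have uval_mono : ∀ j j', j ≤ j' → j' < q → uval j ≤ uval j' := by
    intro j j' hjj hj'
    rcases eq_or_lt_of_le hjj with rfl | hlt
    · exact le_rfl
    · exact (uval_lt j j' hlt hj').le
  set cnt : Fin n → ℕ := fun k => (K.filter (fun k' => k' ≤ k)).card with hcnt
  have cnt_mono : ∀ k k' : Fin n, k ≤ k' → cnt k ≤ cnt k' := by
    intro k k' hkk
    apply Finset.card_le_card
    intro x hx
    simp only [Finset.mem_filter] at hx ⊢
    exact ⟨hx.1, hx.2.trans hkk⟩
  have cnt_le : ∀ k, cnt k ≤ q := by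
    intro k
    rw [← hK]
    exact Finset.card_le_card (Finset.filter_subset _ _)
  have cnt_pos : ∀ k ∈ K, 1 ≤ cnt k := by
    intro k hk
    have h1 : k ∈ K.filter (fun k' => k' ≤ k) := by
      simp [Finset.mem_filter, hk]
    have h2 : 0 < cnt k := by
      simp only [hcnt]
      exact Finset.card_pos.mpr ⟨k, h1⟩
    omega
  have cnt_lt : ∀ k k' : Fin n, k < k' → k' ∈ K → cnt k < cnt k' := by
    intro k k' hkk hk'
    have hsub : insert k' (K.filter (fun x => x ≤ k)) ⊆ K.filter (fun x => x ≤ k') := by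
      intro x hx
      rcases Finset.mem_insert.mp hx with rfl | hx
      · simp [Finset.mem_filter, hk']
      · simp only [Finset.mem_filter] at hx ⊢
        exact ⟨hx.1, hx.2.trans hkk.le⟩
    have hnot : k' ∉ K.filter (fun x => x ≤ k) := by
      simp only [Finset.mem_filter, not_and]
      intro _
      exact not_le.mpr hkk
    have := Finset.card_le_card hsub
    rw [Finset.card_insert_of_notMem hnot] at this
    simp only [hcnt]
    omega
  set σ : Fin n → ℕ := fun k =>
    (if cnt k = 0 then 0 else uval (cnt k - 1)) + (if k ∈ K then 0 else (k : ℕ) + 1) with hσ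
  have hσK : ∀ k ∈ K, σ k = uval (cnt k - 1) := by
    intro k hk
    have h1 : cnt k ≠ 0 := by have := cnt_pos k hk; omega
    simp [hσ, h1, hk]
  have hmono : StrictMono σ := by
    intro k k' hkk
    have hj : cnt k ≤ cnt k' := cnt_mono k k' hkk.le
    have hkn : (k : ℕ) + 1 < n := by
      have h1 : (k : ℕ) < (k' : ℕ) := hkk
      have h2 : (k' : ℕ) < n := k'.2
      omega
    by_cases hkK : k ∈ K <;> by_cases hk'K : k' ∈ K
    · -- both in K
      have h1 : cnt k < cnt k' := cnt_lt k k' hkk hk'K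
      rw [hσK k hkK, hσK k' hk'K]
      have := cnt_pos k hkK
      exact uval_lt _ _ (by omega) (by have := cnt_le k'; omega)
    · -- k ∈ K, k' ∉ K
      have hp := cnt_pos k hkK
      have h2 : cnt k' ≠ 0 := by omega
      rw [hσK k hkK]
      simp only [hσ, if_neg h2, if_neg hk'K]
      have h3 : uval (cnt k - 1) ≤ uval (cnt k' - 1) := by
        apply uval_mono _ _ (by omega)
        have := cnt_le k'; omega
      omega
    · -- k ∉ K, k' ∈ K
      have h1 : cnt k < cnt k' := cnt_lt k k' hkk hk'K
      rw [hσK k' hk'K]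
      simp only [hσ, if_neg hkK]
      have hq' : cnt k' - 1 < q := by have := cnt_le k'; have := cnt_pos k' hk'K; omega
      by_cases h0 : cnt k = 0
      · rw [if_pos h0]
        have := uval_ge (cnt k' - 1) hq'
        omega
      · rw [if_neg h0]
        have hg : uval (cnt k - 1) + n ≤ uval (cnt k) := by
          have : (cnt k - 1) + 1 = cnt k := by omega
          rw [← this]
          exact uval_gap _ (by omega)
        have : uval (cnt k) ≤ uval (cnt k' - 1) := uval_mono _ _ (by omega) hq'
        omega
    · -- neither in K
      simp only [hσ, if_neg hkK, if_neg hk'K]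
      rcases eq_or_lt_of_le hj with heq | hlt
      · rw [heq]
        have : (k : ℕ) < (k' : ℕ) := hkk
        omega
      · have hq' : cnt k' - 1 < q := by have := cnt_le k'; omega
        have hge := uval_ge (cnt k' - 1) hq'
        by_cases h0 : cnt k = 0
        · rw [if_pos h0, if_neg (by omega)]
          omega
        · rw [if_neg h0, if_neg (by omega)]
          have hg : uval (cnt k - 1) + n ≤ uval (cnt k) := by
            have he : (cnt k - 1) + 1 = cnt k := by omega
            rw [← he]
            exact uval_gap _ (by omega)
          have : uval (cnt k) ≤ uval (cnt k' - 1) := uval_mono _ _ (by omega) hq'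
          omega
  refine ⟨σ, hmono, ?_⟩
  have hsub : K.image σ ⊆ u := by
    intro x hx
    obtain ⟨k, hk, rfl⟩ := Finset.mem_image.mp hx
    rw [hσK k hk]
    exact uval_mem _ (by have := cnt_le k; have := cnt_pos k hk; omega)
  apply Finset.eq_of_subset_of_card_le hsub
  rw [Finset.card_image_of_injective _ hmono.injective, hK, hu]


/-- Nešetřil–Rödl-type theorem.  Let `h ≥ 2`, let `X` be a countably infinite set and
let `𝒜` be a set of finite subsets of `X`.  For a finite subset `S` of `X`, let `g S`
count the ordered `h`-tuples of pairwise disjoint members of `𝒜` with union `S`.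
If there is an infinite set `W` of positive integers such that for every `n ∈ W` all but
finitely many `n`-element subsets of `X` satisfy `g S ≥ 1`, then `g` is unbounded. -/
theorem unbounded_of_partition_representations {α : Type*} [Countable α] [DecidableEq α]
    (h : ℕ) (hh : 2 ≤ h) (X : Set α) (hX : X.Infinite)
    (𝒜 : Set (Finset α)) (h𝒜 : ∀ A ∈ 𝒜, ↑A ⊆ X)
    (g : Finset α → ℕ)
    (hg : ∀ S : Finset α, g S =
      {f : Fin h → Finset α | (∀ i, f i ∈ 𝒜) ∧
        (∀ i j, i ≠ j → Disjoint (f i) (f j)) ∧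
        Finset.univ.biUnion f = S}.ncard)
    (W : Set ℕ) (hW : W.Infinite) (hWpos : ∀ n ∈ W, 0 < n)
    (hrep : ∀ n ∈ W, {S : Finset α | ↑S ⊆ X ∧ S.card = n ∧ ¬ (1 ≤ g S)}.Finite) :
    ∀ n : ℕ, ∃ S : Finset α, ↑S ⊆ X ∧ n ≤ g S := by
  classical
  intro m
  obtain ⟨n, hnW, hn⟩ := hW.exists_gt (2 * m + 2)
  have hn1 : 1 ≤ n := by omega
  -- the good region Y
  have hEfin := hrep n hnW
  set Fb : Set α := ⋃ S ∈ {S : Finset α | ↑S ⊆ X ∧ S.card = n ∧ ¬ (1 ≤ g S)},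
    (↑S : Set α) with hFb
  have hFbfin : Fb.Finite := hEfin.biUnion (fun S _ => S.finite_toSet)
  set Y := X \ Fb with hY
  have hYinf : Y.Infinite := hX.diff hFbfin
  have hYX : Y ⊆ X := Set.diff_subset
  have hgood : ∀ S : Finset α, ↑S ⊆ Y → S.card = n → 1 ≤ g S := by
    intro S hS hcard
    by_contra hcon
    have hSE : S ∈ {S : Finset α | ↑S ⊆ X ∧ S.card = n ∧ ¬ (1 ≤ g S)} :=
      ⟨hS.trans hYX, hcard, hcon⟩
    obtain ⟨x, hx⟩ := Finset.card_pos.mp (by omega : 0 < S.card)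
    have hxF : x ∈ Fb := Set.mem_biUnion hSE (by exact hx)
    exact (hS hx).2 hxF
  -- embedding of ℕ into Y
  set w : ℕ → α := fun k => (Set.Infinite.natEmbedding Y hYinf k : α) with hw
  have hwinj : Function.Injective w := by
    intro a b hab
    exact (Set.Infinite.natEmbedding Y hYinf).injective (Subtype.val_injective hab)
  have hwY : ∀ k, w k ∈ Y := fun k => (Set.Infinite.natEmbedding Y hYinf k).2
  -- choice of partitions for n-subsets
  have key : ∀ s : Finset ℕ, s.card = n → ∃ f : Fin h → Finset α,
      (∀ i, f i ∈ 𝒜) ∧ (∀ i j, i ≠ j → Disjoint (f i) (f j)) ∧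
      Finset.univ.biUnion f = s.image w := by
    intro s hs
    have hcard : (s.image w).card = n := by
      rw [Finset.card_image_of_injective _ hwinj, hs]
    have hsubY : ↑(s.image w) ⊆ Y := by
      intro x hx
      simp only [Finset.coe_image, Set.mem_image, Finset.mem_coe] at hx
      obtain ⟨k, _, rfl⟩ := hx
      exact hwY k
    have h1 := hgood _ hsubY hcard
    rw [hg] at h1
    have h2 : {f : Fin h → Finset α | (∀ i, f i ∈ 𝒜) ∧
        (∀ i j, i ≠ j → Disjoint (f i) (f j)) ∧
        Finset.univ.biUnion f = s.image w}.Nonempty := by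
      exact Set.nonempty_of_ncard_ne_zero (Nat.one_le_iff_ne_zero.mp h1)
    exact h2
  set fch : Finset ℕ → (Fin h → Finset α) := fun s =>
    if hs : s.card = n then Classical.choose (key s hs) else fun _ => ∅ with hfch
  have fch_spec : ∀ s : Finset ℕ, s.card = n →
      (∀ i, fch s i ∈ 𝒜) ∧ (∀ i j, i ≠ j → Disjoint (fch s i) (fch s j)) ∧
      Finset.univ.biUnion (fch s) = s.image w := by
    intro s hs
    simp only [hfch, dif_pos hs]
    exact Classical.choose_spec (key s hs)
  have hpos : 0 < h := by omega
  -- the colouring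
  set col : Finset ℕ → (Fin n → Fin h) := fun s k =>
    if hs : s.card = n then
      (if he : ∃ i, fch s i ∈ 𝒜 ∧ w (s.orderEmbOfFin hs k) ∈ fch s i then he.choose
       else ⟨0, hpos⟩)
    else ⟨0, hpos⟩ with hcol
  obtain ⟨Z, hZsub, hZinf, χ, hhom⟩ := myRamsey (Fin n → Fin h) n col Set.univ
    Set.infinite_univ
  -- increasing enumeration of Z
  haveI : Infinite ↥Z := hZinf.to_subtype
  letI : DecidablePred (· ∈ Z) := fun _ => Classical.dec _
  set z : ℕ → ℕ := fun i => Nat.orderEmbeddingOfSet Z i with hz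
  have hzmono : StrictMono z := (Nat.orderEmbeddingOfSet Z).strictMono
  have hzZ : ∀ i, z i ∈ Z := by
    intro i
    have : z i ∈ Set.range (Nat.orderEmbeddingOfSet Z) := ⟨i, rfl⟩
    rwa [Nat.orderEmbeddingOfSet_range] at this
  set v : ℕ → α := fun i => w (z i) with hv
  have hvinj : Function.Injective v := hwinj.comp hzmono.injective
  have hvY : ∀ i, v i ∈ Y := fun i => hwY _
  -- the blocks of the pattern
  set Kb : Fin h → Finset (Fin n) := fun i => Finset.univ.filter (fun k => χ k = i) with hKb
  have hKbdis : ∀ i j, i ≠ j → Disjoint (Kb i) (Kb j) := by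
    intro i j hij
    rw [Finset.disjoint_left]
    intro k hk hk'
    simp only [hKb, Finset.mem_filter] at hk hk'
    exact hij (hk.2 ▸ hk'.2 ▸ rfl)
  have hKbmem : ∀ k : Fin n, k ∈ Kb (χ k) := by
    intro k; simp [hKb]
  -- the master fact
  have master : ∀ σ : Fin n → ℕ, StrictMono σ → ∀ i : Fin h,
      (Kb i).image (fun k => v (σ k)) ∈ 𝒜 := by
    intro σ hσ i
    set s : Finset ℕ := Finset.univ.image (fun k => z (σ k)) with hs
    have hzσ : StrictMono (fun k : Fin n => z (σ k)) := fun a b hab => hzmono (hσ hab)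
    have hscard : s.card = n := by
      rw [hs, Finset.card_image_of_injective _ hzσ.injective, Finset.card_univ,
        Fintype.card_fin]
    have hsZ : ↑s ⊆ Z := by
      intro x hx
      simp only [hs, Finset.coe_image, Set.mem_image, Finset.mem_coe] at hx
      obtain ⟨k, _, rfl⟩ := hx
      exact hzZ _
    have hcs : col s = χ := hhom s hsZ hscard
    have hemb : s.orderEmbOfFin hscard = fun k => z (σ k) :=
      (Finset.orderEmbOfFin_unique hscard
        (fun k => Finset.mem_image_of_mem _ (Finset.mem_univ k)) hzσ).symm
    obtain ⟨hA, hdis, hun⟩ := fch_spec s hscard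
    have hM : ∀ k : Fin n, v (σ k) ∈ fch s (χ k) := by
      intro k
      have hex : ∃ i, fch s i ∈ 𝒜 ∧ w (s.orderEmbOfFin hscard k) ∈ fch s i := by
        have hks : s.orderEmbOfFin hscard k ∈ s := Finset.orderEmbOfFin_mem s hscard k
        have h2 : w (s.orderEmbOfFin hscard k) ∈ Finset.univ.biUnion (fch s) := by
          rw [hun]
          exact Finset.mem_image_of_mem w hks
        obtain ⟨i, _, hi⟩ := Finset.mem_biUnion.mp h2
        exact ⟨i, hA i, hi⟩
      have hcolk : col s k = hex.choose := by
        simp only [hcol]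
        rw [dif_pos hscard, dif_pos hex]
      have hspec := hex.choose_spec.2
      rw [← hcolk, hcs] at hspec
      rw [hemb] at hspec
      exact hspec
    have hpart : fch s i = (Kb i).image (fun k => v (σ k)) := by
      apply Finset.Subset.antisymm
      · intro x hx
        have hxs : x ∈ Finset.univ.biUnion (fch s) :=
          Finset.mem_biUnion.mpr ⟨i, Finset.mem_univ i, hx⟩
        rw [hun] at hxs
        obtain ⟨y, hy, rfl⟩ := Finset.mem_image.mp hxs
        rw [hs] at hy
        obtain ⟨k, _, rfl⟩ := Finset.mem_image.mp hy
        have hM' := hM k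
        have hik : χ k = i := by
          by_contra hne
          exact (Finset.disjoint_left.mp (hdis i (χ k) (Ne.symm hne)) hx) hM'
        exact Finset.mem_image.mpr ⟨k, hik ▸ hKbmem k, rfl⟩
      · intro x hx
        obtain ⟨k, hk, rfl⟩ := Finset.mem_image.mp hx
        have hik : χ k = i := (Finset.mem_filter.mp hk).2
        rw [← hik]
        exact hM k
    rw [← hpart]
    exact hA i
  -- the counting principle
  have countLem : ∀ (T : Finset α) (N : ℕ) (FF : ℕ → (Fin h → Finset α)),
      (∀ t, t < N → (∀ i, FF t i ∈ 𝒜) ∧ (∀ i j, i ≠ j → Disjoint (FF t i) (FF t j)) ∧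
        Finset.univ.biUnion (FF t) = T) →
      (∀ t t', t < N → t' < N → FF t = FF t' → t = t') →
      N ≤ g T := by
    intro T N FF hFF hinj
    rw [hg]
    set G : Finset (Fin h → Finset α) := (Finset.range N).image FF with hG
    have hGcard : G.card = N := by
      rw [hG, Finset.card_image_of_injOn, Finset.card_range]
      intro t ht t' ht' hee
      exact hinj t t' (Finset.mem_coe.mp ht |> Finset.mem_range.mp)
        (Finset.mem_coe.mp ht' |> Finset.mem_range.mp) hee
    have hsub : ↑G ⊆ {f : Fin h → Finset α | (∀ i, f i ∈ 𝒜) ∧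
        (∀ i j, i ≠ j → Disjoint (f i) (f j)) ∧ Finset.univ.biUnion f = T} := by
      intro f hf
      simp only [hG, Finset.coe_image, Set.mem_image, Finset.mem_coe,
        Finset.mem_range] at hf
      obtain ⟨t, ht, rfl⟩ := hf
      exact hFF t ht
    have hfin : {f : Fin h → Finset α | (∀ i, f i ∈ 𝒜) ∧
        (∀ i j, i ≠ j → Disjoint (f i) (f j)) ∧ Finset.univ.biUnion f = T}.Finite := by
      apply Set.Finite.subset (Set.Finite.pi' (fun _ : Fin h => T.powerset.finite_toSet))
      intro f hf
      simp only [Set.mem_setOf_eq] at hf ⊢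
      intro i
      simp only [Finset.coe_powerset, Set.mem_preimage, Set.mem_powerset_iff,
        Finset.coe_subset, Finset.mem_coe, Finset.mem_powerset]
      rw [← hf.2.2]
      exact Finset.subset_biUnion_of_mem f (Finset.mem_univ i)
    have hle := Set.ncard_le_ncard hsub hfin
    rw [Set.ncard_coe_finset, hGcard] at hle
    exact hle
  -- case distinction on the pattern
  by_cases hconst : ∀ k : Fin n, χ k = χ ⟨0, hn1⟩
  · -- constant pattern
    set i₀ := χ ⟨0, hn1⟩ with hi₀
    set i₁ : Fin h := if i₀ = ⟨0, hpos⟩ then ⟨1, by omega⟩ else ⟨0, hpos⟩ with hi₁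
    have hi01 : i₁ ≠ i₀ := by
      by_cases hc : i₀ = ⟨0, hpos⟩
      · rw [hi₁, if_pos hc, hc]
        intro hcon
        have := congrArg Fin.val hcon
        simp at this
      · rw [hi₁, if_neg hc]
        exact fun hcon => hc hcon.symm
    have hKb0 : Kb i₀ = Finset.univ := by
      ext k
      simp [hKb, hconst k]
    have hKb1 : Kb i₁ = ∅ := by
      ext k
      simp only [hKb, Finset.mem_filter, Finset.mem_univ, true_and,
        Finset.notMem_empty, iff_false]
      rw [hconst k]
      exact fun hc => hi01 hc.symm
    have hempty : (∅ : Finset α) ∈ 𝒜 := by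
      have hm := master (fun k => (k : ℕ)) Fin.val_strictMono i₁
      rwa [hKb1, Finset.image_empty] at hm
    have hallA : ∀ u : Finset ℕ, u.card = n → u.image v ∈ 𝒜 := by
      intro u hu
      have hm := master (u.orderEmbOfFin hu) (u.orderEmbOfFin hu).strictMono i₀
      rw [hKb0] at hm
      have hiu : Finset.univ.image (fun k => (u.orderEmbOfFin hu) k) = u := by
        apply Finset.eq_of_subset_of_card_le
        · intro x hx
          obtain ⟨k, _, rfl⟩ := Finset.mem_image.mp hx
          exact Finset.orderEmbOfFin_mem u hu k
        · rw [Finset.card_image_of_injective _ (u.orderEmbOfFin hu).injective,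
            Finset.card_univ, Fintype.card_fin, hu]
      have himg : Finset.univ.image (fun k => v ((u.orderEmbOfFin hu) k)) = u.image v := by
        rw [show (fun k => v ((u.orderEmbOfFin hu) k)) =
          v ∘ (fun k => (u.orderEmbOfFin hu) k) from rfl, ← Finset.image_image, hiu]
      rwa [himg] at hm
    set T : Finset α := (Finset.range (2*n)).image v with hT
    have hTX : ↑T ⊆ X := by
      intro x hx
      simp only [hT, Finset.coe_image, Set.mem_image, Finset.mem_coe] at hx
      obtain ⟨k, _, rfl⟩ := hx
      exact hYX (hvY k)
    set uu : ℕ → Finset ℕ := fun t => (Finset.range n).image (· + t) with huu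
    have huucard : ∀ t, (uu t).card = n := by
      intro t
      rw [huu]
      rw [Finset.card_image_of_injective _ (add_left_injective t), Finset.card_range]
    have huusub : ∀ t, t ≤ n → uu t ⊆ Finset.range (2*n) := by
      intro t ht x hx
      simp only [huu, Finset.mem_image, Finset.mem_range] at hx ⊢
      obtain ⟨j, hj, rfl⟩ := hx
      omega
    have hcompcard : ∀ t, t ≤ n → (Finset.range (2*n) \ uu t).card = n := by
      intro t ht
      rw [Finset.card_sdiff_of_subset (huusub t ht), Finset.card_range, huucard]
      omega
    set FF : ℕ → (Fin h → Finset α) := fun t i =>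
      if i = i₀ then (uu t).image v
      else if i = i₁ then (Finset.range (2*n) \ uu t).image v else ∅ with hFF
    have e0 : ∀ t, FF t i₀ = (uu t).image v := by intro t; simp [hFF]
    have e1 : ∀ t, FF t i₁ = (Finset.range (2*n) \ uu t).image v := by
      intro t; simp [hFF, hi01]
    have e2 : ∀ t i, i ≠ i₀ → i ≠ i₁ → FF t i = ∅ := by
      intro t i h1 h2; simp [hFF, h1, h2]
    have hprops : ∀ t, t < n + 1 → (∀ i, FF t i ∈ 𝒜) ∧
        (∀ i j, i ≠ j → Disjoint (FF t i) (FF t j)) ∧ Finset.univ.biUnion (FF t) = T := by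
      intro t ht
      have ht' : t ≤ n := by omega
      have hdm : Disjoint ((uu t).image v) ((Finset.range (2*n) \ uu t).image v) := by
        rw [Finset.disjoint_image hvinj]
        exact Finset.disjoint_sdiff
      refine ⟨?_, ?_, ?_⟩
      · intro i
        rcases eq_or_ne i i₀ with rfl | hi0
        · rw [e0]; exact hallA _ (huucard t)
        · rcases eq_or_ne i i₁ with rfl | hi1
          · rw [e1]; exact hallA _ (hcompcard t ht')
          · rw [e2 t i hi0 hi1]; exact hempty
      · intro i j hij
        rcases eq_or_ne i i₀ with rfl | hi0
        · rcases eq_or_ne j i₁ with rfl | hj1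
          · rw [e0, e1]; exact hdm
          · rw [e2 t j (Ne.symm hij) hj1]
            exact Finset.disjoint_empty_right _
        · rcases eq_or_ne i i₁ with rfl | hi1
          · rcases eq_or_ne j i₀ with rfl | hj0
            · rw [e0, e1]; exact hdm.symm
            · rw [e2 t j hj0 (Ne.symm hij)]
              exact Finset.disjoint_empty_right _
          · rw [e2 t i hi0 hi1]
            exact Finset.disjoint_empty_left _
      · rw [hT]
        ext x
        simp only [Finset.mem_biUnion, Finset.mem_univ, true_and]
        constructor
        · rintro ⟨i, hi⟩
          rcases eq_or_ne i i₀ with rfl | hi0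
          · rw [e0] at hi
            obtain ⟨y, hy, rfl⟩ := Finset.mem_image.mp hi
            exact Finset.mem_image_of_mem v (huusub t ht' hy)
          · rcases eq_or_ne i i₁ with rfl | hi1
            · rw [e1] at hi
              obtain ⟨y, hy, rfl⟩ := Finset.mem_image.mp hi
              exact Finset.mem_image_of_mem v (Finset.mem_sdiff.mp hy).1
            · rw [e2 t i hi0 hi1] at hi
              exact absurd hi (Finset.notMem_empty x)
        · intro hx
          obtain ⟨y, hy, rfl⟩ := Finset.mem_image.mp hx
          by_cases hyu : y ∈ uu t
          · exact ⟨i₀, by rw [e0]; exact Finset.mem_image_of_mem v hyu⟩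
          · refine ⟨i₁, ?_⟩
            rw [e1]
            exact Finset.mem_image_of_mem v (Finset.mem_sdiff.mpr ⟨hy, hyu⟩)
    have hinj : ∀ t t', t < n+1 → t' < n+1 → FF t = FF t' → t = t' := by
      intro t t' _ _ hFFeq
      have h1 : (uu t).image v = (uu t').image v := by
        rw [← e0 t, ← e0 t', hFFeq]
      have h2 : uu t = uu t' := by
        apply Finset.image_injective hvinj h1
      have h3 : t ∈ uu t' := by
        rw [← h2, huu]
        simp only [Finset.mem_image, Finset.mem_range]
        exact ⟨0, by omega, by omega⟩
      have h4 : t' ∈ uu t := by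
        rw [h2, huu]
        simp only [Finset.mem_image, Finset.mem_range]
        exact ⟨0, by omega, by omega⟩
      simp only [huu, Finset.mem_image, Finset.mem_range] at h3 h4
      obtain ⟨j, _, hj⟩ := h3
      obtain ⟨j', _, hj'⟩ := h4
      omega
    exact ⟨T, hTX, le_trans (by omega) (countLem T (n+1) FF hprops hinj)⟩
  · -- non-constant pattern
    push_neg at hconst
    obtain ⟨k₁, hk₁⟩ := hconst
    obtain ⟨i₀, i₁, hi01, hmem0, hmem1, hple⟩ :
        ∃ i₀ i₁ : Fin h, i₀ ≠ i₁ ∧ (Kb i₀).Nonempty ∧ (Kb i₁).Nonempty ∧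
          (Kb i₀).card ≤ (Kb i₁).card := by
      rcases le_total (Kb (χ k₁)).card (Kb (χ ⟨0, hn1⟩)).card with hle | hle
      · exact ⟨χ k₁, χ ⟨0, hn1⟩, hk₁, ⟨k₁, hKbmem k₁⟩, ⟨⟨0, hn1⟩, hKbmem _⟩, hle⟩
      · exact ⟨χ ⟨0, hn1⟩, χ k₁, fun hc => hk₁ hc.symm, ⟨⟨0, hn1⟩, hKbmem _⟩,
          ⟨k₁, hKbmem k₁⟩, hle⟩
    set p := (Kb i₀).card with hp
    have hp1 : 1 ≤ p := Finset.card_pos.mpr hmem0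
    have h2p : 2 * p ≤ n := by
      have hdisj := hKbdis i₀ i₁ hi01
      have hcu : (Kb i₀ ∪ Kb i₁).card = p + (Kb i₁).card :=
        Finset.card_union_of_disjoint hdisj
      have hle2 : (Kb i₀ ∪ Kb i₁).card ≤ n := by
        have := Finset.card_le_univ (Kb i₀ ∪ Kb i₁)
        simpa using this
      omega
    set Kc : Finset (Fin n) := Finset.univ.filter (fun k => ¬ (χ k = i₀)) with hKc
    have hKccard : Kc.card = n - p := by
      have hdisj : Disjoint (Kb i₀) Kc := by
        rw [Finset.disjoint_left]
        intro k hk hk'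
        exact (Finset.mem_filter.mp hk').2 (Finset.mem_filter.mp hk).2
      have hun : Kb i₀ ∪ Kc = Finset.univ := by
        ext k
        simp only [Finset.mem_union, hKb, hKc, Finset.mem_filter, Finset.mem_univ,
          true_and, iff_true]
        exact em _
      have hcard := Finset.card_union_of_disjoint hdisj
      rw [hun, Finset.card_univ, Fintype.card_fin] at hcard
      omega
    have hKcmem : ∀ k : Fin n, χ k ≠ i₀ → k ∈ Kc := by
      intro k hk; simp [hKc, hk]
    set Mm : Finset ℕ := (Finset.range n).image (fun j => n * (j + 1)) with hMm
    have hMmcard : Mm.card = n := by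
      rw [hMm, Finset.card_image_of_injOn, Finset.card_range]
      intro a _ b _ hab
      have h1 : n * (a+1) = n * (b+1) := hab
      have := Nat.eq_of_mul_eq_mul_left (by omega : 0 < n) h1
      omega
    have hMmdvd : ∀ x ∈ Mm, n ∣ x ∧ n ≤ x := by
      intro x hx
      simp only [hMm, Finset.mem_image, Finset.mem_range] at hx
      obtain ⟨j, hj, rfl⟩ := hx
      exact ⟨⟨j + 1, rfl⟩, Nat.le_mul_of_pos_right n (by omega)⟩
    set T : Finset α := Mm.image v with hT
    have hTX : ↑T ⊆ X := by
      intro x hx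
      simp only [hT, Finset.coe_image, Set.mem_image, Finset.mem_coe] at hx
      obtain ⟨k, _, rfl⟩ := hx
      exact hYX (hvY k)
    set uu : ℕ → Finset ℕ := fun t => (Finset.range p).image (fun j => n * (t + j + 1))
      with huu
    have huusub : ∀ t, t ≤ n - p → uu t ⊆ Mm := by
      intro t ht x hx
      simp only [huu, Finset.mem_image, Finset.mem_range] at hx
      obtain ⟨j, hj, rfl⟩ := hx
      simp only [hMm, Finset.mem_image, Finset.mem_range]
      exact ⟨t + j, by omega, rfl⟩
    have huucard : ∀ t, (uu t).card = p := by
      intro t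
      rw [huu]
      rw [Finset.card_image_of_injOn, Finset.card_range]
      intro a _ b _ hab
      have h1 : n * (t + a + 1) = n * (t + b + 1) := hab
      have := Nat.eq_of_mul_eq_mul_left (by omega : 0 < n) h1
      omega
    have hσex : ∀ t, t ≤ n - p → ∃ σ : Fin n → ℕ, StrictMono σ ∧ (Kb i₀).image σ = uu t :=
      fun t ht => sigmaL n p (Kb i₀) hp.symm (uu t) (huucard t)
        (fun x hx => hMmdvd x (huusub t ht hx))
    have hτex : ∀ t, t ≤ n - p → ∃ τ : Fin n → ℕ, StrictMono τ ∧ Kc.image τ = Mm \ uu t := by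
      intro t ht
      apply sigmaL n (n - p) Kc hKccard (Mm \ uu t)
      · rw [Finset.card_sdiff_of_subset (huusub t ht), hMmcard, huucard]
      · intro x hx
        exact hMmdvd x (Finset.mem_sdiff.mp hx).1
    set σc : ℕ → (Fin n → ℕ) := fun t =>
      if ht : t ≤ n - p then (hσex t ht).choose else id ∘ Fin.val with hσc
    have σspec : ∀ t, t ≤ n - p → StrictMono (σc t) ∧ (Kb i₀).image (σc t) = uu t := by
      intro t ht
      simp only [hσc, dif_pos ht]
      exact (hσex t ht).choose_spec
    set τc : ℕ → (Fin n → ℕ) := fun t =>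
      if ht : t ≤ n - p then (hτex t ht).choose else id ∘ Fin.val with hτc
    have τspec : ∀ t, t ≤ n - p → StrictMono (τc t) ∧ Kc.image (τc t) = Mm \ uu t := by
      intro t ht
      simp only [hτc, dif_pos ht]
      exact (hτex t ht).choose_spec
    set FF : ℕ → (Fin h → Finset α) := fun t i =>
      if i = i₀ then (uu t).image v else (Kb i).image (fun k => v (τc t k)) with hFF
    have e0 : ∀ t, FF t i₀ = (uu t).image v := by intro t; simp [hFF]
    have e1 : ∀ t i, i ≠ i₀ → FF t i = (Kb i).image (fun k => v (τc t k)) := by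
      intro t i hi; simp [hFF, hi]
    have himgτ : ∀ t, t ≤ n - p → Kc.image (fun k => v (τc t k)) = (Mm \ uu t).image v := by
      intro t ht
      rw [show (fun k => v (τc t k)) = v ∘ (τc t) from rfl, ← Finset.image_image,
        (τspec t ht).2]
    have hprops : ∀ t, t < n - p + 1 → (∀ i, FF t i ∈ 𝒜) ∧
        (∀ i j, i ≠ j → Disjoint (FF t i) (FF t j)) ∧ Finset.univ.biUnion (FF t) = T := by
      intro t htl
      have ht : t ≤ n - p := by omega
      have hdm : Disjoint ((uu t).image v) ((Mm \ uu t).image v) := by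
        rw [Finset.disjoint_image hvinj]
        exact Finset.disjoint_sdiff
      refine ⟨?_, ?_, ?_⟩
      · intro i
        by_cases heqi : i = i₀
        · rw [heqi, e0]
          have hm := master (σc t) (σspec t ht).1 i₀
          rwa [show (fun k => v (σc t k)) = v ∘ (σc t) from rfl, ← Finset.image_image,
            (σspec t ht).2] at hm
        · rw [e1 t i heqi]
          exact master (τc t) (τspec t ht).1 i
      · intro i j hij
        have haux : ∀ j', j' ≠ i₀ → Disjoint ((uu t).image v) (FF t j') := by
          intro j' hj0
          rw [e1 t j' hj0]
          apply Disjoint.mono_right ?_ hdm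
          rw [← himgτ t ht]
          apply Finset.image_subset_image
          intro k hk
          have : χ k = j' := (Finset.mem_filter.mp hk).2
          exact hKcmem k (by rw [this]; exact hj0)
        by_cases heqi : i = i₀
        · have hj0 : j ≠ i₀ := by rw [← heqi]; exact Ne.symm hij
          rw [heqi, e0]
          exact haux j hj0
        · by_cases heqj : j = i₀
          · rw [heqj, e0]
            exact (haux i heqi).symm
          · rw [e1 t i heqi, e1 t j heqj]
            apply (Finset.disjoint_image (hvinj.comp (τspec t ht).1.injective)).mpr
            exact hKbdis i j hij
      · rw [hT]
        ext x
        simp only [Finset.mem_biUnion, Finset.mem_univ, true_and]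
        constructor
        · rintro ⟨i, hi⟩
          by_cases heqi : i = i₀
          · rw [heqi, e0] at hi
            obtain ⟨y, hy, rfl⟩ := Finset.mem_image.mp hi
            exact Finset.mem_image_of_mem v (huusub t ht hy)
          · rw [e1 t i heqi] at hi
            obtain ⟨k, hk, rfl⟩ := Finset.mem_image.mp hi
            have hkc : k ∈ Kc := by
              have : χ k = i := (Finset.mem_filter.mp hk).2
              exact hKcmem k (by rw [this]; exact heqi)
            have : τc t k ∈ Kc.image (τc t) := Finset.mem_image_of_mem _ hkc
            rw [(τspec t ht).2] at this
            exact Finset.mem_image_of_mem v (Finset.mem_sdiff.mp this).1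
        · intro hx
          obtain ⟨y, hy, rfl⟩ := Finset.mem_image.mp hx
          by_cases hyu : y ∈ uu t
          · refine ⟨i₀, ?_⟩
            rw [e0]
            exact Finset.mem_image_of_mem v hyu
          · have hyd : y ∈ Kc.image (τc t) := by
              rw [(τspec t ht).2]
              exact Finset.mem_sdiff.mpr ⟨hy, hyu⟩
            obtain ⟨k, hk, rfl⟩ := Finset.mem_image.mp hyd
            have hχ : χ k ≠ i₀ := (Finset.mem_filter.mp hk).2
            refine ⟨χ k, ?_⟩
            rw [e1 t (χ k) hχ]
            exact Finset.mem_image_of_mem _ (hKbmem k)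
    have hinj : ∀ t t', t < n - p + 1 → t' < n - p + 1 → FF t = FF t' → t = t' := by
      intro t t' _ _ hFFeq
      have h1 : (uu t).image v = (uu t').image v := by
        rw [← e0 t, ← e0 t', hFFeq]
      have h2 : uu t = uu t' := Finset.image_injective hvinj h1
      have h3 : n * (t + 0 + 1) ∈ uu t' := by
        rw [← h2, huu]
        simp only [Finset.mem_image, Finset.mem_range]
        exact ⟨0, by omega, rfl⟩
      have h4 : n * (t' + 0 + 1) ∈ uu t := by
        rw [h2, huu]
        simp only [Finset.mem_image, Finset.mem_range]
        exact ⟨0, by omega, rfl⟩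
      simp only [huu, Finset.mem_image, Finset.mem_range] at h3 h4
      obtain ⟨j, _, hj⟩ := h3
      obtain ⟨j', _, hj'⟩ := h4
      have e3 := Nat.eq_of_mul_eq_mul_left (by omega : 0 < n) hj
      have e4 := Nat.eq_of_mul_eq_mul_left (by omega : 0 < n) hj'
      omega
    exact ⟨T, hTX, le_trans (by omega) (countLem T (n - p + 1) FF hprops hinj)⟩
end

section
/- Let h ≥ 2, let X be a countably infinite set, and let (𝒜_1, ..., 𝒜_h) be an h-tuple of sets of finite subsets of X. For a finite subset S of X, let g(S) be the number of ordered h-tuples (A_1,...,A_h) ∈ 𝒜_1 × ... × 𝒜_h of pairwise disjoint sets with union S. Suppose there is an infinite set W of positive integers such that for every n ∈ W, all but finitely many n-element subsets S of X satisfy g(S) ≥ 2. Then for every integer n there exists a finite subset S of X with g(S) ≥ n. -/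
open Finset


theorem my_infinite_ramsey (n : ℕ) : ∀ {C : Type} [Finite C] (f : Finset ℕ → C)
    (T : Set ℕ), T.Infinite →
    ∃ T' : Set ℕ, T' ⊆ T ∧ T'.Infinite ∧ ∃ c : C,
      ∀ K : Finset ℕ, ↑K ⊆ T' → K.card = n → f K = c := by
  induction n with
  | zero =>
    intro C _ f T hT
    refine ⟨T, le_refl _, hT, f ∅, fun K _ hK => ?_⟩
    rw [Finset.card_eq_zero.mp hK]
  | succ n ih =>
    intro C _ f T hT
    have key : ∀ A : Set ℕ, A.Infinite → ∃ a, a ∈ A ∧ ∃ B : Set ℕ, B ⊆ A ∧ B.Infinite ∧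
        (∀ x ∈ B, a < x) ∧ ∃ c : C, ∀ K : Finset ℕ, ↑K ⊆ B → K.card = n →
          f (insert a K) = c := by
      intro A hA
      obtain ⟨a, ha⟩ := hA.nonempty
      have hA' : {x ∈ A | a < x}.Infinite := by
        have : A \ {x | x ≤ a} ⊆ {x ∈ A | a < x} := by
          intro x hx; exact ⟨hx.1, lt_of_not_ge hx.2⟩
        exact ((hA.diff (Set.finite_le_nat a)).mono this)
      obtain ⟨B, hB1, hB2, c, hc⟩ := ih (fun K => f (insert a K)) _ hA'
      exact ⟨a, ha, B, fun x hx => (hB1 hx).1, hB2, fun x hx => (hB1 hx).2, c, hc⟩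
    choose aa haamem BB hBsub hBinf hBgt cc hcc using key
    -- build the nested sequence
    let seq : ℕ → {A : Set ℕ // A.Infinite} := fun k =>
      Nat.rec ⟨T, hT⟩ (fun _ p => ⟨BB p.1 p.2, hBinf p.1 p.2⟩) k
    have hseq_succ : ∀ k, (seq (k+1)).1 = BB (seq k).1 (seq k).2 := fun k => rfl
    have hsub : ∀ k, (seq (k+1)).1 ⊆ (seq k).1 := fun k => hBsub _ _
    have hsubT : ∀ k, (seq k).1 ⊆ T := by
      intro k; induction k with
      | zero => exact le_refl _
      | succ k ihk => exact (hsub k).trans ihk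
    have hmono : ∀ k l, k ≤ l → (seq l).1 ⊆ (seq k).1 := by
      intro k l hkl
      induction l with
      | zero => cases Nat.le_zero.mp hkl; exact le_refl _
      | succ l ihl =>
        rcases Nat.le_succ_iff.mp hkl with h | h
        · exact (hsub l).trans (ihl h)
        · cases h; exact le_refl _
    set av : ℕ → ℕ := fun k => aa (seq k).1 (seq k).2 with hav
    have havmem : ∀ k, av k ∈ (seq k).1 := fun k => haamem _ _
    have havgt : ∀ k x, x ∈ (seq (k+1)).1 → av k < x := fun k x hx => hBgt _ _ _ hx
    have havs : StrictMono av := by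
      apply strictMono_nat_of_lt_succ
      intro k
      exact havgt k _ (havmem (k+1))
    set col : ℕ → C := fun k => cc (seq k).1 (seq k).2 with hcol
    obtain ⟨c₀, hc₀⟩ := Finite.exists_infinite_fiber col
    have hfib : {k | col k = c₀}.Infinite := by
      rw [← Set.infinite_coe_iff]; exact hc₀
    refine ⟨av '' {k | col k = c₀}, ?_, ?_, c₀, ?_⟩
    · rintro x ⟨k, _, rfl⟩; exact hsubT k (havmem k)
    · exact hfib.image (havs.injective.injOn)
    · intro K hK hKcard
      have hne : K.Nonempty := Finset.card_pos.mp (by omega)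
      set x₀ := K.min' hne with hx₀
      obtain ⟨k, hk, hkx⟩ := hK (K.min'_mem hne)
      have hK' : (K.erase x₀).card = n := by
        rw [Finset.card_erase_of_mem (K.min'_mem hne), hKcard]; omega
      have hsub' : ↑(K.erase x₀) ⊆ (seq (k+1)).1 := by
        intro y hy
        have hyK := Finset.mem_of_mem_erase hy
        obtain ⟨l, hl, hly⟩ := hK hyK
        have hyx : x₀ < y := by
          rcases lt_or_eq_of_le (K.min'_le y hyK) with h | h
          · exact h
          · exact absurd h.symm (Finset.ne_of_mem_erase hy)
        have hkl : k < l := by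
          have : av k < av l := by rw [hkx, hly]; exact hyx
          exact havs.lt_iff_lt.mp this
        rw [← hly]
        exact hmono (k+1) l hkl (havmem l)
      have := hcc (seq k).1 (seq k).2 (K.erase x₀) hsub' hK'
      have hkx' : aa (seq k).1 (seq k).2 = K.min' hne := hkx
      rw [hkx'] at this
      have hins : insert (K.min' hne) (K.erase x₀) = K :=
        Finset.insert_erase (K.min'_mem hne)
      rw [hins] at this
      exact this.trans hk


open Finset

-- rank helper lemmas
section
variable {n : ℕ} (J : Finset (Fin n))

-- the number of elements of J that are ≤ j
private def rk (j : Fin n) : ℕ := #(J.filter (· ≤ j))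

lemma rk_le_card (j : Fin n) : rk J j ≤ J.card := card_le_card (filter_subset _ _)

lemma rk_mono : Monotone (rk J) := by
  intro j₁ j₂ h
  apply card_le_card
  intro x hx
  rw [mem_filter] at hx ⊢
  exact ⟨hx.1, hx.2.trans h⟩

lemma rk_eq (i : Fin J.card) : rk J (J.orderEmbOfFin rfl i) = i + 1 := by
  have hsurj : ∀ x ∈ J, ∃ i' : Fin J.card, J.orderEmbOfFin rfl i' = x := by
    intro x hx
    have : x ∈ Set.range (J.orderEmbOfFin rfl) := by
      rw [range_orderEmbOfFin]; exact hx
    exact this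
  have : J.filter (· ≤ J.orderEmbOfFin rfl i) =
      (univ.filter (· ≤ i)).image (J.orderEmbOfFin rfl) := by
    ext x
    simp only [mem_filter, mem_image, mem_univ, true_and]
    constructor
    · rintro ⟨hx, hle⟩
      obtain ⟨i', rfl⟩ := hsurj x hx
      exact ⟨i', (OrderEmbedding.le_iff_le _).mp hle, rfl⟩
    · rintro ⟨i', hi', rfl⟩
      exact ⟨orderEmbOfFin_mem _ _ _, (OrderEmbedding.le_iff_le _).mpr hi'⟩
  rw [rk, this, card_image_of_injective _ (J.orderEmbOfFin rfl).injective]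
  have : univ.filter (· ≤ i) = Finset.Iic i := by ext x; simp
  rw [this, Fin.card_Iic]

lemma rk_pos_le {j : Fin n} (hpos : 0 < rk J j)
    (hlt : rk J j - 1 < J.card) : J.orderEmbOfFin rfl ⟨rk J j - 1, hlt⟩ ≤ j := by
  by_contra hgt
  push_neg at hgt
  have hsub : J.filter (· ≤ j) ⊆
      (univ.filter (· < (⟨rk J j - 1, hlt⟩ : Fin J.card))).image (J.orderEmbOfFin rfl) := by
    intro x hx
    rw [mem_filter] at hx
    have : x ∈ Set.range (J.orderEmbOfFin rfl) := by
      rw [range_orderEmbOfFin]; exact hx.1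
    obtain ⟨i', rfl⟩ := this
    simp only [mem_image, mem_univ, true_and, mem_filter]
    refine ⟨i', ?_, rfl⟩
    have := lt_of_le_of_lt hx.2 hgt
    exact (OrderEmbedding.lt_iff_lt _).mp this
  have := card_le_card hsub
  rw [card_image_of_injective _ (J.orderEmbOfFin rfl).injective] at this
  have hcard : #(univ.filter (· < (⟨rk J j - 1, hlt⟩ : Fin J.card))) = rk J j - 1 := by
    have : univ.filter (· < (⟨rk J j - 1, hlt⟩ : Fin J.card)) =
        Finset.Iio (⟨rk J j - 1, hlt⟩ : Fin J.card) := by ext x; simp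
    rw [this, Fin.card_Iio]
  rw [hcard] at this
  rw [rk] at hpos this
  omega

lemma rk_mem {j : Fin n} (hj : j ∈ J)
    (hlt : rk J j - 1 < J.card) : J.orderEmbOfFin rfl ⟨rk J j - 1, hlt⟩ = j := by
  have : j ∈ Set.range (J.orderEmbOfFin rfl) := by rw [range_orderEmbOfFin]; exact hj
  obtain ⟨i, hi⟩ := this
  have := rk_eq J i
  rw [hi] at this
  have : (⟨rk J j - 1, hlt⟩ : Fin J.card) = i := by
    apply Fin.ext; simp [this]
  rw [this, hi]
end

lemma interleave {n : ℕ} (J : Finset (Fin n)) (A : Finset ℕ) (hA : A.card = J.card)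
    (hdiv : ∀ x ∈ A, (n+1) ∣ x ∧ 0 < x) :
    ∃ (B : Finset ℕ) (hB : B.card = n),
      (∀ j : Fin n, B.orderEmbOfFin hB j ∈ A ↔ j ∈ J) ∧
      J.image (B.orderEmbOfFin hB) = A := by
  classical
  have hApos : ∀ x ∈ A, n + 1 ≤ x := fun x hx =>
    Nat.le_of_dvd (hdiv x hx).2 (hdiv x hx).1
  set eJ : Fin J.card ↪o Fin n := J.orderEmbOfFin rfl with heJ
  set eA : Fin J.card ↪o ℕ := A.orderEmbOfFin hA with heA
  have hgap : ∀ i₁ i₂ : Fin J.card, i₁ < i₂ → eA i₁ + (n+1) ≤ eA i₂ := by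
    intro i₁ i₂ h
    have h1 : eA i₁ < eA i₂ := eA.strictMono h
    have d1 := (hdiv _ (orderEmbOfFin_mem A hA i₁)).1
    have d2 := (hdiv _ (orderEmbOfFin_mem A hA i₂)).1
    have : (n+1) ∣ (eA i₂ - eA i₁) := Nat.dvd_sub d2 d1
    have := Nat.le_of_dvd (by omega) this
    omega
  have hrklt : ∀ j : Fin n, 0 < rk J j → rk J j - 1 < J.card := fun j hpos =>
    lt_of_lt_of_le (Nat.sub_lt hpos Nat.one_pos) (rk_le_card J j)
  set ρ : Fin n → ℕ := fun j =>
    if h : 0 < rk J j then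
      eA ⟨rk J j - 1, hrklt j h⟩ + ((j:ℕ) - (eJ ⟨rk J j - 1, hrklt j h⟩ : Fin n))
    else (j : ℕ) with hρ
  -- basic value facts
  have hrkpos : ∀ j ∈ J, 0 < rk J j := by
    intro j hj
    rw [rk, card_pos]; exact ⟨j, mem_filter.mpr ⟨hj, le_refl j⟩⟩
  have hval_mem : ∀ (j : Fin n) (hj : j ∈ J),
      ρ j = eA ⟨rk J j - 1, hrklt j (hrkpos j hj)⟩ := by
    intro j hj
    have hpos : 0 < rk J j := hrkpos j hj
    rw [hρ]
    simp only [dif_pos hpos]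
    have := rk_mem J hj (hrklt j hpos)
    rw [heJ] at *
    rw [this]
    omega
  have hmono : StrictMono ρ := by
    intro j₁ j₂ hlt
    have hrle : rk J j₁ ≤ rk J j₂ := rk_mono J (le_of_lt hlt)
    rcases Nat.eq_zero_or_pos (rk J j₁) with h1 | h1
    · rcases Nat.eq_zero_or_pos (rk J j₂) with h2 | h2
      · rw [hρ]; simp only [dif_neg (by omega : ¬ 0 < rk J j₁),
          dif_neg (by omega : ¬ 0 < rk J j₂)]
        exact_mod_cast hlt
      · rw [hρ]; simp only [dif_neg (by omega : ¬ 0 < rk J j₁), dif_pos h2]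
        have := hApos _ (orderEmbOfFin_mem A hA ⟨rk J j₂ - 1, hrklt j₂ h2⟩)
        have hj1 : (j₁ : ℕ) < n := j₁.isLt
        rw [← heA] at this
        omega
    · have h2 : 0 < rk J j₂ := lt_of_lt_of_le h1 hrle
      rw [hρ]; simp only [dif_pos h1, dif_pos h2]
      rcases eq_or_lt_of_le hrle with heq | hlt2
      · have hidx : (⟨rk J j₁ - 1, hrklt j₁ h1⟩ : Fin J.card) = ⟨rk J j₂ - 1, hrklt j₂ h2⟩ := by
          apply Fin.ext; simp [heq]
        rw [hidx]
        have hle1 : (eJ ⟨rk J j₂ - 1, hrklt j₂ h2⟩ : Fin n) ≤ j₁ := by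
          rw [← hidx]
          have := rk_pos_le J h1 (hrklt j₁ h1)
          rw [heJ]; exact this
        have : ((eJ ⟨rk J j₂ - 1, hrklt j₂ h2⟩ : Fin n) : ℕ) ≤ (j₁ : ℕ) := hle1
        have : ((j₁:ℕ) : ℕ) < (j₂ : ℕ) := hlt
        omega
      · have hidxlt : (⟨rk J j₁ - 1, hrklt j₁ h1⟩ : Fin J.card) < ⟨rk J j₂ - 1, hrklt j₂ h2⟩ := by
          simp only [Fin.mk_lt_mk]; omega
        have hg := hgap _ _ hidxlt
        have hj1 : (j₁ : ℕ) < n := j₁.isLt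
        omega
  have hmemiff : ∀ j : Fin n, ρ j ∈ A ↔ j ∈ J := by
    intro j
    constructor
    · intro hmem
      by_contra hj
      rcases Nat.eq_zero_or_pos (rk J j) with h1 | h1
      · rw [hρ] at hmem; simp only [dif_neg (by omega : ¬ 0 < rk J j)] at hmem
        have := hApos _ hmem
        have : (j : ℕ) < n := j.isLt
        omega
      · rw [hρ] at hmem; simp only [dif_pos h1] at hmem
        set i : Fin J.card := ⟨rk J j - 1, hrklt j h1⟩
        have hle : (eJ i : Fin n) ≤ j := by
          have := rk_pos_le J h1 (hrklt j h1); rw [heJ]; exact this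
        have hne : (eJ i : Fin n) ≠ j := by
          intro heq
          exact hj (heq ▸ orderEmbOfFin_mem J rfl i)
        have hlt' : ((eJ i : Fin n) : ℕ) < (j : ℕ) := by
          have : (eJ i : Fin n) < j := lt_of_le_of_ne hle hne
          exact this
        have hd : 0 < (j:ℕ) - ((eJ i : Fin n):ℕ) := by omega
        have hd2 : (j:ℕ) - ((eJ i : Fin n):ℕ) < n + 1 := by
          have : (j : ℕ) < n := j.isLt; omega
        have hdvd1 := (hdiv _ hmem).1
        have hdvd2 := (hdiv _ (orderEmbOfFin_mem A hA i)).1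
        rw [← heA] at hdvd2
        have : (n+1) ∣ ((j:ℕ) - ((eJ i : Fin n):ℕ)) := by
          have heqv : (j:ℕ) - ((eJ i : Fin n):ℕ) = (eA i + ((j:ℕ) - ((eJ i : Fin n):ℕ))) - eA i := by omega
          rw [heqv]
          exact Nat.dvd_sub hdvd1 hdvd2
        have := Nat.le_of_dvd hd this
        omega
    · intro hj
      rw [hval_mem j hj]
      exact orderEmbOfFin_mem A hA _
  have hB : (univ.image ρ).card = n := by
    rw [card_image_of_injective _ hmono.injective, card_univ, Fintype.card_fin]
  refine ⟨univ.image ρ, hB, ?_⟩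
  have hemb : ρ = (univ.image ρ).orderEmbOfFin hB :=
    orderEmbOfFin_unique hB (fun j => mem_image_of_mem _ (mem_univ _)) hmono
  refine ⟨fun j => ?_, ?_⟩
  · rw [← hemb]; exact hmemiff j
  · apply eq_of_subset_of_card_le
    · intro x hx
      rw [mem_image] at hx
      obtain ⟨j, hj, rfl⟩ := hx
      rw [← hemb]
      exact (hmemiff j).mpr hj
    · rw [card_image_of_injective _ ((univ.image ρ).orderEmbOfFin hB).injective, hA]



lemma my_le_choose : ∀ (m a : ℕ), 0 < a → a < m → m ≤ m.choose a := by
  intro m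
  induction m with
  | zero => intro a h1 h2; omega
  | succ m ih =>
    intro a h1 h2
    rcases eq_or_lt_of_le (Nat.lt_succ_iff.mp h2) with heq | hlt
    · subst heq
      have h3 : (a+1) - 1 = a := by omega
      have := Nat.choose_symm (by omega : 1 ≤ a + 1)
      rw [h3] at this
      rw [this, Nat.choose_one_right]
    · obtain ⟨b, rfl⟩ := Nat.exists_eq_add_of_lt h1
      simp only [Nat.zero_add] at *
      have h6 : (m+1).choose (b+1) = m.choose b + m.choose (b+1) := by
        simpa using Nat.choose_succ_succ m b
      have h4 : m ≤ m.choose (b+1) := ih (b+1) (by omega) hlt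
      have h5 : 0 < m.choose b := Nat.choose_pos (by omega)
      omega

lemma my_exists_partition {α : Type*} [DecidableEq α] :
    ∀ (q : ℕ) (R : Finset α) (k : Fin q → ℕ), (∑ i, k i) = R.card →
    ∃ f : Fin q → Finset α, (∀ i, (f i).card = k i) ∧
      (∀ i j, i ≠ j → Disjoint (f i) (f j)) ∧ Finset.univ.biUnion f = R := by
  intro q
  induction q with
  | zero =>
    intro R k hsum
    refine ⟨fun i => i.elim0, fun i => i.elim0, fun i => i.elim0, ?_⟩
    simp at hsum ⊢
    exact (Finset.card_eq_zero.mp hsum.symm).symm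
  | succ q ih =>
    intro R k hsum
    rw [Fin.sum_univ_succ] at hsum
    have hk0 : k 0 ≤ R.card := by omega
    obtain ⟨P, hPsub, hPcard⟩ := Finset.exists_subset_card_eq hk0
    have hcard' : (∑ i, k (Fin.succ i)) = (R \ P).card := by
      rw [card_sdiff_of_subset hPsub, hPcard]; omega
    obtain ⟨f', hf'card, hf'disj, hf'union⟩ := ih (R \ P) (fun i => k (Fin.succ i)) hcard'
    have hf'subset : ∀ i, f' i ⊆ R \ P := by
      intro i
      rw [← hf'union]
      exact Finset.subset_biUnion_of_mem f' (mem_univ i)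
    refine ⟨Fin.cons P f', ?_, ?_, ?_⟩
    · intro i
      refine Fin.cases ?_ ?_ i
      · simpa using hPcard
      · intro j; simpa using hf'card j
    · intro i j hij
      have hPd : ∀ i' : Fin q, Disjoint P (f' i') :=
        fun i' => Finset.disjoint_left.mpr fun x hx hx' =>
          (Finset.mem_sdiff.mp (hf'subset i' hx')).2 hx
      rcases Fin.eq_zero_or_eq_succ i with rfl | ⟨i', rfl⟩ <;>
        rcases Fin.eq_zero_or_eq_succ j with rfl | ⟨j', rfl⟩
      · exact absurd rfl hij
      · simp only [Fin.cons_zero, Fin.cons_succ]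
        exact hPd j'
      · simp only [Fin.cons_zero, Fin.cons_succ]
        exact (hPd i').symm
      · simp only [Fin.cons_succ]
        exact hf'disj i' j' (fun hcon => hij (by rw [hcon]))
    · ext x
      simp only [Finset.mem_biUnion, mem_univ, true_and]
      constructor
      · rintro ⟨i, hi⟩
        rcases Fin.eq_zero_or_eq_succ i with rfl | ⟨i', rfl⟩
        · exact hPsub (by simpa using hi)
        · exact (Finset.mem_sdiff.mp (hf'subset i' (by simpa using hi))).1
      · intro hx
        by_cases hxP : x ∈ P
        · exact ⟨0, by simpa using hxP⟩
        · have : x ∈ R \ P := Finset.mem_sdiff.mpr ⟨hx, hxP⟩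
          rw [← hf'union] at this
          obtain ⟨i, _, hi⟩ := Finset.mem_biUnion.mp this
          exact ⟨Fin.succ i, by simpa using hi⟩

lemma my_counting {α : Type*} [DecidableEq α] {h : ℕ} (𝒜 : Fin h → Set (Finset α))
    (S : Finset α) (k : Fin h → ℕ) (hsum : ∑ i, k i = S.card) (istar : Fin h)
    (hi1 : 0 < k istar) (hi2 : k istar < S.card)
    (hmem : ∀ i, ∀ P ⊆ S, P.card = k i → P ∈ 𝒜 i) :
    S.card ≤ {f : Fin h → Finset α | (∀ i, f i ∈ 𝒜 i) ∧
        (∀ i j, i ≠ j → Disjoint (f i) (f j)) ∧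
        Finset.univ.biUnion f = S}.ncard := by
  classical
  set TS := {f : Fin h → Finset α | (∀ i, f i ∈ 𝒜 i) ∧
      (∀ i j, i ≠ j → Disjoint (f i) (f j)) ∧
      Finset.univ.biUnion f = S} with hTS
  -- TS is finite
  have hTSfin : TS.Finite := by
    have : TS ⊆ Set.pi Set.univ (fun _ : Fin h => (↑S.powerset : Set (Finset α))) := by
      rintro f ⟨-, -, hunion⟩ i -
      simp only [coe_powerset, Set.mem_preimage, Set.mem_powerset_iff, coe_subset]
      rw [← hunion]
      exact Finset.subset_biUnion_of_mem f (mem_univ i)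
    exact Set.Finite.subset (Set.Finite.pi (fun _ => (S.powerset : Finset (Finset α)).finite_toSet)) this
  -- the injection from subsets of size `k istar`
  have hstep : ∀ P : Finset α, P ⊆ S → P.card = k istar →
      ∃ f ∈ TS, f istar = P := by
    intro P hPsub hPcard
    set k' : Fin h → ℕ := Function.update k istar 0 with hk'
    have hsum' : ∑ i, k' i = (S \ P).card := by
      rw [card_sdiff_of_subset hPsub, hPcard, hk']
      rw [Finset.sum_update_of_mem (mem_univ istar), Finset.sdiff_singleton_eq_erase]
      rw [← Finset.sum_erase_add univ k (mem_univ istar)] at hsum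
      omega
    obtain ⟨f', hf'card, hf'disj, hf'union⟩ := my_exists_partition h (S \ P) k' hsum'
    have hf'subset : ∀ i, f' i ⊆ S \ P := by
      intro i
      rw [← hf'union]
      exact Finset.subset_biUnion_of_mem f' (mem_univ i)
    set f := Function.update f' istar P with hf
    have hfistar : f istar = P := by rw [hf]; simp
    have hfother : ∀ i, i ≠ istar → f i = f' i := by
      intro i hi; rw [hf]; simp [Function.update_of_ne hi]
    refine ⟨f, ⟨?_, ?_, ?_⟩, hfistar⟩
    · intro i
      by_cases hi : i = istar
      · subst hi; rw [hfistar]; exact hmem _ P hPsub hPcard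
      · rw [hfother i hi]
        refine hmem i (f' i) ((hf'subset i).trans (sdiff_subset)) ?_
        rw [hf'card i, hk', Function.update_of_ne hi]
    · intro i j hij
      have hPd : ∀ i', i' ≠ istar → Disjoint P (f' i') :=
        fun i' _ => Finset.disjoint_left.mpr fun x hx hx' =>
          (Finset.mem_sdiff.mp (hf'subset i' hx')).2 hx
      by_cases hi : i = istar
      · subst hi
        rw [hfistar, hfother j (Ne.symm hij)]
        exact hPd j (Ne.symm hij)
      · by_cases hj : j = istar
        · subst hj
          rw [hfistar, hfother i hi]
          exact (hPd i hi).symm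
        · rw [hfother i hi, hfother j hj]
          exact hf'disj i j hij
    · ext x
      simp only [Finset.mem_biUnion, mem_univ, true_and]
      constructor
      · rintro ⟨i, hi⟩
        by_cases hii : i = istar
        · subst hii; rw [hfistar] at hi; exact hPsub hi
        · rw [hfother i hii] at hi
          exact (Finset.mem_sdiff.mp (hf'subset i hi)).1
      · intro hx
        by_cases hxP : x ∈ P
        · exact ⟨istar, by rw [hfistar]; exact hxP⟩
        · have : x ∈ S \ P := Finset.mem_sdiff.mpr ⟨hx, hxP⟩
          rw [← hf'union] at this
          obtain ⟨i, -, hi⟩ := Finset.mem_biUnion.mp this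
          have hii : i ≠ istar := by
            intro hcon; subst hcon
            have := hf'card i
            rw [hk', Function.update_self] at this
            rw [Finset.card_eq_zero.mp this] at hi
            exact absurd hi (Finset.notMem_empty x)
          exact ⟨i, by rw [hfother i hii]; exact hi⟩
  -- now count
  choose F hFmem hFval using hstep
  set PS : Set (Finset α) := ↑(S.powersetCard (k istar)) with hPS
  set Φ : Finset α → (Fin h → Finset α) := fun P =>
    if hP : P ⊆ S ∧ P.card = k istar then F P hP.1 hP.2 else (fun _ => ∅) with hΦ
  have hinj : Set.InjOn Φ PS := by
    intro P₁ h₁ P₂ h₂ heq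
    rw [hPS, mem_coe, Finset.mem_powersetCard] at h₁ h₂
    rw [hΦ] at heq
    simp only [dif_pos h₁, dif_pos h₂] at heq
    have e₁ := hFval P₁ h₁.1 h₁.2
    have e₂ := hFval P₂ h₂.1 h₂.2
    rw [← e₁, ← e₂, heq]
  have himg : Φ '' PS ⊆ TS := by
    rintro f ⟨P, hP, rfl⟩
    rw [hPS, mem_coe, Finset.mem_powersetCard] at hP
    rw [hΦ]
    simp only [dif_pos hP]
    exact hFmem P hP.1 hP.2
  have h1 : PS.ncard = (S.card).choose (k istar) := by
    rw [hPS, Set.ncard_coe_finset, Finset.card_powersetCard]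
  have h2 : PS.ncard = (Φ '' PS).ncard := (Set.ncard_image_of_injOn hinj).symm
  have h3 := Set.ncard_le_ncard himg hTSfin
  have h4 := my_le_choose S.card (k istar) hi1 hi2
  omega

lemma my_tupleset_finite {α : Type*} [DecidableEq α] {h : ℕ} (𝒜 : Fin h → Set (Finset α))
    (S : Finset α) : {f : Fin h → Finset α | (∀ i, f i ∈ 𝒜 i) ∧
      (∀ i j, i ≠ j → Disjoint (f i) (f j)) ∧
      Finset.univ.biUnion f = S}.Finite := by
  have hsub : {f : Fin h → Finset α | (∀ i, f i ∈ 𝒜 i) ∧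
      (∀ i j, i ≠ j → Disjoint (f i) (f j)) ∧ Finset.univ.biUnion f = S} ⊆
      Set.pi Set.univ (fun _ : Fin h => (↑S.powerset : Set (Finset α))) := by
    rintro f ⟨-, -, hunion⟩ i -
    simp only [coe_powerset, Set.mem_preimage, Set.mem_powerset_iff, coe_subset]
    rw [← hunion]
    exact Finset.subset_biUnion_of_mem f (mem_univ i)
  exact Set.Finite.subset (Set.Finite.pi (fun _ => (S.powerset).finite_toSet)) hsub



def myPart {α : Type*} [DecidableEq α] {h n : ℕ} (E : ℕ ↪ α) (K : Finset ℕ)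
    (hK : K.card = n) (c : Fin n → Fin h) (i : Fin h) : Finset α :=
  ((Finset.univ.filter (fun j => c j = i)).image (fun j => K.orderEmbOfFin hK j)).map E

lemma mem_myPart {α : Type*} [DecidableEq α] {h n : ℕ} (E : ℕ ↪ α) (K : Finset ℕ)
    (hK : K.card = n) (c : Fin n → Fin h) (i : Fin h) (x : α) :
    x ∈ myPart E K hK c i ↔ ∃ j : Fin n, c j = i ∧ x = E (K.orderEmbOfFin hK j) := by
  simp only [myPart, mem_map, mem_image, mem_filter, mem_univ, true_and]
  constructor
  · rintro ⟨y, ⟨j, hj, rfl⟩, rfl⟩; exact ⟨j, hj, rfl⟩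
  · rintro ⟨j, hj, rfl⟩; exact ⟨_, ⟨j, hj, rfl⟩, rfl⟩

lemma my_pattern {α : Type*} [DecidableEq α] {h n : ℕ} (E : ℕ ↪ α) (K : Finset ℕ)
    (hK : K.card = n) (f : Fin h → Finset α)
    (hdisj : ∀ i j, i ≠ j → Disjoint (f i) (f j))
    (hunion : Finset.univ.biUnion f = K.map E) :
    ∃ c : Fin n → Fin h, ∀ i, f i = myPart E K hK c i := by
  classical
  have hx : ∀ j : Fin n, ∃ i, E (K.orderEmbOfFin hK j) ∈ f i := by
    intro j
    have hmem : E (K.orderEmbOfFin hK j) ∈ K.map E :=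
      mem_map_of_mem E (orderEmbOfFin_mem K hK j)
    rw [← hunion] at hmem
    obtain ⟨i, -, hi⟩ := mem_biUnion.mp hmem
    exact ⟨i, hi⟩
  choose c hc using hx
  have huniq : ∀ (x : α) (i i' : Fin h), x ∈ f i → x ∈ f i' → i = i' := by
    intro x i i' h1 h2
    by_contra hne
    exact (Finset.disjoint_left.mp (hdisj i i' hne) h1) h2
  refine ⟨c, fun i => ?_⟩
  ext x
  rw [mem_myPart]
  constructor
  · intro hx
    have hxS : x ∈ K.map E := by
      rw [← hunion]; exact mem_biUnion.mpr ⟨i, mem_univ i, hx⟩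
    obtain ⟨y, hy, rfl⟩ := mem_map.mp hxS
    obtain ⟨j, rfl⟩ : ∃ j, K.orderEmbOfFin hK j = y := by
      have : y ∈ Set.range (K.orderEmbOfFin hK) := by
        rw [range_orderEmbOfFin]; exact hy
      exact this
    exact ⟨j, huniq _ _ _ (hc j) hx, rfl⟩
  · rintro ⟨j, rfl, rfl⟩
    exact hc j

lemma myPart_map {α : Type*} [DecidableEq α] {h n : ℕ} (E : ℕ ↪ α) (t : ℕ ↪o ℕ)
    (B : Finset ℕ) (hB : B.card = n) (hK : (B.map t.toEmbedding).card = n)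
    (c : Fin n → Fin h) (i : Fin h) :
    myPart E (B.map t.toEmbedding) hK c i =
      (((Finset.univ.filter (fun j => c j = i)).image
        (fun j => B.orderEmbOfFin hB j)).image t).map E := by
  have hemb : (fun j => t (B.orderEmbOfFin hB j)) = (B.map t.toEmbedding).orderEmbOfFin hK := by
    apply orderEmbOfFin_unique hK
    · intro j
      exact mem_map_of_mem _ (orderEmbOfFin_mem B hB j)
    · exact t.strictMono.comp (B.orderEmbOfFin hB).strictMono
  rw [myPart, ← hemb, Finset.image_image]
  rfl



/-- Key theorem for multiplicative systems.  Let `h ≥ 2`, let `X` be a countably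
infinite set and let `(𝒜 1, …, 𝒜 h)` be an `h`-tuple of sets of finite subsets of `X`.
For a finite subset `S` of `X`, let `g S` count the ordered `h`-tuples
`(A 1, …, A h) ∈ 𝒜 1 × ⋯ × 𝒜 h` of pairwise disjoint sets with union `S`.
If there is an infinite set `W` of positive integers such that for every `n ∈ W` all but
finitely many `n`-element subsets of `X` satisfy `g S ≥ 2`, then `g` is unbounded. -/
theorem unbounded_of_two_partition_representations {α : Type*} [Countable α] [DecidableEq α]
    (h : ℕ) (hh : 2 ≤ h) (X : Set α) (hX : X.Infinite)
    (𝒜 : Fin h → Set (Finset α)) (h𝒜 : ∀ i, ∀ A ∈ 𝒜 i, ↑A ⊆ X)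
    (g : Finset α → ℕ)
    (hg : ∀ S : Finset α, g S =
      {f : Fin h → Finset α | (∀ i, f i ∈ 𝒜 i) ∧
        (∀ i j, i ≠ j → Disjoint (f i) (f j)) ∧
        Finset.univ.biUnion f = S}.ncard)
    (W : Set ℕ) (hW : W.Infinite) (hWpos : ∀ n ∈ W, 0 < n)
    (hrep : ∀ n ∈ W, {S : Finset α | ↑S ⊆ X ∧ S.card = n ∧ ¬ (2 ≤ g S)}.Finite) :
    ∀ n : ℕ, ∃ S : Finset α, ↑S ⊆ X ∧ n ≤ g S := by
  intro N
  classical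
  haveI : Nonempty (Fin h) := ⟨⟨0, by omega⟩⟩
  obtain ⟨n, hnW, hNn⟩ := hW.exists_gt N
  have hn1 : 0 < n := hWpos n hnW
  have hexc := hrep n hnW
  have hYfin : (⋃ S ∈ {S : Finset α | ↑S ⊆ X ∧ S.card = n ∧ ¬ (2 ≤ g S)},
      (↑S : Set α)).Finite := hexc.biUnion (fun S _ => S.finite_toSet)
  set Y := ⋃ S ∈ {S : Finset α | ↑S ⊆ X ∧ S.card = n ∧ ¬ (2 ≤ g S)}, (↑S : Set α) with hYdef
  have hX' : (X \ Y).Infinite := hX.diff hYfin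
  have hgood : ∀ S : Finset α, ↑S ⊆ X \ Y → S.card = n → 2 ≤ g S := by
    intro S hS hcard
    by_contra hcon
    have hSX : ↑S ⊆ X := fun x hx => (hS hx).1
    have hmem : S ∈ {S : Finset α | ↑S ⊆ X ∧ S.card = n ∧ ¬ (2 ≤ g S)} := ⟨hSX, hcard, hcon⟩
    obtain ⟨x, hx⟩ := Finset.card_pos.mp (by omega : 0 < S.card)
    have hxY : (x : α) ∈ Y := by
      rw [hYdef]
      exact Set.mem_biUnion hmem hx
    exact (hS hx).2 hxY
  set E : ℕ ↪ α := (Set.Infinite.natEmbedding _ hX').trans (Function.Embedding.subtype _) with hEdef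
  have hErange : ∀ q, E q ∈ X \ Y := fun q => ((Set.Infinite.natEmbedding _ hX') q).2
  have hcolor : ∀ (K : Finset ℕ) (hK : K.card = n),
      ∃ cc : (Fin n → Fin h) × (Fin n → Fin h), cc.1 ≠ cc.2 ∧
        (∀ i, myPart E K hK cc.1 i ∈ 𝒜 i) ∧ (∀ i, myPart E K hK cc.2 i ∈ 𝒜 i) := by
    intro K hK
    have hsub : ↑(K.map E) ⊆ X \ Y := by
      intro x hx
      rw [coe_map] at hx
      obtain ⟨q, -, rfl⟩ := hx
      exact hErange q
    have hcard : (K.map E).card = n := by rw [card_map]; exact hK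
    have hg2 : 2 ≤ g (K.map E) := hgood _ hsub hcard
    rw [hg (K.map E)] at hg2
    obtain ⟨f, f', hf, hf', hne⟩ :=
      (Set.one_lt_ncard_iff (my_tupleset_finite 𝒜 (K.map E))).mp (lt_of_lt_of_le one_lt_two hg2)
    obtain ⟨c, hc⟩ := my_pattern E K hK f hf.2.1 hf.2.2
    obtain ⟨c', hc'⟩ := my_pattern E K hK f' hf'.2.1 hf'.2.2
    refine ⟨(c, c'), ?_, ?_, ?_⟩
    · intro hcon
      apply hne
      funext i
      rw [hc i, hc' i]
      simp only at hcon
      rw [hcon]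
    · intro i; rw [← hc i]; exact hf.1 i
    · intro i; rw [← hc' i]; exact hf'.1 i
  set colorOf : Finset ℕ → ((Fin n → Fin h) × (Fin n → Fin h)) := fun K =>
    if hK : K.card = n then Classical.choose (hcolor K hK)
    else Classical.choice inferInstance with hcolorOf
  obtain ⟨T', -, hT'inf, ⟨c, c'⟩, hmono⟩ :=
    my_infinite_ramsey n colorOf Set.univ Set.infinite_univ
  have hspec : ∀ (K : Finset ℕ) (hK : K.card = n), ↑K ⊆ T' →
      c ≠ c' ∧ (∀ i, myPart E K hK c i ∈ 𝒜 i) ∧ (∀ i, myPart E K hK c' i ∈ 𝒜 i) := by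
    intro K hK hKT
    have hcol := hmono K hKT hK
    rw [hcolorOf] at hcol
    simp only [dif_pos hK] at hcol
    have hsp := Classical.choose_spec (hcolor K hK)
    rw [hcol] at hsp
    exact hsp
  -- c ≠ c'
  obtain ⟨T₀, hT₀sub, hT₀fin, hT₀card⟩ := hT'inf.exists_subset_ncard_eq n
  have hK₀ : (hT₀fin.toFinset).card = n := by
    rw [← Set.ncard_coe_finset, hT₀fin.coe_toFinset]; exact hT₀card
  have hccne : c ≠ c' :=
    (hspec hT₀fin.toFinset hK₀ (by rw [hT₀fin.coe_toFinset]; exact hT₀sub)).1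
  -- enumerate T'
  haveI : DecidablePred (· ∈ T') := Classical.decPred _
  haveI : Infinite ↥T' := hT'inf.to_subtype
  set t : ℕ ↪o ℕ := Nat.orderEmbeddingOfSet T' with htdef
  have htmem : ∀ q, t q ∈ T' := by
    intro q
    have : t q ∈ Set.range t := ⟨q, rfl⟩
    rwa [Nat.orderEmbeddingOfSet_range] at this
  -- the key constructor for a nonconstant valid pattern
  have main_nonconst : ∀ e : Fin n → Fin h,
      (∀ (K : Finset ℕ) (hK : K.card = n), ↑K ⊆ T' → ∀ i, myPart E K hK e i ∈ 𝒜 i) →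
      (∃ j j' : Fin n, e j ≠ e j') → ∃ S : Finset α, ↑S ⊆ X ∧ N ≤ g S := by
    rintro e hvalid ⟨j₀, j₁, hj⟩
    set k : Fin h → ℕ := fun i => #(univ.filter (fun j => e j = i)) with hkdef
    have hsumk : ∑ i, k i = n := by
      have := Finset.card_eq_sum_card_fiberwise (f := e) (s := univ) (t := univ)
        (fun x _ => mem_univ _)
      rw [card_univ, Fintype.card_fin] at this
      rw [hkdef]
      exact this.symm
    have hk1 : 0 < k (e j₀) := card_pos.mpr ⟨j₀, mem_filter.mpr ⟨mem_univ _, rfl⟩⟩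
    have hk2 : k (e j₀) < n := by
      have hlt : (univ.filter (fun j => e j = e j₀)) ⊂ univ :=
        (Finset.ssubset_iff_of_subset (subset_univ _)).mpr
          ⟨j₁, mem_univ _, by simp only [mem_filter, mem_univ, true_and]; exact Ne.symm hj⟩
      have := card_lt_card hlt
      rwa [card_univ, Fintype.card_fin] at this
    have hsparse_inj : Function.Injective (fun s : ℕ => (n+1)*(s+1)) := by
      intro a b hab
      simp only at hab
      have := Nat.eq_of_mul_eq_mul_left (by omega : 0 < n + 1) hab
      omega
    set Snat : Finset ℕ := (Finset.range n).image (fun s => (n+1)*(s+1)) with hSnatdef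
    have hSnatcard : Snat.card = n := by
      rw [hSnatdef, card_image_of_injective _ hsparse_inj, card_range]
    set S : Finset α := (Snat.map t.toEmbedding).map E with hSdef
    have hScard : S.card = n := by rw [hSdef, card_map, card_map, hSnatcard]
    have hprop : ∀ i, ∀ P ⊆ S, P.card = k i → P ∈ 𝒜 i := by
      intro i P hPsub hPcard
      rw [hSdef] at hPsub
      obtain ⟨R, hRsub, rfl⟩ := Finset.subset_map_iff.mp hPsub
      obtain ⟨Q, hQsub, rfl⟩ := Finset.subset_map_iff.mp hRsub
      rw [card_map, card_map] at hPcard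
      have hdiv : ∀ x ∈ Q, (n+1) ∣ x ∧ 0 < x := by
        intro x hx
        have hxx := hQsub hx
        rw [hSnatdef, mem_image] at hxx
        obtain ⟨s, -, rfl⟩ := hxx
        exact ⟨⟨s+1, rfl⟩, by positivity⟩
      obtain ⟨B, hB, hiff, himg⟩ := interleave (univ.filter (fun j => e j = i)) Q
        (by rw [hPcard, hkdef]) hdiv
      have hKcard : (B.map t.toEmbedding).card = n := by rw [card_map]; exact hB
      have hKT : ↑(B.map t.toEmbedding) ⊆ T' := by
        intro x hx
        rw [coe_map] at hx
        obtain ⟨b, -, rfl⟩ := hx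
        exact htmem b
      have hval := hvalid (B.map t.toEmbedding) hKcard hKT i
      rw [myPart_map E t B hB hKcard e i, himg] at hval
      have : Finset.image (⇑t) Q = Q.map t.toEmbedding := by
        rw [Finset.map_eq_image]
        rfl
      rwa [this] at hval
    have hcount := my_counting 𝒜 S k (by rw [hScard]; exact hsumk) (e j₀) hk1
      (by rw [hScard]; exact hk2) hprop
    refine ⟨S, ?_, ?_⟩
    · intro x hx
      rw [hSdef, coe_map] at hx
      obtain ⟨y, -, rfl⟩ := hx
      exact (hErange y).1
    · rw [hg S]
      have hlt : N < S.card := by rw [hScard]; exact hNn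
      exact le_trans (le_of_lt hlt) hcount
  by_cases hc1 : ∃ j j' : Fin n, c j ≠ c j'
  · exact main_nonconst c (fun K hK hKT => (hspec K hK hKT).2.1) hc1
  by_cases hc2 : ∃ j j' : Fin n, c' j ≠ c' j'
  · exact main_nonconst c' (fun K hK hKT => (hspec K hK hKT).2.2) hc2
  -- both constant
  push_neg at hc1 hc2
  set j0 : Fin n := ⟨0, hn1⟩ with hj0def
  have hc1' : ∀ j, c j = c j0 := fun j => hc1 j j0
  have hc2' : ∀ j, c' j = c' j0 := fun j => hc2 j j0
  have hi01 : c j0 ≠ c' j0 := by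
    intro hcon
    apply hccne
    funext j
    rw [hc1' j, hc2' j, hcon]
  set k : Fin h → ℕ := fun i => if i = c j0 then n else if i = c' j0 then n else 0 with hkdef
  have hk0 : ∀ i, i ≠ c j0 → i ≠ c' j0 → k i = 0 := by
    intro i h1 h2
    show (if i = c j0 then n else if i = c' j0 then n else 0) = 0
    rw [if_neg h1, if_neg h2]
  have hki0 : k (c j0) = n := by
    show (if c j0 = c j0 then n else if c j0 = c' j0 then n else 0) = n
    rw [if_pos rfl]
  have hki1 : k (c' j0) = n := by
    show (if c' j0 = c j0 then n else if c' j0 = c' j0 then n else 0) = n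
    rw [if_neg (Ne.symm hi01), if_pos rfl]
  have hsumk : ∑ i, k i = 2 * n := by
    have hzero : ∀ x ∈ (univ : Finset (Fin h)), x ∉ ({c j0, c' j0} : Finset (Fin h)) → k x = 0 := by
      intro x _ hx
      rw [mem_insert, mem_singleton] at hx
      push_neg at hx
      exact hk0 x hx.1 hx.2
    rw [← Finset.sum_subset (subset_univ ({c j0, c' j0} : Finset (Fin h))) hzero]
    rw [Finset.sum_pair hi01, hki0, hki1]
    omega
  set S : Finset α := ((Finset.range (2*n)).map t.toEmbedding).map E with hSdef
  have hScard : S.card = 2*n := by rw [hSdef, card_map, card_map, card_range]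
  have himgK : ∀ (K : Finset ℕ) (hK : K.card = n),
      univ.image (fun j => K.orderEmbOfFin hK j) = K := by
    intro K hK
    apply eq_of_subset_of_card_le
    · intro x hx
      obtain ⟨j, -, rfl⟩ := mem_image.mp hx
      exact orderEmbOfFin_mem K hK j
    · rw [card_image_of_injective _ (K.orderEmbOfFin hK).injective, card_univ,
        Fintype.card_fin, hK]
  have hprop : ∀ i, ∀ P ⊆ S, P.card = k i → P ∈ 𝒜 i := by
    intro i P hPsub hPcard
    rw [hSdef] at hPsub
    obtain ⟨R, hRsub, rfl⟩ := Finset.subset_map_iff.mp hPsub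
    obtain ⟨Q, hQsub, rfl⟩ := Finset.subset_map_iff.mp hRsub
    rw [card_map, card_map] at hPcard
    have hKT : ↑(Q.map t.toEmbedding) ⊆ T' := by
      intro x hx
      rw [coe_map] at hx
      obtain ⟨b, -, rfl⟩ := hx
      exact htmem b
    by_cases hii0 : i = c j0
    · subst hii0
      rw [hki0] at hPcard
      have hKcard : (Q.map t.toEmbedding).card = n := by rw [card_map]; exact hPcard
      have hval := (hspec (Q.map t.toEmbedding) hKcard hKT).2.1 (c j0)
      have hfilt : univ.filter (fun j => c j = c j0) = univ :=
        filter_true_of_mem (fun j _ => hc1' j)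
      rw [myPart, hfilt, himgK _ hKcard] at hval
      exact hval
    · by_cases hii1 : i = c' j0
      · subst hii1
        rw [hki1] at hPcard
        have hKcard : (Q.map t.toEmbedding).card = n := by rw [card_map]; exact hPcard
        have hval := (hspec (Q.map t.toEmbedding) hKcard hKT).2.2 (c' j0)
        have hfilt : univ.filter (fun j => c' j = c' j0) = univ :=
          filter_true_of_mem (fun j _ => hc2' j)
        rw [myPart, hfilt, himgK _ hKcard] at hval
        exact hval
      · rw [hk0 i hii0 hii1] at hPcard
        have hQempty : Q = ∅ := Finset.card_eq_zero.mp hPcard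
        rw [hQempty, map_empty, map_empty]
        have hval := (hspec hT₀fin.toFinset hK₀
          (by rw [hT₀fin.coe_toFinset]; exact hT₀sub)).2.1 i
        have hfilt : univ.filter (fun j => c j = i) = ∅ := by
          apply filter_false_of_mem
          intro j _
          rw [hc1' j]
          intro hcon
          exact hii0 hcon.symm
        rw [myPart, hfilt, image_empty, map_empty] at hval
        exact hval
  have hcount := my_counting 𝒜 S k (by rw [hScard]; exact hsumk) (c j0)
    (by rw [hki0]; exact hn1) (by rw [hki0, hScard]; omega) hprop
  refine ⟨S, ?_, ?_⟩
  · intro x hx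
    rw [hSdef, coe_map] at hx
    obtain ⟨y, -, rfl⟩ := hx
    exact (hErange y).1
  · rw [hg S]
    have hlt : N < S.card := by
      rw [hScard]
      exact lt_of_lt_of_le hNn (Nat.le_mul_of_pos_left n (by norm_num))
    exact le_trans (le_of_lt hlt) hcount
end

section
/- Let h ≥ 2 and let B be a set of positive integers such that every sufficiently large positive integer n is a product b_1 ⋯ b_h with all b_i ∈ B. Then the function g_{B,h}(n) counting ordered representations n = b_1 ⋯ b_h with b_i ∈ B is unbounded: for every m there exists n with g_{B,h}(n) ≥ m. -/
/-- Infinite Ramsey theorem, in "strictly monotone tuple" form: any coloring of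
strictly monotone `k`-tuples from `ℕ` by a finite type admits a strictly monotone
`e : ℕ → ℕ` on whose range the coloring is constant. -/
theorem erdos_ramsey (α : Type) [Finite α] [Nonempty α] :
    ∀ (k : ℕ) (f : (Fin k → ℕ) → α), ∃ e : ℕ → ℕ, StrictMono e ∧
      ∃ c, ∀ σ : Fin k → ℕ, StrictMono σ → f (e ∘ σ) = c := by
  intro k
  induction k with
  | zero =>
    intro f
    exact ⟨id, strictMono_id, f (fun i => i.elim0), fun σ _ => by
      congr 1; exact Subsingleton.elim _ _⟩
  | succ k ih =>
    intro f
    classical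
    -- one step of the construction
    have hstep : ∀ E : ℕ → ℕ, StrictMono E → ∃ (c : α) (E' : ℕ → ℕ), StrictMono E' ∧
        (∀ i, ∃ j, E' i = E j) ∧ E 0 < E' 0 ∧
        ∀ σ : Fin k → ℕ, StrictMono σ → f (Fin.cons (E 0) (E' ∘ σ)) = c := by
      intro E hE
      obtain ⟨e', he', c', hc'⟩ := ih (fun σ => f (Fin.cons (E 0) (fun j => E (σ j + 1))))
      refine ⟨c', fun i => E (e' i + 1), ?_, fun i => ⟨e' i + 1, rfl⟩, ?_, ?_⟩
      · intro i j hij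
        exact hE (by have := he' hij; omega)
      · exact hE (by omega)
      · intro σ hσ
        exact hc' σ hσ
    -- package the step as functions via choice
    choose nc nE hSM hRange hLt hMain using fun (p : {E : ℕ → ℕ // StrictMono E}) =>
      hstep p.1 p.2
    let next : {E : ℕ → ℕ // StrictMono E} → {E : ℕ → ℕ // StrictMono E} :=
      fun p => ⟨nE p, hSM p⟩
    let Eseq : ℕ → {E : ℕ → ℕ // StrictMono E} := fun n => next^[n] ⟨id, strictMono_id⟩
    have hEsucc : ∀ n, Eseq (n + 1) = next (Eseq n) := by
      intro n
      simp only [Eseq, Function.iterate_succ_apply']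
    let aseq : ℕ → ℕ := fun n => (Eseq n).1 0
    let cseq : ℕ → α := fun n => nc (Eseq n)
    have haseq : StrictMono aseq := by
      apply strictMono_nat_of_lt_succ
      intro n
      show (Eseq n).1 0 < (Eseq (n+1)).1 0
      rw [hEsucc n]
      exact hLt (Eseq n)
    have hrange : ∀ μ ν, μ ≤ ν → ∀ i, ∃ j, (Eseq ν).1 i = (Eseq μ).1 j := by
      intro μ ν hμν
      induction ν, hμν using Nat.le_induction with
      | base => exact fun i => ⟨i, rfl⟩
      | succ ν hμν ihr =>
        intro i
        have h1 : ∃ j, (Eseq (ν+1)).1 i = (Eseq ν).1 j := by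
          rw [hEsucc ν]; exact hRange (Eseq ν) i
        obtain ⟨j, hj⟩ := h1
        obtain ⟨j', hj'⟩ := ihr j
        exact ⟨j', by rw [hj, hj']⟩
    have hmain : ∀ n, ∀ σ : Fin k → ℕ, StrictMono σ →
        f (Fin.cons (aseq n) ((Eseq (n+1)).1 ∘ σ)) = cseq n := by
      intro n σ hσ
      rw [hEsucc n]
      exact hMain (Eseq n) σ hσ
    -- pigeonhole on colors
    obtain ⟨cstar, hcstar⟩ := Finite.exists_infinite_fiber cseq
    have hI : (setOf fun n => cseq n = cstar).Infinite := by
      have h2 : (cseq ⁻¹' {cstar}).Infinite := Set.infinite_coe_iff.mp hcstar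
      exact h2
    let nn : ℕ → ℕ := Nat.nth (fun n => cseq n = cstar)
    have hnnSM : StrictMono nn := Nat.nth_strictMono hI
    have hnnMem : ∀ n, cseq (nn n) = cstar := fun n => Nat.nth_mem_of_infinite hI n
    refine ⟨fun i => aseq (nn i), haseq.comp hnnSM, cstar, ?_⟩
    intro σ hσ
    set n₀ := nn (σ 0) with hn₀
    have hν : ∀ j : Fin k, n₀ + 1 ≤ nn (σ j.succ) := by
      intro j
      have : σ 0 < σ j.succ := hσ (Fin.succ_pos j)
      have := hnnSM this
      omega
    have hex : ∀ j : Fin k, ∃ i, aseq (nn (σ j.succ)) = (Eseq (n₀+1)).1 i := by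
      intro j
      exact hrange (n₀+1) (nn (σ j.succ)) (hν j) 0
    choose τ hτ using hex
    have hτSM : StrictMono τ := by
      intro j j' hjj'
      have h1 : aseq (nn (σ j.succ)) < aseq (nn (σ j'.succ)) :=
        haseq (hnnSM (hσ (by exact Fin.succ_lt_succ_iff.mpr hjj')))
      rw [hτ j, hτ j'] at h1
      exact (Eseq (n₀+1)).2.lt_iff_lt.mp h1
    have hcomp : (fun i => aseq (nn i)) ∘ σ = Fin.cons (aseq n₀) ((Eseq (n₀+1)).1 ∘ τ) := by
      funext p
      refine Fin.cases ?_ ?_ p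
      · simp [hn₀]
      · intro j
        simp only [Function.comp_apply, Fin.cons_succ]
        exact hτ j
    rw [hcomp, hmain n₀ τ hτSM, hnnMem (σ 0)]


/-- Extension lemma: given strictly monotone positions `a : Fin (s+1) → ℕ` inside `[0,k)`
and strictly monotone target indices `m`, there is a strictly monotone `σ : ℕ → ℕ` with
`σ (a j) = (k+1) * m j + k` for all `j`. -/
theorem erdos_ext (k s : ℕ) (a : Fin (s+1) → ℕ) (ha : StrictMono a) (hak : ∀ j, a j < k)
    (m : Fin (s+1) → ℕ) (hm : StrictMono m) :
    ∃ σ : ℕ → ℕ, StrictMono σ ∧ ∀ j, σ (a j) = (k+1) * m j + k := by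
  classical
  set last := a (Fin.last s) with hlast
  have hJex : ∀ p, p ≤ last → (Finset.univ.filter fun j => p ≤ a j).Nonempty :=
    fun p hp => ⟨Fin.last s, by simp [hp]; exact hp⟩
  let J : ℕ → Fin (s+1) := fun p =>
    if H : (Finset.univ.filter fun j => p ≤ a j).Nonempty then
      (Finset.univ.filter fun j => p ≤ a j).min' H else Fin.last s
  have hJ1 : ∀ p, p ≤ last → p ≤ a (J p) := by
    intro p hp
    have H := hJex p hp
    have := Finset.min'_mem _ H
    simp only [J, dif_pos H]
    have := Finset.mem_filter.mp this
    exact this.2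
  have hJ2 : ∀ p (j : Fin (s+1)), p ≤ a j → J p ≤ j := by
    intro p j hj
    have H : (Finset.univ.filter fun j' => p ≤ a j').Nonempty := ⟨j, by simp [hj]⟩
    simp only [J, dif_pos H]
    exact Finset.min'_le _ _ (by simp [hj])
  have hJa : ∀ j, J (a j) = j := by
    intro j
    have h1 : J (a j) ≤ j := hJ2 _ j le_rfl
    have h2 : a j ≤ a (J (a j)) := hJ1 _ (ha.monotone (Fin.le_last j))
    have h3 : j ≤ J (a j) := by
      by_contra hc
      push_neg at hc
      exact absurd (ha hc) (by omega)
    exact le_antisymm h1 h3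
  let σ : ℕ → ℕ := fun p =>
    if p ≤ last then (k+1) * m (J p) + (k - (a (J p) - p))
    else (k+1) * (m (Fin.last s) + (p - last)) + k
  have hσa : ∀ j, σ (a j) = (k+1) * m j + k := by
    intro j
    have hj : a j ≤ last := ha.monotone (Fin.le_last j)
    simp only [σ, if_pos hj, hJa j]
    omega
  refine ⟨σ, strictMono_nat_of_lt_succ ?_, hσa⟩
  intro p
  by_cases h1 : p + 1 ≤ last
  · have hp : p ≤ last := by omega
    have hj' := hJ1 (p+1) h1
    have hjle : J p ≤ J (p+1) := hJ2 p (J (p+1)) (by omega)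
    by_cases h2 : p + 1 ≤ a (J p)
    · have hjge : J (p+1) ≤ J p := hJ2 (p+1) (J p) h2
      have hJeq : J (p+1) = J p := le_antisymm hjge hjle
      simp only [σ, if_pos hp, if_pos h1, hJeq]
      have := hak (J p)
      omega
    · -- p = a (J p)
      have hpa : p = a (J p) := by have := hJ1 p hp; omega
      have hlt : J p < J (p+1) := by
        rcases lt_or_eq_of_le hjle with h | h
        · exact h
        · exfalso; rw [← h] at hj'; omega
      have hmlt : m (J p) < m (J (p+1)) := hm hlt
      have hmul : (k+1) * m (J p) + (k+1) ≤ (k+1) * m (J (p+1)) := by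
        calc (k+1) * m (J p) + (k+1) = (k+1) * (m (J p) + 1) := by ring
        _ ≤ _ := Nat.mul_le_mul_left _ (by omega)
      simp only [σ, if_pos hp, if_pos h1]
      have hb := hak (J (p+1))
      have hb2 := hak (J p)
      omega
  · by_cases h0 : p ≤ last
    · -- p = last
      have hpl : p = last := by omega
      have hJp : J p = Fin.last s := by rw [hpl, hlast]; exact hJa _
      simp only [σ, if_pos h0, if_neg h1, hJp]
      have hmul : (k+1) * m (Fin.last s) + (k+1) ≤ (k+1) * (m (Fin.last s) + (p + 1 - last)) := by
        have : 1 ≤ p + 1 - last := by omega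
        calc (k+1) * m (Fin.last s) + (k+1) = (k+1) * (m (Fin.last s) + 1) := by ring
        _ ≤ _ := Nat.mul_le_mul_left _ (by omega)
      omega
    · have hpl : last < p := by omega
      simp only [σ, if_neg h0, if_neg h1]
      have hmul : (k+1) * (m (Fin.last s) + (p - last)) + (k+1) ≤
          (k+1) * (m (Fin.last s) + (p + 1 - last)) := by
        calc (k+1) * (m (Fin.last s) + (p - last)) + (k+1)
            = (k+1) * (m (Fin.last s) + (p - last) + 1) := by ring
        _ ≤ _ := Nat.mul_le_mul_left _ (by omega)
      omega


theorem erdos_count (h : ℕ) (B : Set ℕ) (g : ℕ → ℕ)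
    (hg : ∀ n, g n = {b : Fin h → ℕ | (∀ i, b i ∈ B) ∧ ∏ i, b i = n}.ncard)
    (u : ℕ → ℕ) (hu : StrictMono u) (hup : ∀ r, (u r).Prime)
    (s : Fin h → ℕ) (HYP : ∀ i (X : Finset ℕ), X.card = s i → (∏ r ∈ X, u r) ∈ B)
    (i₁ i₂ : Fin h) (hne : i₁ ≠ i₂) (h₂ : 1 ≤ s i₂) (m : ℕ) (h₁ : m ≤ s i₁) :
    ∃ n, m ≤ g n := by
  classical
  rcases Nat.eq_zero_or_pos m with rfl | hm
  · exact ⟨0, Nat.zero_le _⟩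
  set K := ∑ i, s i with hK
  set o : Fin h → ℕ := fun i => ∑ i' ∈ Finset.univ.filter (· < i), s i' with ho
  set F : Fin h → Finset ℕ := fun i => Finset.Ico (o i) (o i + s i) with hF
  have Fo : ∀ i i' : Fin h, i < i' → o i + s i ≤ o i' := by
    intro i i' hii'
    have hni : i ∉ Finset.univ.filter (· < i) := by simp
    have hsub : insert i (Finset.univ.filter (· < i)) ⊆ Finset.univ.filter (· < i') := by
      intro j hj
      rcases Finset.mem_insert.mp hj with rfl | hj'
      · simp [hii']
      · simp only [Finset.mem_filter] at hj' ⊢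
        exact ⟨Finset.mem_univ _, hj'.2.trans hii'⟩
    calc o i + s i = ∑ i'' ∈ insert i (Finset.univ.filter (· < i)), s i'' := by
          rw [Finset.sum_insert hni]; ring
      _ ≤ _ := Finset.sum_le_sum_of_subset hsub
  have Fbound : ∀ i, o i + s i ≤ K := by
    intro i
    have hni : i ∉ Finset.univ.filter (· < i) := by simp
    calc o i + s i = ∑ i'' ∈ insert i (Finset.univ.filter (· < i)), s i'' := by
          rw [Finset.sum_insert hni]; ring
      _ ≤ _ := Finset.sum_le_sum_of_subset (Finset.subset_univ _)
  have Fsub : ∀ i, F i ⊆ Finset.range K := by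
    intro i x hx
    rw [Finset.mem_Ico] at hx
    rw [Finset.mem_range]
    have := Fbound i
    omega
  have Fdisj : ∀ i i' : Fin h, i ≠ i' → Disjoint (F i) (F i') := by
    have helper : ∀ i i' : Fin h, i < i' → Disjoint (F i) (F i') := by
      intro i i' hii'
      rw [Finset.disjoint_left]
      intro x hx hx'
      rw [Finset.mem_Ico] at hx hx'
      have := Fo i i' hii'
      omega
    intro i i' hii'
    rcases lt_or_gt_of_ne hii' with hlt | hgt
    · exact helper i i' hlt
    · exact (helper i' i hgt).symm
  have Fcard : ∀ i, (F i).card = s i := by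
    intro i
    simp [hF, Nat.card_Ico]
  have hUnion : Finset.univ.biUnion F = Finset.range K := by
    apply Finset.eq_of_subset_of_card_le
    · exact Finset.biUnion_subset.mpr fun i _ => Fsub i
    · rw [Finset.card_range, Finset.card_biUnion (fun i _ i' _ hii' => Fdisj i i' hii')]
      simp only [Fcard]
      omega
  have hcov : ∀ r : ℕ, ∃ i : Fin h, r < K → r ∈ F i := by
    intro r
    by_cases hr : r < K
    · have : r ∈ Finset.univ.biUnion F := by rw [hUnion]; exact Finset.mem_range.mpr hr
      obtain ⟨i, _, hi⟩ := Finset.mem_biUnion.mp this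
      exact ⟨i, fun _ => hi⟩
    · exact ⟨i₁, fun hc => absurd hc hr⟩
  choose base hbase using hcov
  have huniq : ∀ (r : ℕ) (i : Fin h), r ∈ F i → base r = i := by
    intro r i hi
    have hrK : r < K := Finset.mem_range.mp (Fsub i hi)
    by_contra hne'
    exact (Finset.disjoint_left.mp (Fdisj _ _ hne') (hbase r hrK)) hi
  have hbi : ∀ i, (Finset.range K).filter (fun r => base r = i) = F i := by
    intro i
    ext r
    simp only [Finset.mem_filter, Finset.mem_range]
    constructor
    · rintro ⟨hrK, rfl⟩
      exact hbase r hrK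
    · intro hr
      exact ⟨Finset.mem_range.mp (Fsub i hr), huniq r i hr⟩
  set y := o i₂ with hy
  have hyF : y ∈ F i₂ := by
    simp only [hF, Finset.mem_Ico]
    omega
  have hyK : y < K := Finset.mem_range.mp (Fsub i₂ hyF)
  have hby : base y = i₂ := huniq y i₂ hyF
  set ρ : ℕ → ℕ → Fin h := fun x r => if r = x then i₂ else if r = y then i₁ else base r with hρ
  set G : ℕ → Fin h → Finset ℕ :=
    fun x i => (Finset.range K).filter fun r => ρ x r = i with hG
  set bfun : ℕ → Fin h → ℕ := fun x i => ∏ r ∈ G x i, u r with hbfun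
  set n := ∏ r ∈ Finset.range K, u r with hn
  have hprod : ∀ x, ∏ i, bfun x i = n := by
    intro x
    exact Finset.prod_fiberwise (Finset.range K) (ρ x) u
  -- cards of the modified fibers
  have hcard : ∀ x, x ∈ F i₁ → ∀ i, (G x i).card = s i := by
    intro x hx i
    have hxK : x < K := Finset.mem_range.mp (Fsub i₁ hx)
    have hbx : base x = i₁ := huniq x i₁ hx
    have hxy : x ≠ y := by
      intro hc
      rw [hc, hby] at hbx
      exact hne hbx.symm
    have hkey : ∀ r : ℕ, ρ x r = base (Equiv.swap x y r) ∧ (r < K ↔ (Equiv.swap x y r) < K) := by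
      intro r
      rcases eq_or_ne r x with rfl | hrx
      · rw [Equiv.swap_apply_left]
        constructor
        · simp [hρ, hby]
        · constructor <;> intro <;> assumption
      rcases eq_or_ne r y with rfl | hry
      · rw [Equiv.swap_apply_right]
        constructor
        · simp [hρ, hrx, hbx]
        · constructor <;> intro <;> assumption
      · rw [Equiv.swap_apply_of_ne_of_ne hrx hry]
        exact ⟨by simp [hρ, hrx, hry], Iff.rfl⟩
    have hGx : G x i = Finset.image (Equiv.swap x y)
        ((Finset.range K).filter fun r => base r = i) := by
      ext r
      simp only [hG, Finset.mem_filter, Finset.mem_range, Finset.mem_image]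
      constructor
      · rintro ⟨hrK, hρr⟩
        refine ⟨Equiv.swap x y r, ⟨(hkey r).2.mp hrK, ?_⟩, by simp⟩
        rw [← (hkey r).1, hρr]
      · rintro ⟨r', ⟨hr'K, hbr'⟩, rfl⟩
        have h1 := (hkey (Equiv.swap x y r')).1
        rw [Equiv.swap_apply_self] at h1
        refine ⟨?_, by rw [h1, hbr']⟩
        have h2 := (hkey r').2.mp hr'K
        exact h2
    rw [hGx, Finset.card_image_of_injective _ (Equiv.injective _), hbi i, Fcard i]
  have hmemB : ∀ x ∈ F i₁, ∀ i, bfun x i ∈ B := fun x hx i => HYP i _ (hcard x hx i)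
  -- injectivity
  have hinj : ∀ x ∈ F i₁, ∀ x' ∈ F i₁, bfun x = bfun x' → x = x' := by
    intro x hx x' hx' heq
    by_contra hxx'
    have hx'K : x' < K := Finset.mem_range.mp (Fsub i₁ hx')
    have hbx' : base x' = i₁ := huniq x' i₁ hx'
    have hx'y : x' ≠ y := by
      intro hc
      rw [hc, hby] at hbx'
      exact hne hbx'.symm
    have hx'mem : x' ∈ G x i₁ := by
      simp only [hG, Finset.mem_filter, Finset.mem_range]
      refine ⟨hx'K, ?_⟩
      simp [hρ, Ne.symm hxx', hx'y, hbx']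
    have hdvd : u x' ∣ bfun x i₁ := Finset.dvd_prod_of_mem _ hx'mem
    rw [heq] at hdvd
    obtain ⟨r, hr, hdvd'⟩ := ((hup x').prime.dvd_finset_prod_iff u).mp hdvd
    have : u x' = u r := (Nat.prime_dvd_prime_iff_eq (hup x') (hup r)).mp hdvd'
    have hrx' : r = x' := (hu.injective this).symm
    rw [hrx'] at hr
    simp only [hG, Finset.mem_filter] at hr
    have h3 : ρ x' x' = i₂ := by simp [hρ]
    exact hne (hr.2.symm.trans h3)
  set S := (F i₁).image bfun with hS
  have hScard : S.card = s i₁ := by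
    rw [hS, Finset.card_image_of_injOn hinj, Fcard i₁]
  have hnpos : 0 < n := Finset.prod_pos fun r _ => (hup r).pos
  have hSsub : (↑S : Set (Fin h → ℕ)) ⊆
      {b : Fin h → ℕ | (∀ i, b i ∈ B) ∧ ∏ i, b i = n} := by
    intro b hb
    obtain ⟨x, hx, rfl⟩ := Finset.mem_image.mp hb
    exact ⟨hmemB x hx, hprod x⟩
  have hfin : {b : Fin h → ℕ | (∀ i, b i ∈ B) ∧ ∏ i, b i = n}.Finite := by
    apply Set.Finite.subset (Set.Finite.pi fun _ : Fin h => Set.finite_Iic n)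
    rintro b ⟨_, hbprod⟩
    rw [Set.mem_univ_pi]
    intro i
    rw [Set.mem_Iic]
    refine Nat.le_of_dvd hnpos ?_
    rw [← hbprod]
    exact Finset.dvd_prod_of_mem _ (Finset.mem_univ i)
  refine ⟨n, ?_⟩
  rw [hg n]
  calc m ≤ s i₁ := h₁
    _ = S.card := hScard.symm
    _ = (↑S : Set (Fin h → ℕ)).ncard := (Set.ncard_coe_finset S).symm
    _ ≤ _ := Set.ncard_le_ncard hSsub hfin


theorem prod_oemb {α : Type*} [LinearOrder α] {M : Type*} [CommMonoid M] (A : Finset α) {c : ℕ}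
    (hc : A.card = c) (f : α → M) :
    (∏ j : Fin c, f (A.orderEmbOfFin hc j)) = ∏ x ∈ A, f x := by
  apply Finset.prod_bij (fun (j : Fin c) _ => A.orderEmbOfFin hc j)
  · intro j _; exact Finset.orderEmbOfFin_mem A hc j
  · intro j _ j' _ hjj'; exact (A.orderEmbOfFin hc).injective hjj'
  · intro x hx
    have hx' : x ∈ Set.range (A.orderEmbOfFin hc) := by
      rw [Finset.range_orderEmbOfFin]; exact hx
    obtain ⟨j, hj⟩ := hx'
    exact ⟨j, Finset.mem_univ j, hj⟩
  · intro j _; rfl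

section Main

/-- The representation function of an asymptotic multiplicative basis of order `h ≥ 2`
is unbounded: if every sufficiently large positive integer is a product of `h` elements
of `B`, then for every `m` some `n` has at least `m` ordered representations
`n = b₁ ⋯ b_h` with all `bᵢ ∈ B`. -/
theorem multiplicative_basis_unbounded (h : ℕ) (hh : 2 ≤ h)
    (B : Set ℕ) (hBpos : ∀ b ∈ B, 0 < b)
    (g : ℕ → ℕ)
    (hg : ∀ n, g n = {b : Fin h → ℕ | (∀ i, b i ∈ B) ∧ ∏ i, b i = n}.ncard)
    (hbasis : ∃ N, ∀ n, N ≤ n → 1 ≤ g n) :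
    ∀ m : ℕ, ∃ n : ℕ, m ≤ g n := by
  classical
  intro m
  obtain ⟨N, hN⟩ := hbasis
  set k := h * m + h with hkdef
  have hk2 : 2 ≤ k := by omega
  have hPinf : (setOf Nat.Prime).Infinite := Nat.infinite_setOf_prime
  set q : ℕ → ℕ := fun r => Nat.nth Nat.Prime (r + N) with hq
  have hqSM : StrictMono q :=
    (Nat.nth_strictMono hPinf).comp (fun a b hab => by omega)
  have hqP : ∀ r, (q r).Prime := fun r => Nat.nth_mem_of_infinite hPinf _
  have hqN : ∀ r, N ≤ q r := by
    intro r
    show N ≤ Nat.nth Nat.Prime (r + N)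
    have := (Nat.nth_strictMono hPinf).le_apply (x := r + N)
    omega
  -- every strictly monotone k-tuple of prime indices admits a "pattern"
  have pat : ∀ σ : Fin k → ℕ, StrictMono σ → ∃ φ : Fin k → Fin h,
      ∀ i, (∏ j ∈ Finset.univ.filter fun j => φ j = i, q (σ j)) ∈ B := by
    intro σ hσ
    set n := ∏ j : Fin k, q (σ j) with hn
    have hn1 : N ≤ n := by
      calc N ≤ q (σ ⟨0, by omega⟩) := hqN _
        _ ≤ n := Finset.single_le_prod' (fun j _ => (hqP _).one_lt.le)
            (Finset.mem_univ (⟨0, by omega⟩ : Fin k))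
    have hg1 : 1 ≤ g n := hN n hn1
    have hne' : {b : Fin h → ℕ | (∀ i, b i ∈ B) ∧ ∏ i, b i = n}.Nonempty := by
      apply Set.nonempty_of_ncard_ne_zero
      rw [← hg n]
      omega
    obtain ⟨b, hbB, hbprod⟩ := hne'
    have hφ : ∀ j : Fin k, ∃ i, q (σ j) ∣ b i := by
      intro j
      have hdvd : q (σ j) ∣ n := Finset.dvd_prod_of_mem _ (Finset.mem_univ j)
      rw [← hbprod] at hdvd
      obtain ⟨i, _, hi⟩ := ((hqP _).prime.dvd_finset_prod_iff b).mp hdvd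
      exact ⟨i, hi⟩
    choose φ hφd using hφ
    refine ⟨φ, ?_⟩
    set P : Fin h → ℕ := fun i => ∏ j ∈ Finset.univ.filter fun j => φ j = i, q (σ j) with hPdef
    have hP : ∀ i, P i ∣ b i := by
      intro i
      have hinj : ∀ x ∈ Finset.univ.filter fun j => φ j = i,
          ∀ y ∈ Finset.univ.filter fun j => φ j = i,
          q (σ x) = q (σ y) → x = y :=
        fun x _ y _ hxy => (hqSM.comp hσ).injective hxy
      have himg : P i = ∏ p ∈ (Finset.univ.filter fun j => φ j = i).image fun j => q (σ j), p :=
        (Finset.prod_image (f := fun p => p) hinj).symm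
      rw [himg]
      apply Finset.prod_primes_dvd
      · intro p hp
        obtain ⟨j, _, rfl⟩ := Finset.mem_image.mp hp
        exact (hqP _).prime
      · intro p hp
        obtain ⟨j, hj, rfl⟩ := Finset.mem_image.mp hp
        have := hφd j
        rw [(Finset.mem_filter.mp hj).2] at this
        exact this
    have hprodP : ∏ i, P i = n := by
      rw [hPdef, Finset.prod_fiberwise Finset.univ φ (fun j => q (σ j))]
    choose eaux heaux using fun i => hP i
    have hPpos : 0 < ∏ i, P i := by
      rw [hprodP]
      exact Finset.prod_pos fun j _ => (hqP _).pos
    have hee : ∏ i, eaux i = 1 := by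
      have h2 : (∏ i, P i) * (∏ i, eaux i) = (∏ i, P i) * 1 := by
        rw [← Finset.prod_mul_distrib, mul_one]
        rw [hprodP, ← hbprod]
        exact Finset.prod_congr rfl fun i _ => (heaux i).symm
      exact Nat.eq_of_mul_eq_mul_left hPpos h2
    intro i
    have hei : eaux i = 1 :=
      Nat.dvd_one.mp (hee ▸ Finset.dvd_prod_of_mem eaux (Finset.mem_univ i))
    have hbi : b i = P i := by rw [heaux i, hei, mul_one]
    rw [show (∏ j ∈ Finset.univ.filter fun j => φ j = i, q (σ j)) = P i from rfl, ← hbi]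
    exact hbB i
  -- apply Ramsey to the pattern coloring
  have hNE : Nonempty (Fin k → Fin h) := ⟨fun _ => ⟨0, by omega⟩⟩
  set f : (Fin k → ℕ) → (Fin k → Fin h) := fun σ =>
    if hσ : StrictMono σ then (pat σ hσ).choose else fun _ => ⟨0, by omega⟩ with hf
  obtain ⟨e, heSM, φstar, hφstar⟩ := erdos_ramsey (Fin k → Fin h) k f
  set t : ℕ → ℕ := fun r => q (e r) with ht
  have htSM : StrictMono t := hqSM.comp heSM
  have htP : ∀ r, (t r).Prime := fun r => hqP _
  have hstar : ∀ σ : Fin k → ℕ, StrictMono σ → ∀ i,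
      (∏ j ∈ Finset.univ.filter fun j => φstar j = i, t (σ j)) ∈ B := by
    intro σ hσ i
    have hSMc : StrictMono (e ∘ σ) := heSM.comp hσ
    have hc : f (e ∘ σ) = φstar := hφstar σ hσ
    rw [hf] at hc
    simp only [dif_pos hSMc] at hc
    have hspec := (pat (e ∘ σ) hSMc).choose_spec i
    rw [hc] at hspec
    exact hspec
  set s : Fin h → ℕ := fun i => (Finset.univ.filter fun j => φstar j = i).card with hs
  have hsum : ∑ i, s i = k := by
    have hcf := Finset.card_eq_sum_card_fiberwise
      (f := φstar) (s := Finset.univ) (t := Finset.univ) (fun x _ => Finset.mem_univ _)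
    rw [Finset.card_univ, Fintype.card_fin] at hcf
    exact hcf.symm
  set u : ℕ → ℕ := fun r => t ((k+1) * r + k) with hud
  have huSM : StrictMono u := by
    intro a b hab
    apply htSM
    have : (k+1) * a < (k+1) * b := by
      exact mul_lt_mul_of_pos_left hab (by omega)
    omega
  have huP : ∀ r, (u r).Prime := fun r => htP _
  have HYP : ∀ i (X : Finset ℕ), X.card = s i → (∏ r ∈ X, u r) ∈ B := by
    intro i X hX
    rcases Nat.eq_zero_or_pos (s i) with hz | hpos
    · have hX0 : X = ∅ := Finset.card_eq_zero.mp (by rw [hX, hz])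
      have hfib : (Finset.univ.filter fun j => φstar j = i) = ∅ :=
        Finset.card_eq_zero.mp (by rw [← hz])
      have h1 := hstar (fun j => (j : ℕ)) Fin.val_strictMono i
      rw [hfib] at h1
      simpa [hX0] using h1
    · obtain ⟨s', hs'⟩ : ∃ s', s i = s' + 1 := ⟨s i - 1, by omega⟩
      set A := Finset.univ.filter fun j => φstar j = i with hA
      have hAcard : A.card = s' + 1 := by rw [← hs']
      set a : Fin (s'+1) ↪o Fin k := A.orderEmbOfFin hAcard with ha
      have hXcard : X.card = s' + 1 := by rw [hX, hs']
      set mm : Fin (s'+1) ↪o ℕ := X.orderEmbOfFin hXcard with hmm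
      obtain ⟨σ₀, hσ₀SM, hσ₀⟩ := erdos_ext k s' (fun j => ((a j : Fin k) : ℕ))
          (Fin.val_strictMono.comp a.strictMono) (fun j => (a j).isLt)
          (fun j => mm j) mm.strictMono
      have hσSM : StrictMono (fun j : Fin k => σ₀ (j : ℕ)) :=
        hσ₀SM.comp Fin.val_strictMono
      have h1 := hstar _ hσSM i
      have h2 : (∏ j ∈ A, t (σ₀ (j : ℕ))) = ∏ x ∈ X, u x := by
        rw [← prod_oemb A hAcard (fun j => t (σ₀ (j : ℕ))),
            ← prod_oemb X hXcard u]
        apply Finset.prod_congr rfl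
        intro jj _
        rw [show σ₀ ((A.orderEmbOfFin hAcard jj : Fin k) : ℕ) = (k+1) * mm jj + k from hσ₀ jj]
      rw [← h2]
      exact h1
  -- find a big fiber and conclude with the counting lemma
  have hex : ∃ i₁, m + 1 ≤ s i₁ := by
    by_contra hc
    push_neg at hc
    have hle : ∑ i, s i ≤ ∑ _i : Fin h, m :=
      Finset.sum_le_sum fun i _ => by have := hc i; omega
    rw [Finset.sum_const, Finset.card_univ, Fintype.card_fin, smul_eq_mul] at hle
    omega
  obtain ⟨i₁, hi₁⟩ := hex
  by_cases hcase : ∃ i₂, i₂ ≠ i₁ ∧ 1 ≤ s i₂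
  · obtain ⟨i₂, hi₂ne, hi₂⟩ := hcase
    exact erdos_count h B g hg u huSM huP s HYP i₁ i₂ (Ne.symm hi₂ne) hi₂ m (by omega)
  · push_neg at hcase
    have hzero : ∀ i, i ≠ i₁ → s i = 0 := fun i hi => by have := hcase i hi; omega
    have hsi₁ : s i₁ = k := by
      have := Finset.sum_eq_single (s := Finset.univ) (f := s) i₁
        (fun b _ hb => hzero b hb) (fun hni => absurd (Finset.mem_univ i₁) hni)
      rw [hsum] at this
      exact this.symm
    haveI : Nontrivial (Fin h) := by
      obtain ⟨h', rfl⟩ : ∃ h', h = h' + 2 := ⟨h - 2, by omega⟩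
      infer_instance
    obtain ⟨i₂, hi₂ne⟩ := exists_ne i₁
    set s2 : Fin h → ℕ := fun i => if i = i₁ ∨ i = i₂ then k else 0 with hs2
    have HYP2 : ∀ i (X : Finset ℕ), X.card = s2 i → (∏ r ∈ X, u r) ∈ B := by
      intro i X hX
      by_cases hii : i = i₁ ∨ i = i₂
      · rw [hs2] at hX
        simp only [if_pos hii] at hX
        exact HYP i₁ X (by rw [hX, hsi₁])
      · rw [hs2] at hX
        simp only [if_neg hii] at hX
        have hX0 : X = ∅ := Finset.card_eq_zero.mp hX
        have h1 := HYP i₂ ∅ (by rw [Finset.card_empty, hzero i₂ hi₂ne])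
        simpa [hX0] using h1
    refine erdos_count h B g hg u huSM huP s2 HYP2 i₁ i₂ (Ne.symm hi₂ne) ?_ m ?_
    · simp only [hs2, if_pos (Or.inr rfl)]
      omega
    · simp only [hs2, if_pos (Or.inl rfl)]
      omega

end Main
end

section
/- Let B be a set of positive integers such that every sufficiently large positive integer is the product of two elements of B. Then for every m there exists n with at least m ordered representations n = b_1 b_2 with b_1, b_2 ∈ B. -/
open Finset

/-- a divisor of a product of distinct primes is a subproduct -/
lemma subprod_of_dvd (S : Finset ℕ) (hS : ∀ p ∈ S, p.Prime) :
    ∀ d, d ∣ ∏ p ∈ S, p → ∃ A ⊆ S, d = ∏ p ∈ A, p := by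
  induction S using Finset.induction_on with
  | empty => intro d hd; simp at hd; exact ⟨∅, by simp, by simp [hd]⟩
  | @insert q S' hq ih =>
    intro d hd
    rw [Finset.prod_insert hq] at hd
    have hqp : q.Prime := hS q (mem_insert_self q S')
    have hS' : ∀ p ∈ S', p.Prime := fun p hp => hS p (mem_insert_of_mem hp)
    by_cases hqd : q ∣ d
    · obtain ⟨e, rfl⟩ := hqd
      have hq0 : q ≠ 0 := hqp.ne_zero
      have he : e ∣ ∏ p ∈ S', p := (mul_dvd_mul_iff_left hq0).mp hd
      obtain ⟨A, hA, rfl⟩ := ih hS' e he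
      refine ⟨insert q A, Finset.insert_subset_insert q hA, ?_⟩
      rw [Finset.prod_insert (fun h : q ∈ A => hq (hA h))]
    · have hcop : Nat.Coprime q d := (Nat.Prime.coprime_iff_not_dvd hqp).mpr hqd
      have : d ∣ ∏ p ∈ S', p := (Nat.Coprime.dvd_of_dvd_mul_left (Nat.Coprime.symm hcop) hd)
      obtain ⟨A, hA, rfl⟩ := ih hS' d this
      exact ⟨A, hA.trans (Finset.subset_insert q S'), rfl⟩

lemma prime_mem_of_dvd_prod {S : Finset ℕ} (hS : ∀ p ∈ S, p.Prime) {p : ℕ} (hp : p.Prime)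
    (h : p ∣ ∏ q ∈ S, q) : p ∈ S := by
  obtain ⟨q, hq, hdvd⟩ := (Prime.dvd_finset_prod_iff hp.prime _).mp h
  rwa [(Nat.prime_dvd_prime_iff_eq hp (hS q hq)).mp hdvd]

lemma prod_inj_of_primes {S : Finset ℕ} (hS : ∀ p ∈ S, p.Prime) {A A' : Finset ℕ}
    (hA : A ⊆ S) (hA' : A' ⊆ S) (h : ∏ p ∈ A, p = ∏ p ∈ A', p) : A = A' := by
  have key : ∀ (X Y : Finset ℕ), X ⊆ S → Y ⊆ S → ∏ p ∈ X, p = ∏ p ∈ Y, p → X ⊆ Y := by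
    intro X Y hX hY hXY p hp
    have : p ∣ ∏ q ∈ Y, q := hXY ▸ Finset.dvd_prod_of_mem _ hp
    exact prime_mem_of_dvd_prod (fun q hq => hS q (hY hq)) (hS p (hX hp)) this
  exact Finset.Subset.antisymm (key A A' hA hA' h) (key A' A hA' hA h.symm)

theorem inf_ramsey {C : Type} [Finite C] [Nonempty C] : ∀ (k : ℕ) (c : Finset ℕ → C)
    (Y : Set ℕ), Y.Infinite →
    ∃ Z : Set ℕ, Z ⊆ Y ∧ Z.Infinite ∧ ∃ i : C, ∀ s : Finset ℕ, ↑s ⊆ Z → s.card = k → c s = i := by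
  intro k
  induction k with
  | zero =>
    intro c Y hY
    refine ⟨Y, subset_rfl, hY, c ∅, fun s _ hs => ?_⟩
    rw [Finset.card_eq_zero] at hs; rw [hs]
  | succ k ih =>
    intro c Y hY
    -- the one-step extension
    have step : ∀ X : Set ℕ, X.Infinite → ∃ p : ℕ × Set ℕ × C, p.1 ∈ X ∧ p.2.1 ⊆ X ∧
        p.2.1.Infinite ∧ (∀ x ∈ p.2.1, p.1 < x) ∧
        ∀ s : Finset ℕ, ↑s ⊆ p.2.1 → s.card = k → c (insert p.1 s) = p.2.2 := by
      intro X hX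
      obtain ⟨a, ha⟩ := hX.nonempty
      have hX0 : (X ∩ Set.Ioi a).Infinite := by
        have h1 : (X \ Set.Iic a).Infinite := hX.diff (Set.finite_Iic a)
        have : X \ Set.Iic a = X ∩ Set.Ioi a := by
          ext x; simp [Set.mem_diff, Set.mem_Iic, Set.mem_Ioi, not_le]
        rwa [this] at h1
      obtain ⟨Z', hZ'sub, hZ'inf, i, hi⟩ := ih (fun s => c (insert a s)) _ hX0
      exact ⟨(a, Z', i), ha, hZ'sub.trans Set.inter_subset_left,
        hZ'inf, fun x hx => (hZ'sub hx).2, hi⟩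
    -- iterate
    let F : ℕ → {X : Set ℕ // X.Infinite} := fun n => Nat.rec ⟨Y, hY⟩
      (fun _ X => ⟨(step X.1 X.2).choose.2.1, (step X.1 X.2).choose_spec.2.2.1⟩) n
    set a : ℕ → ℕ := fun n => (step (F n).1 (F n).2).choose.1 with ha_def
    set d : ℕ → C := fun n => (step (F n).1 (F n).2).choose.2.2 with hd_def
    have hFsucc : ∀ n, (F (n+1)).1 = (step (F n).1 (F n).2).choose.2.1 := fun n => rfl
    have spec := fun n => (step (F n).1 (F n).2).choose_spec
    have amem : ∀ n, a n ∈ (F n).1 := fun n => (spec n).1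
    have hsub : ∀ n, (F (n+1)).1 ⊆ (F n).1 := fun n => by rw [hFsucc]; exact (spec n).2.1
    have hlt : ∀ n, ∀ x ∈ (F (n+1)).1, a n < x := fun n => by rw [hFsucc]; exact (spec n).2.2.2.1
    have hcol : ∀ n, ∀ s : Finset ℕ, ↑s ⊆ (F (n+1)).1 → s.card = k →
        c (insert (a n) s) = d n := fun n => by rw [hFsucc]; exact (spec n).2.2.2.2
    have chain : ∀ n m, n ≤ m → (F m).1 ⊆ (F n).1 := by
      intro n m hnm
      induction m, hnm using Nat.le_induction with
      | base => exact subset_rfl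
      | succ m hm ihm => exact (hsub m).trans ihm
    have amono : StrictMono a := strictMono_nat_of_lt_succ fun n =>
      hlt n _ (amem (n+1))
    have altgen : ∀ n m, n < m → a n < a m := fun n m h => amono h
    obtain ⟨i, hi⟩ := Finite.exists_infinite_fiber d
    have hfib : (d ⁻¹' {i}).Infinite := Set.infinite_coe_iff.mp hi
    refine ⟨a '' (d ⁻¹' {i}), ?_, hfib.image (Set.injOn_of_injective amono.injective), i, ?_⟩
    · rintro x ⟨n, _, rfl⟩
      exact chain 0 n (Nat.zero_le n) (amem n)
    · intro s hs hcard
      have hne : s.Nonempty := Finset.card_pos.mp (by omega)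
      set x := s.min' hne with hx
      obtain ⟨n, hdn, hxn⟩ := hs (Finset.mem_coe.mpr (s.min'_mem hne))
      have hxs : x ∈ s := s.min'_mem hne
      have hs' : ↑(s.erase x) ⊆ (F (n+1)).1 := by
        intro y hy
        have hys : y ∈ s := Finset.mem_of_mem_erase (Finset.mem_coe.mp hy)
        obtain ⟨m, hdm, hym⟩ := hs hys
        have hxy : x < y := Finset.min'_lt_of_mem_erase_min' s hne (Finset.mem_coe.mp hy)
        have hnm : n < m := by
          by_contra hle
          have : a m ≤ a n := amono.monotone (by omega)
          omega
        rw [← hym]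
        exact chain (n+1) m hnm (amem m)
      have hcard' : (s.erase x).card = k := by
        simp [Finset.card_erase_of_mem hxs, hcard]
      have : c (insert (a n) (s.erase x)) = d n := hcol n _ hs' hcard'
      have hx' : a n = x := hxn
      rw [hx', Finset.insert_erase hxs] at this
      exact this.trans hdn

lemma realization {k : ℕ} (J A : Finset (Fin k)) (hJA : A.card = J.card) :
    ∃ φ : Fin k → ℕ, StrictMono φ ∧ J.image φ = A.image (fun a : Fin k => k * ((a : ℕ) + 1)) := by
  rcases Nat.eq_zero_or_pos J.card with ht0 | htpos
  · have hJ : J = ∅ := Finset.card_eq_zero.mp ht0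
    have hA : A = ∅ := Finset.card_eq_zero.mp (hJA.trans ht0)
    exact ⟨Fin.val, fun a b h => h, by simp [hJ, hA]⟩
  · set t := J.card with ht
    set ι := J.orderEmbOfFin rfl with hι
    set α := A.orderEmbOfFin hJA with hα
    have hJuniv : (univ : Finset (Fin t)).image ι = J := by
      apply Finset.eq_of_subset_of_card_le
      · intro x hx
        obtain ⟨r, _, rfl⟩ := Finset.mem_image.mp hx
        exact Finset.orderEmbOfFin_mem J rfl r
      · rw [Finset.card_image_of_injective _ ι.injective, Finset.card_univ, Fintype.card_fin]
    set s : Fin k → ℕ := fun i => (J.filter (· ≤ i)).card with hs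
    have hscount : ∀ i : Fin k, s i = ((univ : Finset (Fin t)).filter (fun r => ι r ≤ i)).card := by
      intro i
      have himg : J.filter (· ≤ i) = ((univ : Finset (Fin t)).filter (fun r => ι r ≤ i)).image ι := by
        ext x
        simp only [Finset.mem_filter, Finset.mem_image, Finset.mem_univ, true_and]
        constructor
        · rintro ⟨hxJ, hxi⟩
          rw [← hJuniv] at hxJ
          obtain ⟨r, _, rfl⟩ := Finset.mem_image.mp hxJ
          exact ⟨r, hxi, rfl⟩
        · rintro ⟨r, hri, rfl⟩
          exact ⟨Finset.orderEmbOfFin_mem J rfl r, hri⟩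
      show (J.filter (· ≤ i)).card = _
      rw [himg, Finset.card_image_of_injective _ ι.injective]
    have hsb : ∀ i, s i ≤ t := fun i =>
      le_trans (Finset.card_le_card (Finset.filter_subset _ _)) le_rfl
    have hclaim : ∀ (r : Fin t) (i : Fin k), ι r ≤ i ↔ (r : ℕ) < s i := by
      intro r i
      rw [hscount i]
      set R := (univ : Finset (Fin t)).filter (fun r => ι r ≤ i) with hR
      constructor
      · intro h
        have hsub : Finset.Iic r ⊆ R := by
          intro r' hr'
          simp only [hR, Finset.mem_filter, Finset.mem_univ, true_and]
          exact le_trans (ι.monotone (Finset.mem_Iic.mp hr')) h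
        have hcard := Finset.card_le_card hsub
        rw [Fin.card_Iic] at hcard
        omega
      · intro h
        by_contra hc
        have hsub : R ⊆ Finset.Iio r := by
          intro r' hr'
          simp only [hR, Finset.mem_filter, Finset.mem_univ, true_and] at hr'
          rw [Finset.mem_Iio]
          by_contra hge
          push_neg at hge
          exact hc (le_trans (ι.monotone hge) hr')
        have hcard := Finset.card_le_card hsub
        rw [Fin.card_Iio] at hcard
        omega
    have hmemJ : ∀ i : Fin k, i ∈ J → 0 < s i := by
      intro i hi
      have : i ∈ J.filter (· ≤ i) := Finset.mem_filter.mpr ⟨hi, le_rfl⟩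
      exact Finset.card_pos.mpr ⟨i, this⟩
    have hidx : ∀ i : Fin k, 0 < s i → (ι ⟨s i - 1, by have := hsb i; omega⟩ : Fin k) ≤ i := by
      intro i h
      rw [hclaim]
      show s i - 1 < s i
      omega
    have hval : ∀ i : Fin k, i ∈ J → ∀ h : 0 < s i,
        ι ⟨s i - 1, by have := hsb i; omega⟩ = i := by
      intro i hi h
      have hi' : i ∈ (univ : Finset (Fin t)).image ι := by rw [hJuniv]; exact hi
      obtain ⟨r, _, hr⟩ := Finset.mem_image.mp hi'
      have hri : (r : ℕ) < s i := (hclaim r i).mp (le_of_eq hr)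
      have h1 : ι ⟨s i - 1, by have := hsb i; omega⟩ ≤ i := hidx i h
      have h2 : r ≤ (⟨s i - 1, by have := hsb i; omega⟩ : Fin t) := by
        rw [Fin.le_def]
        show (r : ℕ) ≤ s i - 1
        omega
      have h3 := ι.monotone h2
      rw [hr] at h3
      exact le_antisymm h1 h3
    set φ : Fin k → ℕ := fun i =>
      if h : 0 < s i then
        k * ((α ⟨s i - 1, by have := hsb i; omega⟩ : ℕ) + 1)
          + ((i : ℕ) - (ι ⟨s i - 1, by have := hsb i; omega⟩ : ℕ))
      else (i : ℕ) with hφ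
    have hsmono : ∀ i i' : Fin k, i ≤ i' → s i ≤ s i' := by
      intro i i' hii
      apply Finset.card_le_card
      intro x hx
      simp only [Finset.mem_filter] at *
      exact ⟨hx.1, le_trans hx.2 hii⟩
    have hmono : StrictMono φ := by
      intro i i' hii
      have hkpos : 0 < k := i.pos
      have hss : s i ≤ s i' := hsmono i i' (le_of_lt hii)
      have hiilt : (i : ℕ) < (i' : ℕ) := hii
      rw [hφ]
      simp only
      by_cases h1 : 0 < s i
      · have h2 : 0 < s i' := lt_of_lt_of_le h1 hss
        rw [dif_pos h1, dif_pos h2]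
        rcases eq_or_lt_of_le hss with heq | hlt
        · have hfin : (⟨s i - 1, by have := hsb i; omega⟩ : Fin t)
              = ⟨s i' - 1, by have := hsb i'; omega⟩ := by
            apply Fin.ext
            show s i - 1 = s i' - 1
            omega
          have hle : (ι ⟨s i - 1, by have := hsb i; omega⟩ : Fin k) ≤ i := hidx i h1
          rw [Fin.le_def] at hle
          rw [← hfin]
          omega
        · have hα' : (α ⟨s i - 1, by have := hsb i; omega⟩ : ℕ)
              < (α ⟨s i' - 1, by have := hsb i'; omega⟩ : ℕ) := by
            have hlt2 : (⟨s i - 1, by have := hsb i; omega⟩ : Fin t)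
                < ⟨s i' - 1, by have := hsb i'; omega⟩ := by
              rw [Fin.lt_def]
              show s i - 1 < s i' - 1
              omega
            exact α.strictMono hlt2
          have hik : (i : ℕ) < k := i.isLt
          have key : k * ((α ⟨s i - 1, by have := hsb i; omega⟩ : ℕ) + 1) + k
              ≤ k * ((α ⟨s i' - 1, by have := hsb i'; omega⟩ : ℕ) + 1) := by
            calc k * ((α ⟨s i - 1, by have := hsb i; omega⟩ : ℕ) + 1) + k
                = k * ((α ⟨s i - 1, by have := hsb i; omega⟩ : ℕ) + 2) := by ring
              _ ≤ k * ((α ⟨s i' - 1, by have := hsb i'; omega⟩ : ℕ) + 1) :=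
                  Nat.mul_le_mul_left k (by omega)
          omega
      · by_cases h2 : 0 < s i'
        · rw [dif_neg h1, dif_pos h2]
          have hik : (i : ℕ) < k := i.isLt
          have : k ≤ k * ((α ⟨s i' - 1, by have := hsb i'; omega⟩ : ℕ) + 1) :=
            Nat.le_mul_of_pos_right k (by omega)
          omega
        · rw [dif_neg h1, dif_neg h2]
          exact hii
    refine ⟨φ, hmono, ?_⟩
    apply Finset.eq_of_subset_of_card_le
    · intro x hx
      obtain ⟨i, hi, rfl⟩ := Finset.mem_image.mp hx
      have h1 : 0 < s i := hmemJ i hi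
      have h2 : ι ⟨s i - 1, by have := hsb i; omega⟩ = i := hval i hi h1
      apply Finset.mem_image.mpr
      refine ⟨α ⟨s i - 1, by have := hsb i; omega⟩, Finset.orderEmbOfFin_mem A hJA _, ?_⟩
      rw [hφ]
      simp only
      rw [dif_pos h1, h2]
      simp
    · rw [Finset.card_image_of_injective _ hmono.injective,
        Finset.card_image_of_injective _ ]
      · rw [hJA]
      · obtain ⟨i0, _⟩ := Finset.card_pos.mp htpos
        have hkpos : 0 < k := i0.pos
        intro a b hab
        apply Fin.ext
        have : (a : ℕ) + 1 = (b : ℕ) + 1 := Nat.eq_of_mul_eq_mul_left hkpos hab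
        omega

lemma le_choose_of_lt : ∀ {k t : ℕ}, 0 < t → t < k → k ≤ k.choose t := by
  intro k
  induction k with
  | zero => omega
  | succ k ih =>
    intro t h1 h2
    rcases Nat.lt_or_ge t k with hlt | hge
    · obtain ⟨t', rfl⟩ : ∃ t', t = t' + 1 := ⟨t - 1, by omega⟩
      rw [Nat.choose_succ_succ]
      rcases Nat.eq_zero_or_pos t' with h0 | hpos
      · subst h0
        rw [Nat.choose_zero_right, Nat.choose_one_right]
        omega
      · have h3 := ih (t := t') (by omega) (by omega)
        have h4 : 0 < k.choose t'.succ := Nat.choose_pos (by omega)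
        omega
    · have : t = k := by omega
      subst this
      rw [Nat.choose_succ_self_right]

lemma image_univ_orderEmbOfFin {γ : Type*} [LinearOrder γ] (S : Finset γ) {k : ℕ}
    (h : S.card = k) : (univ : Finset (Fin k)).image (S.orderEmbOfFin h) = S := by
  apply Finset.eq_of_subset_of_card_le
  · intro x hx
    obtain ⟨r, _, rfl⟩ := Finset.mem_image.mp hx
    exact Finset.orderEmbOfFin_mem S h r
  · rw [Finset.card_image_of_injective _ (S.orderEmbOfFin h).injective, Finset.card_univ,
      Fintype.card_fin, h]

lemma count_aux (B : Set ℕ) (g : ℕ → ℕ)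
    (hg : ∀ n, g n = {p : ℕ × ℕ | p.1 ∈ B ∧ p.2 ∈ B ∧ p.1 * p.2 = n}.ncard)
    (n : ℕ) (hn : n ≠ 0) (F : Finset (ℕ × ℕ))
    (hF : ∀ p ∈ F, p.1 ∈ B ∧ p.2 ∈ B ∧ p.1 * p.2 = n) : F.card ≤ g n := by
  classical
  rw [hg]
  have hset : {p : ℕ × ℕ | p.1 ∈ B ∧ p.2 ∈ B ∧ p.1 * p.2 = n}
      = ↑((n.divisorsAntidiagonal).filter (fun p => p.1 ∈ B ∧ p.2 ∈ B)) := by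
    ext p
    simp only [Set.mem_setOf_eq, Finset.coe_filter, Nat.mem_divisorsAntidiagonal, hn,
      ne_eq, not_false_eq_true, and_true]
    tauto
  rw [hset, Set.ncard_coe_finset]
  apply Finset.card_le_card
  intro p hp
  obtain ⟨h1, h2, h3⟩ := hF p hp
  simp only [Finset.mem_filter, Nat.mem_divisorsAntidiagonal, hn, ne_eq, not_false_eq_true,
    and_true]
  exact ⟨h3, h1, h2⟩

section ErdosAux

/-- `GoodP B k S I`: the subset of `S` in positions `I` and its complement give a
factorization of `∏ S` into two elements of `B`. -/
def GoodP (B : Set ℕ) (k : ℕ) (S : Finset ℕ) (I : Finset (Fin k)) : Prop :=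
  ∃ h : S.card = k, (∏ p ∈ I.image (S.orderEmbOfFin h), p) ∈ B ∧
    (∏ p ∈ Iᶜ.image (S.orderEmbOfFin h), p) ∈ B

open Classical in
noncomputable def colorP (B : Set ℕ) (k : ℕ) (S : Finset ℕ) : Finset (Fin k) :=
  if h : ∃ I, GoodP B k S I then h.choose else ∅

lemma colorP_spec {B : Set ℕ} {k : ℕ} {S : Finset ℕ} (h : ∃ I, GoodP B k S I) :
    GoodP B k S (colorP B k S) := by
  unfold colorP
  classical
  rw [dif_pos h]
  exact h.choose_spec

end ErdosAux

/-- Erdős's theorem: if every sufficiently large positive integer is a product of two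
elements of `B`, then for every `m` there is an `n` with at least `m` ordered
representations `n = b₁ b₂` with `b₁, b₂ ∈ B`. -/
theorem erdos_multiplicative_basis_order_two
    (B : Set ℕ) (hBpos : ∀ b ∈ B, 0 < b)
    (g : ℕ → ℕ)
    (hg : ∀ n, g n = {p : ℕ × ℕ | p.1 ∈ B ∧ p.2 ∈ B ∧ p.1 * p.2 = n}.ncard)
    (hbasis : ∃ N, ∀ n, N ≤ n → 1 ≤ g n) :
    ∀ m : ℕ, ∃ n : ℕ, m ≤ g n := by
  classical
  obtain ⟨N, hN⟩ := hbasis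
  intro m
  set k := m + 1 with hk
  set Y : Set ℕ := {p : ℕ | p.Prime ∧ N ≤ p} with hYdef
  have hYinf : Y.Infinite := by
    have h2 : ({p : ℕ | p.Prime} \ Set.Iio N).Infinite :=
      Nat.infinite_setOf_prime.diff (Set.finite_Iio N)
    have he : {p : ℕ | p.Prime} \ Set.Iio N = Y := by
      ext x
      simp [hYdef, Set.mem_diff, not_lt]
    rwa [he] at h2
  -- every k-subset of Y admits a good pattern
  have hex : ∀ S : Finset ℕ, ↑S ⊆ Y → S.card = k → ∃ I : Finset (Fin k), GoodP B k S I := by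
    intro S hSY hScard
    have hprime : ∀ p ∈ S, p.Prime := fun p hp => (hSY hp).1
    have hpos : 0 < ∏ p ∈ S, p := Finset.prod_pos (fun p hp => (hprime p hp).pos)
    obtain ⟨q, hq⟩ := Finset.card_pos.mp (show 0 < S.card by omega)
    have hqN : N ≤ q := (hSY hq).2
    have hqle : q ≤ ∏ p ∈ S, p := Nat.le_of_dvd hpos (Finset.dvd_prod_of_mem _ hq)
    have h1 : 1 ≤ g (∏ p ∈ S, p) := hN _ (le_trans hqN hqle)
    rw [hg] at h1
    have hne : {p : ℕ × ℕ | p.1 ∈ B ∧ p.2 ∈ B ∧ p.1 * p.2 = ∏ p ∈ S, p}.Nonempty := by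
      apply Set.nonempty_of_ncard_ne_zero
      omega
    obtain ⟨⟨b1, b2⟩, hb1, hb2, hprod⟩ := hne
    simp only at hb1 hb2 hprod
    obtain ⟨U, hU, rfl⟩ := subprod_of_dvd S hprime b1 ⟨b2, hprod.symm⟩
    have hUpos : 0 < ∏ p ∈ U, p := Finset.prod_pos (fun p hp => (hprime p (hU hp)).pos)
    have hb2' : b2 = ∏ p ∈ S \ U, p := by
      apply Nat.eq_of_mul_eq_mul_left hUpos
      rw [hprod, ← Finset.prod_sdiff hU]
      ring
    set emb := S.orderEmbOfFin hScard with hemb_def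
    have hemb := image_univ_orderEmbOfFin S hScard
    set I := (univ : Finset (Fin k)).filter (fun i => emb i ∈ U) with hIdef
    have hIimg : I.image emb = U := by
      ext x
      simp only [hIdef, Finset.mem_image, Finset.mem_filter, Finset.mem_univ, true_and]
      constructor
      · rintro ⟨i, hiU, rfl⟩
        exact hiU
      · intro hx
        have hxS : x ∈ S := hU hx
        rw [← hemb] at hxS
        obtain ⟨i, _, rfl⟩ := Finset.mem_image.mp hxS
        exact ⟨i, hx, rfl⟩
    have hIcimg : Iᶜ.image emb = S \ U := by
      ext x
      simp only [hIdef, Finset.mem_image, Finset.mem_compl, Finset.mem_filter, Finset.mem_univ,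
        true_and, Finset.mem_sdiff]
      constructor
      · rintro ⟨i, hiU, rfl⟩
        exact ⟨Finset.orderEmbOfFin_mem S hScard i, hiU⟩
      · rintro ⟨hxS, hxU⟩
        rw [← hemb] at hxS
        obtain ⟨i, _, rfl⟩ := Finset.mem_image.mp hxS
        exact ⟨i, hxU, rfl⟩
    exact ⟨I, hScard, by rw [hIimg]; exact hb1, by rw [hIcimg, ← hb2']; exact hb2⟩
  have hcGood : ∀ S : Finset ℕ, ↑S ⊆ Y → S.card = k → GoodP B k S (colorP B k S) :=
    fun S h1 h2 => colorP_spec (hex S h1 h2)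
  obtain ⟨Z, hZY, hZinf, I₀, hI₀⟩ := inf_ramsey k (colorP B k) Y hYinf
  have hGoodZ : ∀ S : Finset ℕ, ↑S ⊆ Z → S.card = k → GoodP B k S I₀ := by
    intro S h1 h2
    have h3 := hcGood S (h1.trans hZY) h2
    rwa [hI₀ S h1 h2] at h3
  haveI : Infinite ↥Z := hZinf.to_subtype
  set y : ℕ → ℕ := fun n => (Nat.orderEmbeddingOfSet Z) n with hy_def
  have hymono : StrictMono y := (Nat.orderEmbeddingOfSet Z).strictMono
  have hymem : ∀ i, y i ∈ Z := by
    intro i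
    have hr := Nat.orderEmbeddingOfSet_range Z
    rw [← hr]
    exact ⟨i, rfl⟩
  have hyprime : ∀ i, (y i).Prime := fun i => (hZY (hymem i)).1
  have hprod_img : ∀ X : Finset ℕ, ∏ p ∈ X.image y, p = ∏ i ∈ X, y i := fun X =>
    Finset.prod_image (fun a _ b _ h => hymono.injective h)
  by_cases hcase : 0 < I₀.card ∧ I₀.card < k
  · -- main case
    obtain ⟨ht1, ht2⟩ := hcase
    set t := I₀.card with htdef
    set v : Fin k → ℕ := fun a => k * ((a : ℕ) + 1) with hv
    set w : Fin k → ℕ := fun a => y (v a) with hw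
    have hvinj : Function.Injective v := by
      intro a b hab
      have hk0 : 0 < k := by omega
      apply Fin.ext
      have h5 : (a : ℕ) + 1 = (b : ℕ) + 1 := Nat.eq_of_mul_eq_mul_left hk0 hab
      omega
    have hwinj : Function.Injective w := fun a b hab => hvinj (hymono.injective hab)
    have hwprime : ∀ a, (w a).Prime := fun a => hyprime _
    have hpw : ∀ X : Finset (Fin k), ∏ p ∈ X.image w, p = ∏ a ∈ X, w a := fun X =>
      Finset.prod_image (fun a _ b _ h => hwinj h)
    have hkey : ∀ (J A : Finset (Fin k)), A.card = J.card →
        ∃ (S : Finset ℕ) (h : S.card = k), ↑S ⊆ Z ∧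
          J.image (S.orderEmbOfFin h) = A.image w := by
      intro J A hJA
      obtain ⟨φ, hφmono, hφimg⟩ := realization J A hJA
      set f : Fin k → ℕ := fun i => y (φ i) with hf
      have hfmono : StrictMono f := hymono.comp hφmono
      set S := (univ : Finset (Fin k)).image f with hS
      have hScard : S.card = k := by
        rw [hS, Finset.card_image_of_injective _ hfmono.injective, Finset.card_univ,
          Fintype.card_fin]
      have hfS : ∀ i, f i ∈ S := fun i => Finset.mem_image_of_mem f (Finset.mem_univ i)
      have hembf : f = S.orderEmbOfFin hScard := Finset.orderEmbOfFin_unique hScard hfS hfmono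
      refine ⟨S, hScard, ?_, ?_⟩
      · intro x hx
        obtain ⟨i, _, rfl⟩ := Finset.mem_image.mp (Finset.mem_coe.mp hx)
        exact hymem (φ i)
      · rw [← hembf, hf]
        calc J.image (fun i => y (φ i)) = (J.image φ).image y := by
              rw [Finset.image_image]; rfl
          _ = (A.image v).image y := by rw [hφimg]
          _ = A.image w := by rw [Finset.image_image]; rfl
    have hmain : ∀ (J A : Finset (Fin k)), A.card = J.card →
        ((J = I₀) ∨ (J = I₀ᶜ)) → (∏ p ∈ A.image w, p) ∈ B := by
      intro J A hJA hJI
      obtain ⟨S, h, hSZ, himg⟩ := hkey J A hJA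
      obtain ⟨h', hB1, hB2⟩ := hGoodZ S hSZ h
      rcases hJI with rfl | rfl
      · rw [← himg]
        exact hB1
      · rw [← himg]
        exact hB2
    set n := ∏ a ∈ (univ : Finset (Fin k)), w a with hn
    set F := (Finset.powersetCard t (univ : Finset (Fin k))).image
        (fun A => ((∏ p ∈ A.image w, p), (∏ p ∈ Aᶜ.image w, p))) with hF
    have hnpos : 0 < n := Finset.prod_pos fun a _ => (hwprime a).pos
    refine ⟨n, le_trans ?_ (count_aux B g hg n hnpos.ne' F ?_)⟩
    · -- m ≤ F.card
      have hFcard : F.card = k.choose t := by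
        rw [hF, Finset.card_image_of_injOn, Finset.card_powersetCard, Finset.card_univ,
          Fintype.card_fin]
        intro A hA A' hA' heq
        have h1 : (∏ p ∈ A.image w, p) = ∏ p ∈ A'.image w, p := congrArg Prod.fst heq
        have hprimes : ∀ p ∈ (univ : Finset (Fin k)).image w, p.Prime := by
          intro p hp
          obtain ⟨a, _, rfl⟩ := Finset.mem_image.mp hp
          exact hwprime a
        have h2 : A.image w = A'.image w :=
          prod_inj_of_primes hprimes
            (Finset.image_subset_image (Finset.subset_univ A))
            (Finset.image_subset_image (Finset.subset_univ A')) h1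
        exact Finset.image_injective hwinj h2
      have hch := le_choose_of_lt ht1 ht2
      omega
    · intro p hp
      rw [hF] at hp
      obtain ⟨A, hA, rfl⟩ := Finset.mem_image.mp hp
      have hAcard : A.card = t := (Finset.mem_powersetCard.mp hA).2
      refine ⟨hmain I₀ A (by rw [hAcard]) (Or.inl rfl),
        hmain I₀ᶜ Aᶜ (by rw [Finset.card_compl, Finset.card_compl, hAcard]) (Or.inr rfl), ?_⟩
      show (∏ p ∈ A.image w, p) * (∏ p ∈ Aᶜ.image w, p) = n
      rw [hpw, hpw, hn]
      exact Finset.prod_mul_prod_compl A w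
  · -- easy case : I₀ = ∅ or I₀ = univ
    have hPB : ∀ S : Finset ℕ, ↑S ⊆ Z → S.card = k → (∏ p ∈ S, p) ∈ B := by
      intro S h1 h2
      obtain ⟨h, hB1, hB2⟩ := hGoodZ S h1 h2
      push_neg at hcase
      rcases Nat.eq_zero_or_pos I₀.card with h0 | hpos
      · have he : I₀ = ∅ := Finset.card_eq_zero.mp h0
        rw [he, Finset.compl_empty, image_univ_orderEmbOfFin S h] at hB2
        exact hB2
      · have hIle : I₀.card ≤ k := by
          have h3 := Finset.card_le_card (Finset.subset_univ I₀)
          rwa [Finset.card_univ, Fintype.card_fin] at h3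
        have hIk : I₀.card = k := by
          have := hcase hpos
          omega
        have he : I₀ = univ := Finset.eq_univ_of_card _ (by rw [hIk, Fintype.card_fin])
        rw [he, image_univ_orderEmbOfFin S h] at hB1
        exact hB1
    set n := ∏ i ∈ Finset.range (2 * k), y i with hn
    set F := (Finset.range (k + 1)).image (fun j =>
      ((∏ i ∈ Finset.Ico j (j + k), y i),
       (∏ i ∈ Finset.range (2 * k) \ Finset.Ico j (j + k), y i))) with hF
    have hnpos : 0 < n := Finset.prod_pos fun i _ => (hyprime i).pos
    have hsub : ∀ j, j ≤ k → Finset.Ico j (j + k) ⊆ Finset.range (2 * k) := by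
      intro j hj i hi
      simp only [Finset.mem_Ico, Finset.mem_range] at *
      omega
    have hIcoprime : ∀ j, ∀ p ∈ (Finset.Ico j (j + k)).image y, p.Prime := by
      intro j p hp
      obtain ⟨i, _, rfl⟩ := Finset.mem_image.mp hp
      exact hyprime i
    refine ⟨n, le_trans ?_ (count_aux B g hg n hnpos.ne' F ?_)⟩
    · -- m ≤ F.card
      have hFcard : F.card = k + 1 := by
        rw [hF, Finset.card_image_of_injOn, Finset.card_range]
        intro j1 hj1 j2 hj2 heq
        simp only [Finset.mem_coe, Finset.mem_range] at hj1 hj2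
        have h1 : (∏ i ∈ Finset.Ico j1 (j1 + k), y i) = ∏ i ∈ Finset.Ico j2 (j2 + k), y i :=
          congrArg Prod.fst heq
        rw [← hprod_img, ← hprod_img] at h1
        have hprimes : ∀ p ∈ (Finset.range (2 * k)).image y, p.Prime := by
          intro p hp
          obtain ⟨i, _, rfl⟩ := Finset.mem_image.mp hp
          exact hyprime i
        have h2 : (Finset.Ico j1 (j1 + k)).image y = (Finset.Ico j2 (j2 + k)).image y :=
          prod_inj_of_primes hprimes
            (Finset.image_subset_image (hsub j1 (by omega)))
            (Finset.image_subset_image (hsub j2 (by omega))) h1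
        have h3 : Finset.Ico j1 (j1 + k) = Finset.Ico j2 (j2 + k) :=
          Finset.image_injective hymono.injective h2
        have hm1 : j1 ∈ Finset.Ico j2 (j2 + k) := by
          rw [← h3]
          simp only [Finset.mem_Ico]
          omega
        have hm2 : j2 ∈ Finset.Ico j1 (j1 + k) := by
          rw [h3]
          simp only [Finset.mem_Ico]
          omega
        simp only [Finset.mem_Ico] at hm1 hm2
        omega
      omega
    · intro p hp
      rw [hF] at hp
      obtain ⟨j, hj, rfl⟩ := Finset.mem_image.mp hp
      simp only [Finset.mem_range] at hj
      have hjk : j ≤ k := by omega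
      refine ⟨?_, ?_, ?_⟩
      · show (∏ i ∈ Finset.Ico j (j + k), y i) ∈ B
        rw [← hprod_img]
        apply hPB
        · intro x hx
          obtain ⟨i, _, rfl⟩ := Finset.mem_image.mp (Finset.mem_coe.mp hx)
          exact hymem i
        · rw [Finset.card_image_of_injective _ hymono.injective, Nat.card_Ico]
          omega
      · show (∏ i ∈ Finset.range (2 * k) \ Finset.Ico j (j + k), y i) ∈ B
        rw [← hprod_img]
        apply hPB
        · intro x hx
          obtain ⟨i, _, rfl⟩ := Finset.mem_image.mp (Finset.mem_coe.mp hx)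
          exact hymem i
        · rw [Finset.card_image_of_injective _ hymono.injective,
            Finset.card_sdiff_of_subset (hsub j hjk), Finset.card_range, Nat.card_Ico]
          omega
      · show (∏ i ∈ Finset.Ico j (j + k), y i) *
            (∏ i ∈ Finset.range (2 * k) \ Finset.Ico j (j + k), y i) = n
        rw [hn, mul_comm]
        exact Finset.prod_sdiff (hsub j hjk)
end

section
/- Let h ≥ 2 and let 𝓑 = (B_1,...,B_h) be an h-tuple of sets of positive integers with representation function g_𝓑(n) = #{(b_1,...,b_h) ∈ B_1 × ... × B_h : b_1 ⋯ b_h = n}. If g_𝓑(n) ≥ 2 for all sufficiently large n, then g_𝓑 is unbounded: for every m there exists n with g_𝓑(n) ≥ m. -/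
open Finset

/-- Infinite Ramsey theorem for colorings of `n`-element finsets of `ℕ`. -/
theorem myRamsey_s11 {κ : Type} [Finite κ] :
    ∀ (n : ℕ) (S : Set ℕ), S.Infinite → ∀ f : Finset ℕ → κ,
    ∃ T : Set ℕ, T ⊆ S ∧ T.Infinite ∧
      ∀ A A' : Finset ℕ, ↑A ⊆ T → ↑A' ⊆ T → A.card = n → A'.card = n → f A = f A' := by
  intro n
  induction n with
  | zero =>
    intro S hS f
    refine ⟨S, subset_rfl, hS, ?_⟩
    intro A A' _ _ hA hA'
    rw [Finset.card_eq_zero] at hA hA'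
    rw [hA, hA']
  | succ n ih =>
    intro S hS f
    have step : ∀ U : Set ℕ, U.Infinite →
        ∃ V : Set ℕ, V ⊆ U ∧ V.Infinite ∧ (∀ v ∈ V, sInf U < v) ∧
          ∀ A A' : Finset ℕ, ↑A ⊆ V → ↑A' ⊆ V → A.card = n → A'.card = n →
            f (insert (sInf U) A) = f (insert (sInf U) A') := by
      intro U hU
      have h1 : (U \ Set.Iic (sInf U)).Infinite := hU.diff (Set.finite_Iic _)
      obtain ⟨V, hVsub, hVinf, hVcol⟩ := ih (U \ Set.Iic (sInf U)) h1
        (fun A => f (insert (sInf U) A))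
      refine ⟨V, fun v hv => ((hVsub hv).1), hVinf, ?_, hVcol⟩
      intro v hv
      have := (hVsub hv).2
      simpa using this
    choose V hVsub hVinf hVgt hVcol using step
    let W : ℕ → {U : Set ℕ // U.Infinite ∧ U ⊆ S} := fun i =>
      Nat.rec ⟨S, hS, subset_rfl⟩
        (fun _ p => ⟨V p.1 p.2.1, hVinf p.1 p.2.1, (hVsub p.1 p.2.1).trans p.2.2⟩) i
    have hWsucc : ∀ i, (W (i+1)).1 = V (W i).1 (W i).2.1 := fun i => rfl
    have hWanti : Antitone (fun i => (W i).1) := by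
      apply antitone_nat_of_succ_le
      intro i
      rw [hWsucc i]
      exact hVsub _ _
    set a : ℕ → ℕ := fun i => sInf (W i).1 with ha
    have hamem : ∀ i, a i ∈ (W i).1 := fun i => Nat.sInf_mem (W i).2.1.nonempty
    have hamono : StrictMono a := by
      apply strictMono_nat_of_lt_succ
      intro i
      have : a (i+1) ∈ V (W i).1 (W i).2.1 := by rw [← hWsucc i]; exact hamem (i+1)
      exact hVgt _ _ _ this
    have hσ : ∀ i : ℕ, ∃ t : Finset ℕ, ↑t ⊆ (W (i+1)).1 ∧ t.card = n := fun i =>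
      (W (i+1)).2.1.exists_subset_card_eq n
    choose σ hσsub hσcard using hσ
    set c : ℕ → κ := fun i => f (insert (a i) (σ i)) with hc
    obtain ⟨c₀, hc₀⟩ := Finite.exists_infinite_fiber c
    have hI : (c ⁻¹' {c₀}).Infinite := Set.infinite_coe_iff.mp hc₀
    refine ⟨a '' (c ⁻¹' {c₀}), ?_, hI.image (hamono.injective.injOn), ?_⟩
    · rintro x ⟨i, _, rfl⟩
      exact (W i).2.2 (hamem i)
    · have key : ∀ A : Finset ℕ, ↑A ⊆ a '' (c ⁻¹' {c₀}) → A.card = n + 1 → f A = c₀ := by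
        intro A hAsub hAcard
        have hne : A.Nonempty := Finset.card_pos.mp (by omega)
        set x := A.min' hne with hx
        have hxA : x ∈ A := A.min'_mem hne
        obtain ⟨i, hiI, hia⟩ := hAsub hxA
        have herase : ↑(A.erase x) ⊆ (W (i+1)).1 := by
          intro y hy
          have hyA : y ∈ A := Finset.mem_of_mem_erase hy
          have hyx : y ≠ x := Finset.ne_of_mem_erase hy
          obtain ⟨j, _, hja⟩ := hAsub hyA
          have hxy : x < y := lt_of_le_of_ne (A.min'_le y hyA) (Ne.symm hyx)
          have hij : i < j := by
            rw [← hia, ← hja] at hxy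
            exact hamono.lt_iff_lt.mp hxy
          have : (W j).1 ⊆ (W (i+1)).1 := hWanti hij
          rw [← hja]
          exact this (hamem j)
        have hecard : (A.erase x).card = n := by
          rw [Finset.card_erase_of_mem hxA, hAcard]
          omega
        have h1 : f A = f (insert (a i) (A.erase x)) := by
          rw [hia, Finset.insert_erase hxA]
        have h2 : f (insert (a i) (A.erase x)) = f (insert (a i) (σ i)) := by
          have := hVcol (W i).1 (W i).2.1 (A.erase x) (σ i)
            (hWsucc i ▸ herase)
            (hWsucc i ▸ hσsub i) hecard (hσcard i)
          exact this
        have h3 : f (insert (a i) (σ i)) = c₀ := hiI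
        rw [h1, h2, h3]
      intro A A' hA hA' hAc hA'c
      rw [key A hA hAc, key A' hA' hA'c]


/-- Iterated Ramsey: uniformize all levels `j ≤ K` simultaneously. -/
theorem myRamseyIter {κ : Type} [Finite κ] (K : ℕ) (S : Set ℕ) (hS : S.Infinite)
    (f : Finset ℕ → κ) :
    ∃ T : Set ℕ, T ⊆ S ∧ T.Infinite ∧
      ∀ j, j ≤ K → ∀ A A' : Finset ℕ, ↑A ⊆ T → ↑A' ⊆ T →
        A.card = j → A'.card = j → f A = f A' := by
  induction K with
  | zero =>
    obtain ⟨T, h1, h2, h3⟩ := myRamsey_s11 0 S hS f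
    exact ⟨T, h1, h2, fun j hj => by rw [Nat.le_zero.mp hj]; exact h3⟩
  | succ K ihK =>
    obtain ⟨T, hT1, hT2, hT3⟩ := ihK
    obtain ⟨T', h1, h2, h3⟩ := myRamsey_s11 (K+1) T hT2 f
    refine ⟨T', h1.trans hT1, h2, ?_⟩
    intro j hj A A' hA hA' hAc hA'c
    rcases Nat.lt_or_ge j (K+1) with hlt | hge
    · exact hT3 j (by omega) A A' (hA.trans h1) (hA'.trans h1) hAc hA'c
    · have : j = K + 1 := by omega
      subst this
      exact h3 A A' hA hA' hAc hA'c

/-- A product of distinct primes is squarefree. -/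
theorem squarefree_prod_of_primes (A : Finset ℕ) (hA : ∀ p ∈ A, p.Prime) :
    Squarefree (∏ p ∈ A, p) := by
  induction A using Finset.cons_induction with
  | empty => simp only [Finset.prod_empty]; exact squarefree_one
  | cons a t hat ih =>
    rw [Finset.prod_cons]
    have hap : a.Prime := hA a (Finset.mem_cons_self a t)
    have hA' : ∀ p ∈ t, p.Prime := fun p hp => hA p (Finset.mem_cons_of_mem hp)
    rw [Nat.squarefree_mul_iff]
    refine ⟨?_, hap.squarefree, ih hA'⟩
    rw [Nat.Prime.coprime_iff_not_dvd hap]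
    intro hdvd
    obtain ⟨p, hp, hap'⟩ := (Nat.Prime.prime hap).exists_mem_finset_dvd hdvd
    have := ((hA' p hp).dvd_iff_eq hap.ne_one).mp hap'
    · exact hat (this ▸ hp)

/-- Representations of a prime: one coordinate is `p`, the rest are `1`. -/
theorem prime_rep_structure {h : ℕ} (p : ℕ) (hp : p.Prime) (b : Fin h → ℕ)
    (hbpos : ∀ i, 0 < b i) (hprod : ∏ i, b i = p) :
    ∃ ℓ, b ℓ = p ∧ ∀ i, i ≠ ℓ → b i = 1 := by
  have hpd : p ∣ ∏ i, b i := hprod ▸ dvd_rfl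
  obtain ⟨ℓ, _, hℓ⟩ := (Nat.Prime.prime hp).exists_mem_finset_dvd hpd
  have hbl : b ℓ = p := Nat.dvd_antisymm (hprod ▸ Finset.dvd_prod_of_mem b (Finset.mem_univ ℓ)) hℓ
  refine ⟨ℓ, hbl, ?_⟩
  have hsplit : b ℓ * ∏ i ∈ Finset.univ.erase ℓ, b i = p := by
    rw [Finset.mul_prod_erase Finset.univ b (Finset.mem_univ ℓ)]
    exact hprod
  rw [hbl] at hsplit
  have hrest : ∏ i ∈ Finset.univ.erase ℓ, b i = 1 := by
    have hp0 : 0 < p := hp.pos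
    exact Nat.eq_of_mul_eq_mul_left hp0 (by rw [hsplit, Nat.mul_one])
  intro i hi
  have : b i ∣ ∏ j ∈ Finset.univ.erase ℓ, b j :=
    Finset.dvd_prod_of_mem b (Finset.mem_erase.mpr ⟨hi, Finset.mem_univ i⟩)
  rw [hrest] at this
  exact Nat.dvd_one.mp this
/-- Main theorem: if `𝓑 = (B 1, …, B h)` is an `h`-tuple of sets of positive integers
(`h ≥ 2`) whose representation function `g` satisfies `g n ≥ 2` for all sufficiently
large `n`, then `g` is unbounded. -/
theorem multiplicative_system_two_implies_unbounded (h : ℕ) (hh : 2 ≤ h)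
    (B : Fin h → Set ℕ) (hBpos : ∀ i, ∀ b ∈ B i, 0 < b)
    (g : ℕ → ℕ)
    (hg : ∀ n, g n = {b : Fin h → ℕ | (∀ i, b i ∈ B i) ∧ ∏ i, b i = n}.ncard)
    (hbig : ∃ N, ∀ n, N ≤ n → 2 ≤ g n) :
    ∀ m : ℕ, ∃ n : ℕ, m ≤ g n := by
  classical
  by_contra hcon
  push_neg at hcon
  obtain ⟨m, hm⟩ := hcon
  obtain ⟨N, hN⟩ := hbig
  have hm1 : 1 ≤ m := by have := hm 0; omega
  -- finiteness of representation sets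
  have hfin : ∀ n : ℕ, 0 < n →
      {b : Fin h → ℕ | (∀ i, b i ∈ B i) ∧ ∏ i, b i = n}.Finite := by
    intro n hn
    apply Set.Finite.subset (Set.Finite.pi (fun _ : Fin h => Set.finite_Iic n))
    intro b hb
    rw [Set.mem_univ_pi]
    intro i
    have hd : b i ∣ n := hb.2 ▸ Finset.dvd_prod_of_mem b (Finset.mem_univ i)
    exact Nat.le_of_dvd hn hd
  -- infinitely many primes ≥ N
  have hP : ({p : ℕ | p.Prime} \ Set.Iio N).Infinite :=
    Nat.infinite_setOf_prime.diff (Set.finite_Iio N)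
  -- Ramsey uniformization with colors = membership pattern of products
  obtain ⟨T, hTsub, hTinf, hTuni⟩ := myRamseyIter (h*m) _ hP
    (fun A : Finset ℕ => fun i : Fin h => decide ((∏ p ∈ A, p) ∈ B i))
  have hTprime : ∀ p ∈ T, p.Prime := fun p hp => (hTsub hp).1
  have hTge : ∀ p ∈ T, N ≤ p := by
    intro p hp
    have := (hTsub hp).2
    simp only [Set.mem_Iio, not_lt] at this
    exact this
  have huni : ∀ j, j ≤ h*m → ∀ A A' : Finset ℕ, ↑A ⊆ T → ↑A' ⊆ T →
      A.card = j → A'.card = j →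
      ∀ i, (∏ p ∈ A, p) ∈ B i → (∏ p ∈ A', p) ∈ B i := by
    intro j hj A A' hA hA' hAc hA'c i hmem
    have hcol := congrFun (hTuni j hj A A' hA hA' hAc hA'c) i
    rw [decide_eq_decide] at hcol
    exact hcol.mp hmem
  -- two distinct representations of any large n
  have htwo : ∀ n, N ≤ n → 0 < n → ∃ b b' : Fin h → ℕ,
      ((∀ i, b i ∈ B i) ∧ ∏ i, b i = n) ∧ ((∀ i, b' i ∈ B i) ∧ ∏ i, b' i = n) ∧ b ≠ b' := by
    intro n hn hnp
    have h2 := hN n hn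
    rw [hg n] at h2
    obtain ⟨b, b', hb, hb', hne⟩ :=
      Set.one_lt_ncard_iff (hfin n hnp) |>.mp (lt_of_lt_of_le one_lt_two h2)
    exact ⟨b, b', hb, hb', hne⟩
  -- base prime facts: 1 ∈ every B i, and two indices whose B contains a prime of T
  obtain ⟨p0, hp0T⟩ := hTinf.nonempty
  have hp0p : p0.Prime := hTprime _ hp0T
  obtain ⟨b, b', ⟨hbB, hbprod⟩, ⟨hb'B, hb'prod⟩, hbne⟩ :=
    htwo p0 (hTge _ hp0T) hp0p.pos
  obtain ⟨ℓ1, hℓ1, hrest1⟩ :=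
    prime_rep_structure p0 hp0p b (fun i => hBpos i _ (hbB i)) hbprod
  obtain ⟨ℓ2, hℓ2, hrest2⟩ :=
    prime_rep_structure p0 hp0p b' (fun i => hBpos i _ (hb'B i)) hb'prod
  have hℓne : ℓ1 ≠ ℓ2 := by
    intro hEq
    apply hbne
    funext i
    by_cases hi : i = ℓ1
    · rw [hi, hℓ1, hEq, hℓ2]
    · rw [hrest1 i hi, hrest2 i (fun hc => hi (hc.trans hEq.symm))]
  have hone : ∀ i, (1:ℕ) ∈ B i := by
    intro i
    by_cases hi : i = ℓ1
    · have := hb'B i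
      rw [hrest2 i (by rw [hi]; exact hℓne)] at this
      exact this
    · have := hbB i
      rw [hrest1 i hi] at this
      exact this
  have hp0B1 : p0 ∈ B ℓ1 := hℓ1 ▸ hbB ℓ1
  have hp0B2 : p0 ∈ B ℓ2 := hℓ2 ▸ hb'B ℓ2
  have h1K : 1 ≤ h*m := by nlinarith
  -- singleton uniformity
  have hsingle : ∀ q ∈ T, q ∈ B ℓ1 ∧ q ∈ B ℓ2 := by
    intro q hq
    have hsub1 : (↑({p0} : Finset ℕ) : Set ℕ) ⊆ T := by simpa using hp0T
    have hsub2 : (↑({q} : Finset ℕ) : Set ℕ) ⊆ T := by simpa using hq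
    constructor
    · have := huni 1 h1K {p0} {q} hsub1 hsub2 (Finset.card_singleton _)
        (Finset.card_singleton _) ℓ1 (by simpa using hp0B1)
      simpa using this
    · have := huni 1 h1K {p0} {q} hsub1 hsub2 (Finset.card_singleton _)
        (Finset.card_singleton _) ℓ2 (by simpa using hp0B2)
      simpa using this
  -- a big squarefree number
  obtain ⟨A, hAsub, hAcard⟩ := hTinf.exists_subset_card_eq (h*m)
  have hAprime : ∀ p ∈ A, p.Prime := fun p hp => hTprime p (hAsub hp)
  have hn₀pos : 0 < ∏ p ∈ A, p := Finset.prod_pos (fun p hp => (hAprime p hp).pos)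
  have hAne : A.Nonempty := Finset.card_pos.mp (by rw [hAcard]; nlinarith)
  obtain ⟨p1, hp1A⟩ := hAne
  have hn₀N : N ≤ ∏ p ∈ A, p :=
    le_trans (hTge p1 (hAsub hp1A)) (Nat.le_of_dvd hn₀pos (Finset.dvd_prod_of_mem _ hp1A))
  have h2' := hN _ hn₀N
  rw [hg] at h2'
  obtain ⟨c, hcB, hcprod⟩ := Set.nonempty_of_ncard_ne_zero (s :=
    {b : Fin h → ℕ | (∀ i, b i ∈ B i) ∧ ∏ i, b i = ∏ p ∈ A, p}) (lt_of_lt_of_le two_pos h2').ne'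
  -- decompose the representation c into blocks of primes
  have hsq : Squarefree (∏ p ∈ A, p) := squarefree_prod_of_primes A hAprime
  set S : Fin h → Finset ℕ := fun i => (c i).primeFactors with hS
  have hcd : ∀ i, c i ∣ ∏ p ∈ A, p :=
    fun i => hcprod ▸ Finset.dvd_prod_of_mem c (Finset.mem_univ i)
  have hcsq : ∀ i, Squarefree (c i) := fun i => Squarefree.squarefree_of_dvd (hcd i) hsq
  have hSprod : ∀ i, ∏ p ∈ S i, p = c i := fun i => Nat.prod_primeFactors_of_squarefree (hcsq i)
  have hSsub : ∀ i, S i ⊆ A := by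
    intro i
    have hmono : (c i).primeFactors ⊆ (∏ p ∈ A, p).primeFactors :=
      Nat.primeFactors_mono (hcd i) hn₀pos.ne'
    rwa [Nat.primeFactors_prod hAprime] at hmono
  have hSdisj : ∀ i j : Fin h, i ≠ j → Disjoint (S i) (S j) := by
    intro i j hij
    rw [Finset.disjoint_left]
    intro p hpi hpj
    have hpp : p.Prime := Nat.prime_of_mem_primeFactors hpi
    have hd1 : p ∣ c i := Nat.dvd_of_mem_primeFactors hpi
    have hd2 : p ∣ c j := Nat.dvd_of_mem_primeFactors hpj
    have hcij : c i * c j ∣ ∏ p ∈ A, p := by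
      rw [← hcprod, ← Finset.mul_prod_erase Finset.univ c (Finset.mem_univ i)]
      exact mul_dvd_mul_left (c i)
        (Finset.dvd_prod_of_mem c (Finset.mem_erase.mpr ⟨Ne.symm hij, Finset.mem_univ j⟩))
    exact hpp.prime.not_unit (hsq p (dvd_trans (mul_dvd_mul hd1 hd2) hcij))
  have hUnion : Finset.univ.biUnion S = A := by
    have hpd : Set.PairwiseDisjoint (↑(Finset.univ : Finset (Fin h))) S := by
      intro i _ j _ hij
      exact hSdisj i j hij
    have hprodU : ∏ p ∈ Finset.univ.biUnion S, p = ∏ p ∈ A, p := by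
      rw [Finset.prod_biUnion hpd]
      simp only [hSprod]
      exact hcprod
    have hbUprime : ∀ p ∈ Finset.univ.biUnion S, p.Prime := by
      intro p hp
      rw [Finset.mem_biUnion] at hp
      obtain ⟨i, _, hpi⟩ := hp
      exact Nat.prime_of_mem_primeFactors hpi
    calc Finset.univ.biUnion S
        = (∏ p ∈ Finset.univ.biUnion S, p).primeFactors :=
          (Nat.primeFactors_prod hbUprime).symm
      _ = (∏ p ∈ A, p).primeFactors := by rw [hprodU]
      _ = A := Nat.primeFactors_prod hAprime
  have hcardsum : ∑ i, (S i).card = h * m := by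
    rw [← Finset.card_biUnion (fun i _ j _ hij => hSdisj i j hij), hUnion, hAcard]
  -- pigeonhole: some block has ≥ m primes
  have hbigblock : ∃ ℓ, m ≤ (S ℓ).card := by
    by_contra hno
    push_neg at hno
    have hsum : ∑ i, ((S i).card + 1) ≤ ∑ _i : Fin h, m :=
      Finset.sum_le_sum (fun i _ => Nat.succ_le_of_lt (hno i))
    rw [Finset.sum_add_distrib, hcardsum, Finset.sum_const, Finset.sum_const,
      Finset.card_univ, Fintype.card_fin, smul_eq_mul, smul_eq_mul, mul_one] at hsum
    exact absurd hsum (Nat.not_le.mpr (Nat.lt_add_of_pos_right (lt_of_lt_of_le two_pos hh)))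
  obtain ⟨ℓs, hℓs⟩ := hbigblock
  have hjK : (S ℓs).card ≤ h*m := hAcard ▸ Finset.card_le_card (hSsub ℓs)
  -- a coordinate ℓ0 ≠ ℓs containing all primes of T
  have hℓ0 : ∃ ℓ0, ℓ0 ≠ ℓs ∧ ∀ q ∈ T, q ∈ B ℓ0 := by
    by_cases h12 : ℓ1 = ℓs
    · exact ⟨ℓ2, by rw [← h12]; exact (Ne.symm hℓne), fun q hq => (hsingle q hq).2⟩
    · exact ⟨ℓ1, h12, fun q hq => (hsingle q hq).1⟩
  obtain ⟨ℓ0, hℓ0ne, hℓ0single⟩ := hℓ0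
  -- final configuration
  obtain ⟨A', hA'sub, hA'card⟩ := hTinf.exists_subset_card_eq ((S ℓs).card + 1)
  have hA'prime : ∀ p ∈ A', p.Prime := fun p hp => hTprime p (hA'sub hp)
  have hn'pos : 0 < ∏ p ∈ A', p := Finset.prod_pos (fun p hp => (hA'prime p hp).pos)
  set F : ℕ → (Fin h → ℕ) := fun a i =>
    if i = ℓ0 then a else if i = ℓs then ∏ p ∈ A'.erase a, p else 1 with hF
  have hFrep : ∀ a ∈ A',
      F a ∈ {b : Fin h → ℕ | (∀ i, b i ∈ B i) ∧ ∏ i, b i = ∏ p ∈ A', p} := by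
    intro a ha
    have herasesub : (↑(A'.erase a) : Set ℕ) ⊆ T :=
      le_trans (Finset.coe_subset.mpr (Finset.erase_subset a A')) hA'sub
    have herasecard : (A'.erase a).card = (S ℓs).card := by
      rw [Finset.card_erase_of_mem ha, hA'card]
      exact rfl
    constructor
    · intro i
      by_cases h0 : i = ℓ0
      · simp only [hF, h0, if_pos rfl]
        exact hℓ0single a (hA'sub ha)
      · by_cases hs : i = ℓs
        · have hFi : F a i = ∏ p ∈ A'.erase a, p := by
            rw [hF]
            simp [hs, Ne.symm hℓ0ne]
          rw [hFi, hs]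
          refine huni (S ℓs).card hjK (S ℓs) (A'.erase a)
            (le_trans (Finset.coe_subset.mpr (hSsub ℓs)) hAsub) herasesub
            rfl herasecard ℓs ?_
          rw [hSprod]
          exact hcB ℓs
        · simp only [hF, if_neg h0, if_neg hs]
          exact hone i
    · rw [← Finset.mul_prod_erase Finset.univ (F a) (Finset.mem_univ ℓ0),
        ← Finset.mul_prod_erase (Finset.univ.erase ℓ0) (F a)
          (Finset.mem_erase.mpr ⟨Ne.symm hℓ0ne, Finset.mem_univ ℓs⟩)]
      have hv1 : F a ℓ0 = a := by simp [hF]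
      have hv2 : F a ℓs = ∏ p ∈ A'.erase a, p := by
        simp [hF, Ne.symm hℓ0ne]
      have hv3 : ∏ i ∈ (Finset.univ.erase ℓ0).erase ℓs, F a i = 1 := by
        apply Finset.prod_eq_one
        intro i hi
        rw [Finset.mem_erase, Finset.mem_erase] at hi
        simp [hF, hi.2.1, hi.1]
      rw [hv1, hv2, hv3, mul_one]
      exact Finset.mul_prod_erase A' (fun p => p) ha
  have hFinj : Set.InjOn F ↑A' := by
    intro x _ y _ hxy
    have := congrFun hxy ℓ0
    simpa [hF] using this
  have hsubset : F '' ↑A' ⊆ {b : Fin h → ℕ | (∀ i, b i ∈ B i) ∧ ∏ i, b i = ∏ p ∈ A', p} := by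
    rintro _ ⟨a, ha, rfl⟩
    exact hFrep a ha
  have hcard : (F '' ↑A').ncard = (S ℓs).card + 1 := by
    rw [Set.ncard_image_of_injOn hFinj, Set.ncard_coe_finset, hA'card]
  have hle := Set.ncard_le_ncard hsubset (hfin _ hn'pos)
  have hgn' := hm (∏ p ∈ A', p)
  rw [hg] at hgn'
  rw [hcard] at hle
  exact Nat.lt_asymm (lt_of_lt_of_le (lt_of_lt_of_le (Nat.lt_succ_self m)
    (Nat.succ_le_succ hℓs)) hle) hgn'
end

section
/- Let h ≥ 2, t ≥ 1, and define B_1 = ℕ (positive integers), B_2 = {2^k : 0 ≤ k ≤ t−1}, and B_i = {1} for 3 ≤ i ≤ h. For n = 2^{ℓ−1} m with m odd and ℓ ≥ 1, the number of ordered h-tuples (b_1,...,b_h) ∈ B_1 × ... × B_h with n = b_1 ⋯ b_h equals min(ℓ, t). Consequently liminf g_𝓑 = 1 and limsup g_𝓑 = t. -/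
/-- The construction achieving `(liminf, limsup) = (1, t)`: let `h ≥ 2`, `t ≥ 1`,
`B 1 = ℕ` (positive integers), `B 2 = {2^k : 0 ≤ k ≤ t-1}` and `B i = {1}` for `i ≥ 3`.
Then `g (2^(ℓ-1) m) = min ℓ t` for `m` odd and `ℓ ≥ 1`, and
`liminf g = 1`, `limsup g = t`. -/
theorem liminf_one_limsup_t_construction (h t : ℕ) (hh : 2 ≤ h) (ht : 1 ≤ t)
    (B : Fin h → Set ℕ)
    (hB : ∀ i : Fin h, B i =
      if (i : ℕ) = 0 then {m : ℕ | 0 < m}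
      else if (i : ℕ) = 1 then {m : ℕ | ∃ k < t, m = 2 ^ k}
      else {1})
    (g : ℕ → ℕ)
    (hg : ∀ n, g n = {b : Fin h → ℕ | (∀ i, b i ∈ B i) ∧ ∏ i, b i = n}.ncard) :
    (∀ ℓ m : ℕ, 1 ≤ ℓ → Odd m → g (2 ^ (ℓ - 1) * m) = min ℓ t) ∧
    Filter.liminf g Filter.atTop = 1 ∧
    Filter.limsup g Filter.atTop = t := by
  classical
  have hi0 : (0:ℕ) < h := by omega
  have hi1 : (1:ℕ) < h := by omega
  set i0 : Fin h := ⟨0, hi0⟩ with hi0def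
  set i1 : Fin h := ⟨1, hi1⟩ with hi1def
  have hne : i0 ≠ i1 := by simp [hi0def, hi1def, Fin.ext_iff]
  -- product of a tuple that is 1 away from i0, i1
  have prodeq : ∀ b : Fin h → ℕ, (∀ i : Fin h, 2 ≤ (i:ℕ) → b i = 1) →
      ∏ i, b i = b i0 * b i1 := by
    intro b hb
    have hsub : ({i0, i1} : Finset (Fin h)) ⊆ Finset.univ := Finset.subset_univ _
    rw [← Finset.prod_sdiff hsub]
    have h1 : ∏ i ∈ Finset.univ \ {i0, i1}, b i = 1 := by
      apply Finset.prod_eq_one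
      intro i hi
      simp only [Finset.mem_sdiff, Finset.mem_univ, Finset.mem_insert,
        Finset.mem_singleton, true_and, hi0def, hi1def, Fin.ext_iff] at hi
      exact hb i (by push_neg at hi; omega)
    rw [h1, one_mul, Finset.prod_pair hne]
  have key : ∀ ℓ m : ℕ, 1 ≤ ℓ → Odd m → g (2 ^ (ℓ - 1) * m) = min ℓ t := by
    intro ℓ m hℓ hm
    rw [hg]
    have hmpos : 0 < m := hm.pos
    set F : ℕ → (Fin h → ℕ) := fun k i =>
      if (i : ℕ) = 0 then 2 ^ (ℓ - 1 - k) * m else if (i : ℕ) = 1 then 2 ^ k else 1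
      with hF
    have hSeq : {b : Fin h → ℕ | (∀ i, b i ∈ B i) ∧ ∏ i, b i = 2 ^ (ℓ - 1) * m}
        = F '' (Set.Iio (min ℓ t)) := by
      ext b
      constructor
      · rintro ⟨hb, hprod⟩
        have hb0 : 0 < b i0 := by
          have := hb i0; rw [hB i0] at this; simpa [hi0def] using this
        have hb1 : ∃ k < t, b i1 = 2 ^ k := by
          have := hb i1; rw [hB i1] at this; simpa [hi1def] using this
        obtain ⟨k, hkt, hbk⟩ := hb1
        have hrest : ∀ i : Fin h, 2 ≤ (i:ℕ) → b i = 1 := by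
          intro i hi
          have := hb i; rw [hB i] at this
          simpa [show (i:ℕ) ≠ 0 by omega, show (i:ℕ) ≠ 1 by omega] using this
        rw [prodeq b hrest, hbk] at hprod
        have hdvd : 2 ^ k ∣ 2 ^ (ℓ - 1) * m := ⟨b i0, by rw [← hprod]; ring⟩
        have hcop : Nat.Coprime (2 ^ k) m := by
          apply Nat.Coprime.pow_left
          exact hm.coprime_two_left
        have hdvd2 : 2 ^ k ∣ 2 ^ (ℓ - 1) :=
          (Nat.Coprime.dvd_of_dvd_mul_right hcop hdvd)
        have hkl : k ≤ ℓ - 1 := (Nat.pow_dvd_pow_iff_le_right one_lt_two).mp hdvd2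
        refine ⟨k, Set.mem_Iio.mpr (lt_min (lt_of_le_of_lt hkl (Nat.sub_lt hℓ one_pos)) hkt), ?_⟩
        have hb0eq : b i0 = 2 ^ (ℓ - 1 - k) * m := by
          have hexp : ℓ - 1 - k + k = ℓ - 1 := by omega
          have h2 : b i0 * 2 ^ k = (2 ^ (ℓ - 1 - k) * m) * 2 ^ k := by
            rw [hprod, mul_comm (2 ^ (ℓ - 1 - k)) m, mul_assoc, ← pow_add, hexp,
              mul_comm]
          exact Nat.eq_of_mul_eq_mul_right (pow_pos (by norm_num) k) h2
        funext i
        rcases Nat.lt_or_ge (i : ℕ) 2 with hlt | hge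
        · interval_cases hiv : (i : ℕ)
          · have : i = i0 := by simp [hi0def, Fin.ext_iff, hiv]
            rw [this, hb0eq]; simp [hF, hi0def]
          · have : i = i1 := by simp [hi1def, Fin.ext_iff, hiv]
            rw [this, hbk]; simp [hF, hi1def]
        · rw [hrest i hge]
          simp [hF, show (i:ℕ) ≠ 0 by omega, show (i:ℕ) ≠ 1 by omega]
      · rintro ⟨k, hk, rfl⟩
        simp only [Set.mem_Iio, lt_min_iff] at hk
        constructor
        · intro i
          rw [hB i]
          rcases Nat.lt_or_ge (i : ℕ) 2 with hlt | hge
          · interval_cases hiv : (i : ℕ)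
            · simp [hF, hiv, Nat.pos_of_ne_zero, hmpos]
            · simp only [hF, hiv]
              norm_num
              exact hk.2
          · simp [hF, show (i:ℕ) ≠ 0 by omega, show (i:ℕ) ≠ 1 by omega]
        · have hrest : ∀ i : Fin h, 2 ≤ (i:ℕ) → F k i = 1 := by
            intro i hge
            simp [hF, show (i:ℕ) ≠ 0 by omega, show (i:ℕ) ≠ 1 by omega]
          rw [prodeq _ hrest]
          simp only [hF, hi0def, hi1def]
          norm_num
          have hexp : ℓ - 1 - k + k = ℓ - 1 := by omega
          rw [mul_comm (2 ^ (ℓ - 1 - k)) m, mul_assoc, ← pow_add, hexp, mul_comm]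
    rw [hSeq, Set.ncard_image_of_injOn, ← Finset.coe_range,
      Set.ncard_coe_finset, Finset.card_range]
    · intro a _ b _ hab
      have := congrFun hab i1
      simp only [hF, hi1def] at this
      norm_num at this
      exact this
  -- auxiliary: formula for g n when n ≥ 1
  have gform : ∀ n : ℕ, 1 ≤ n → ∃ k : ℕ, g n = min (k + 1) t := by
    intro n hn
    obtain ⟨k, m, hm, rfl⟩ := Nat.exists_eq_pow_mul_and_not_dvd
      (show n ≠ 0 by omega) 2 (by norm_num)
    refine ⟨k, ?_⟩
    have hodd : Odd m := Nat.odd_iff.mpr (by omega)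
    have := key (k + 1) m (by omega) hodd
    simpa using this
  have glb : ∀ᶠ n in Filter.atTop, 1 ≤ g n := by
    filter_upwards [Filter.eventually_ge_atTop 1] with n hn
    obtain ⟨k, hk⟩ := gform n hn
    omega
  have gub : ∀ᶠ n in Filter.atTop, g n ≤ t := by
    filter_upwards [Filter.eventually_ge_atTop 1] with n hn
    obtain ⟨k, hk⟩ := gform n hn
    omega
  have hbdd : Filter.IsBoundedUnder (· ≤ ·) Filter.atTop g := ⟨t, gub⟩
  have gfreq1 : ∃ᶠ n in Filter.atTop, g n ≤ 1 := by
    rw [Filter.frequently_atTop]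
    intro N
    refine ⟨2 * N + 1, by omega, ?_⟩
    have := key 1 (2 * N + 1) le_rfl ⟨N, by ring⟩
    simp at this
    omega
  have gfreqt : ∃ᶠ n in Filter.atTop, t ≤ g n := by
    rw [Filter.frequently_atTop]
    intro N
    refine ⟨2 ^ (t - 1) * (2 * N + 1), ?_, ?_⟩
    · have h1 : 1 ≤ 2 ^ (t - 1) := Nat.one_le_two_pow
      calc N ≤ 2 * N + 1 := by omega
        _ = 1 * (2 * N + 1) := by ring
        _ ≤ 2 ^ (t - 1) * (2 * N + 1) := by
            exact Nat.mul_le_mul_right _ h1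
    · have := key t (2 * N + 1) ht ⟨N, by ring⟩
      omega
  refine ⟨key, ?_, ?_⟩
  · exact le_antisymm (Filter.liminf_le_of_frequently_le gfreq1)
      (Filter.le_liminf_of_le hbdd.isCoboundedUnder_ge glb)
  · exact le_antisymm (Filter.limsup_le_of_le (by isBoundedDefault) gub)
      (Filter.le_limsup_of_frequently_le gfreqt hbdd)
end

section
/- Let h ≥ 2 and 2 ≤ s ≤ h. Define B_1 = ℕ, B_i = P ∪ {1} (primes together with 1) for 2 ≤ i ≤ s, and B_i = {1} for s < i ≤ h. Then g_𝓑(p) = s for every prime p, g_𝓑(n) ≥ s for all n ≥ 2, and if n has k distinct prime factors then g_𝓑(n) ≥ k. Consequently liminf g_𝓑 = s and limsup g_𝓑 = ∞. -/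
lemma prod_two_ite_aux {h : ℕ} (a z : Fin h) (haz : a ≠ z) (u v : ℕ) :
    ∏ i, (if i = a then u else if i = z then v else 1) = u * v := by
  have heq : ∀ i : Fin h, (if i = a then u else if i = z then v else 1)
      = (if i = a then u else 1) * (if i = z then v else 1) := by
    intro i
    by_cases h1 : i = a <;> by_cases h2 : i = z
    · exact absurd (h1.symm.trans h2) haz
    · simp [h1, h2, haz]
    · simp [h1, h2, Ne.symm haz]
    · simp [h1, h2]
  rw [Finset.prod_congr rfl (fun i _ => heq i), Finset.prod_mul_distrib]
  simp

/-- The construction achieving `(liminf, limsup) = (s, ∞)` for `2 ≤ s ≤ h`: let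
`B 1 = ℕ` (positive integers), `B i = P ∪ {1}` for `2 ≤ i ≤ s`, and `B i = {1}` for
`i > s`.  Then `g p = s` for every prime `p`, `g n ≥ s` for all `n ≥ 2`, `g n` is at
least the number of distinct prime factors of `n`, `liminf g = s`, and `limsup g = ∞`
(i.e. `g` is unbounded). -/
theorem liminf_s_limsup_infty_construction (h s : ℕ) (hh : 2 ≤ h) (hs2 : 2 ≤ s)
    (hsh : s ≤ h)
    (B : Fin h → Set ℕ)
    (hB : ∀ i : Fin h, B i =
      if (i : ℕ) = 0 then {m : ℕ | 0 < m}
      else if (i : ℕ) < s then {m : ℕ | m.Prime ∨ m = 1}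
      else {1})
    (g : ℕ → ℕ)
    (hg : ∀ n, g n = {b : Fin h → ℕ | (∀ i, b i ∈ B i) ∧ ∏ i, b i = n}.ncard) :
    (∀ p : ℕ, p.Prime → g p = s) ∧
    (∀ n : ℕ, 2 ≤ n → s ≤ g n) ∧
    (∀ n : ℕ, 0 < n → n.primeFactors.card ≤ g n) ∧
    Filter.liminf g Filter.atTop = s ∧
    (∀ m : ℕ, ∃ n : ℕ, m ≤ g n) := by
  have hone : ∀ i : Fin h, (1:ℕ) ∈ B i := by
    intro i; rw [hB]; split_ifs <;> simp
  have hfin : ∀ n : ℕ, 0 < n →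
      {b : Fin h → ℕ | (∀ i, b i ∈ B i) ∧ ∏ i, b i = n}.Finite := by
    intro n hn
    have hsub : {b : Fin h → ℕ | (∀ i, b i ∈ B i) ∧ ∏ i, b i = n}
        ⊆ Set.pi Set.univ (fun _ : Fin h => Set.Iic n) := by
      rintro b ⟨-, hprod⟩
      rw [Set.mem_pi]
      intro i _
      exact Nat.le_of_dvd hn (hprod ▸ Finset.dvd_prod_of_mem b (Finset.mem_univ i))
    exact Set.Finite.subset (Set.Finite.pi (fun i : Fin h => Set.finite_Iic n)) hsub
  set z : Fin h := ⟨0, by omega⟩ with hz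
  have hposmem : ∀ i : Fin h, (i : ℕ) = 0 → ∀ m : ℕ, 0 < m → m ∈ B i := by
    intro i hi m hm
    rw [hB, if_pos hi]
    exact hm
  have hprimemem : ∀ i : Fin h, (i : ℕ) ≠ 0 → (i : ℕ) < s → ∀ m : ℕ, m.Prime → m ∈ B i := by
    intro i hi0 his m hm
    rw [hB, if_neg hi0, if_pos his]
    exact Or.inl hm
  -- claim 1
  have claim1 : ∀ p : ℕ, p.Prime → g p = s := by
    intro p hp
    have hkey : {b : Fin h → ℕ | (∀ i, b i ∈ B i) ∧ ∏ i, b i = p}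
        = Set.range (fun j : Fin s => fun i : Fin h => if i = Fin.castLE hsh j then p else 1) := by
      ext b
      constructor
      · rintro ⟨hmem, hprod⟩
        have h1p : ∀ i, b i = 1 ∨ b i = p := fun i =>
          hp.eq_one_or_self_of_dvd _ (hprod ▸ Finset.dvd_prod_of_mem b (Finset.mem_univ i))
        have hex : ∃ i0, b i0 = p := by
          by_contra hc
          push_neg at hc
          have hall : ∀ i ∈ Finset.univ, b i = 1 := fun i _ => (h1p i).resolve_right (hc i)
          rw [Finset.prod_eq_one hall] at hprod
          exact hp.one_lt.ne' hprod.symm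
        obtain ⟨i0, hi0⟩ := hex
        have hrest : ∀ i, i ≠ i0 → b i = 1 := by
          intro i hi
          have h2 : b i0 * ∏ j ∈ Finset.univ.erase i0, b j = p := by
            rw [Finset.mul_prod_erase Finset.univ b (Finset.mem_univ i0)]
            exact hprod
          rw [hi0] at h2
          have h3 : ∏ j ∈ Finset.univ.erase i0, b j = 1 :=
            Nat.eq_of_mul_eq_mul_left hp.pos (by rw [h2, mul_one])
          exact Nat.dvd_one.mp (h3 ▸ Finset.dvd_prod_of_mem b
            (Finset.mem_erase.mpr ⟨hi, Finset.mem_univ i⟩))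
        have hi0s : (i0 : ℕ) < s := by
          by_contra hc
          push_neg at hc
          have hm := hmem i0
          rw [hB, if_neg (by omega), if_neg (by omega)] at hm
          rw [Set.mem_singleton_iff, hi0] at hm
          exact hp.one_lt.ne' hm
        refine ⟨⟨(i0 : ℕ), hi0s⟩, ?_⟩
        have hcast : Fin.castLE hsh ⟨(i0 : ℕ), hi0s⟩ = i0 := rfl
        funext i
        show (if i = Fin.castLE hsh ⟨(i0 : ℕ), hi0s⟩ then p else 1) = b i
        rw [hcast]
        by_cases hii : i = i0
        · rw [if_pos hii, hii, hi0]
        · rw [if_neg hii, hrest i hii]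
      · rintro ⟨j, rfl⟩
        constructor
        · intro i
          show (if i = Fin.castLE hsh j then p else 1) ∈ B i
          by_cases hij : i = Fin.castLE hsh j
          · rw [if_pos hij]
            have his : (i : ℕ) < s := by rw [hij]; simpa using j.2
            by_cases hi0 : (i : ℕ) = 0
            · exact hposmem i hi0 p hp.pos
            · exact hprimemem i hi0 his p hp
          · rw [if_neg hij]
            exact hone i
        · show ∏ i, (if i = Fin.castLE hsh j then p else 1) = p
          simp
    rw [hg, hkey]
    have hinj : Function.Injective
        (fun j : Fin s => fun i : Fin h => if i = Fin.castLE hsh j then p else 1) := by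
      intro j j' hjj
      by_contra hne
      have hc : (if (Fin.castLE hsh j : Fin h) = Fin.castLE hsh j then p else 1)
          = (if (Fin.castLE hsh j : Fin h) = Fin.castLE hsh j' then p else 1) :=
        congrFun hjj (Fin.castLE hsh j)
      rw [if_pos rfl, if_neg (fun hcc => hne (Fin.castLE_injective hsh hcc))] at hc
      exact hp.one_lt.ne' hc
    rw [← Nat.card_coe_set_eq, Nat.card_range_of_injective hinj, Nat.card_eq_fintype_card,
      Fintype.card_fin]
  -- claim 2
  have claim2 : ∀ n : ℕ, 2 ≤ n → s ≤ g n := by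
    intro n hn
    set q := n.minFac with hq
    have hqp : q.Prime := Nat.minFac_prime (by omega)
    have hqd : q ∣ n := Nat.minFac_dvd n
    have hdiv : n / q < n := Nat.div_lt_self (by omega) hqp.one_lt
    set f : Fin s → (Fin h → ℕ) := fun j i =>
      if (j : ℕ) = 0 then (if i = z then n else 1)
      else (if i = Fin.castLE hsh j then q else if i = z then n / q else 1) with hf
    have hfe0 : ∀ j : Fin s, (j : ℕ) = 0 → f j = fun i => if i = z then n else 1 := by
      intro j hj0
      funext i
      simp [hf, hj0]
    have hfe1 : ∀ j : Fin s, (j : ℕ) ≠ 0 →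
        f j = fun i => if i = Fin.castLE hsh j then q else if i = z then n / q else 1 := by
      intro j hj0
      funext i
      simp [hf, hj0]
    have hzcast : ∀ j : Fin s, (j : ℕ) ≠ 0 → Fin.castLE hsh j ≠ z := by
      intro j hj0 hc
      apply hj0
      have := congrArg Fin.val hc
      simpa [hz] using this
    have hsub : Set.range f ⊆ {b : Fin h → ℕ | (∀ i, b i ∈ B i) ∧ ∏ i, b i = n} := by
      rintro b ⟨j, rfl⟩
      by_cases hj0 : (j : ℕ) = 0
      · rw [hfe0 j hj0]
        constructor
        · intro i
          show (if i = z then n else 1) ∈ B i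
          by_cases hiz : i = z
          · rw [if_pos hiz]
            exact hposmem i (by rw [hiz]) n (by omega)
          · rw [if_neg hiz]
            exact hone i
        · show ∏ i, (if i = z then n else 1) = n
          simp
      · rw [hfe1 j hj0]
        have hjz := hzcast j hj0
        constructor
        · intro i
          show (if i = Fin.castLE hsh j then q else if i = z then n / q else 1) ∈ B i
          by_cases hij : i = Fin.castLE hsh j
          · rw [if_pos hij]
            have his : (i : ℕ) < s := by rw [hij]; simpa using j.2
            have hi0 : (i : ℕ) ≠ 0 := by
              intro hc
              exact hjz (by rw [← hij]; exact Fin.ext (by simpa [hz] using hc))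
            exact hprimemem i hi0 his q hqp
          · rw [if_neg hij]
            by_cases hiz : i = z
            · rw [if_pos hiz]
              exact hposmem i (by rw [hiz]) (n / q) (Nat.div_pos (Nat.le_of_dvd (by omega) hqd) hqp.pos)
            · rw [if_neg hiz]
              exact hone i
        · show ∏ i, (if i = Fin.castLE hsh j then q else if i = z then n / q else 1) = n
          rw [prod_two_ite_aux _ _ hjz]
          exact Nat.mul_div_cancel' hqd
    have hinj : Function.Injective f := by
      intro j j' hjj
      by_contra hne
      by_cases hj0 : (j : ℕ) = 0 <;> by_cases hj'0 : (j' : ℕ) = 0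
      · exact hne (Fin.ext (hj0.trans hj'0.symm))
      · have hc : (if (z : Fin h) = z then n else 1)
            = (if (z : Fin h) = Fin.castLE hsh j' then q else if (z : Fin h) = z then n / q else 1) := by
          rw [← congrFun (hfe0 j hj0) z, ← congrFun (hfe1 j' hj'0) z, hjj]
        rw [if_pos rfl, if_neg (fun hcc => hzcast j' hj'0 hcc.symm), if_pos rfl] at hc
        omega
      · have hc : (if (z : Fin h) = Fin.castLE hsh j then q else if (z : Fin h) = z then n / q else 1)
            = (if (z : Fin h) = z then n else 1) := by
          rw [← congrFun (hfe1 j hj0) z, ← congrFun (hfe0 j' hj'0) z, hjj]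
        rw [if_pos rfl, if_neg (fun hcc => hzcast j hj0 hcc.symm), if_pos rfl] at hc
        omega
      · have hc : (if (Fin.castLE hsh j : Fin h) = Fin.castLE hsh j then q
              else if (Fin.castLE hsh j : Fin h) = z then n / q else 1)
            = (if (Fin.castLE hsh j : Fin h) = Fin.castLE hsh j' then q
              else if (Fin.castLE hsh j : Fin h) = z then n / q else 1) := by
          rw [← congrFun (hfe1 j hj0) (Fin.castLE hsh j),
            ← congrFun (hfe1 j' hj'0) (Fin.castLE hsh j), hjj]
        rw [if_pos rfl, if_neg (fun hcc => hne (Fin.castLE_injective hsh hcc)),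
          if_neg (hzcast j hj0)] at hc
        have := hqp.one_lt
        omega
    rw [hg]
    calc s = (Set.range f).ncard := by
          rw [← Nat.card_coe_set_eq, Nat.card_range_of_injective hinj,
            Nat.card_eq_fintype_card, Fintype.card_fin]
      _ ≤ _ := Set.ncard_le_ncard hsub (hfin n (by omega))
  -- claim 3
  have claim3 : ∀ n : ℕ, 0 < n → n.primeFactors.card ≤ g n := by
    intro n hn
    set o : Fin h := ⟨1, by omega⟩ with ho
    have hoz : o ≠ z := by
      intro hc
      have := congrArg Fin.val hc
      simp [ho, hz] at this
    set F : ℕ → (Fin h → ℕ) := fun q i => if i = o then q else if i = z then n / q else 1 with hF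
    have hsub : F '' ↑n.primeFactors ⊆ {b : Fin h → ℕ | (∀ i, b i ∈ B i) ∧ ∏ i, b i = n} := by
      rintro b ⟨q, hq, rfl⟩
      rw [Finset.mem_coe, Nat.mem_primeFactors] at hq
      obtain ⟨hqp, hqd, -⟩ := hq
      constructor
      · intro i
        show (if i = o then q else if i = z then n / q else 1) ∈ B i
        by_cases hio : i = o
        · rw [if_pos hio]
          exact hprimemem i (by rw [hio]; exact one_ne_zero) (by rw [hio]; show (1:ℕ) < s; omega) q hqp
        · rw [if_neg hio]
          by_cases hiz : i = z
          · rw [if_pos hiz]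
            exact hposmem i (by rw [hiz]) (n / q) (Nat.div_pos (Nat.le_of_dvd hn hqd) hqp.pos)
          · rw [if_neg hiz]
            exact hone i
      · show ∏ i, (if i = o then q else if i = z then n / q else 1) = n
        rw [prod_two_ite_aux _ _ hoz]
        exact Nat.mul_div_cancel' hqd
    have hinjOn : Set.InjOn F ↑n.primeFactors := by
      intro a ha a' ha' haa
      have hc : (if (o : Fin h) = o then a else if (o : Fin h) = z then n / a else 1)
          = (if (o : Fin h) = o then a' else if (o : Fin h) = z then n / a' else 1) :=
        congrFun haa o
      rwa [if_pos rfl, if_pos rfl] at hc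
    rw [hg]
    calc n.primeFactors.card = (F '' ↑n.primeFactors).ncard := by
          rw [Set.ncard_image_of_injOn hinjOn, Set.ncard_coe_finset]
      _ ≤ _ := Set.ncard_le_ncard hsub (hfin n hn)
  -- claim 5 (unboundedness)
  have claim5 : ∀ m : ℕ, ∃ n : ℕ, m ≤ g n := by
    intro m
    obtain ⟨t, hts, htc⟩ := Nat.infinite_setOf_prime.exists_subset_card_eq m
    refine ⟨∏ p ∈ t, p, ?_⟩
    have hpr : ∀ p ∈ t, p.Prime := fun p hp => hts hp
    have hpos : 0 < ∏ p ∈ t, p := Finset.prod_pos (fun p hp => (hpr p hp).pos)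
    have := claim3 _ hpos
    rwa [Nat.primeFactors_prod hpr, htc] at this
  -- claim 4 (liminf)
  have claim4 : Filter.liminf g Filter.atTop = s := by
    rw [Filter.liminf_eq]
    have hsmem : s ∈ {a | ∀ᶠ n in Filter.atTop, a ≤ g n} := by
      filter_upwards [Filter.eventually_ge_atTop 2] with n hn
      exact claim2 n hn
    have hbdd : ∀ a ∈ {a | ∀ᶠ n in Filter.atTop, a ≤ g n}, a ≤ s := by
      intro a ha
      rw [Set.mem_setOf_eq, Filter.eventually_atTop] at ha
      obtain ⟨N, hN⟩ := ha
      obtain ⟨p, hpN, hp⟩ := Nat.exists_infinite_primes N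
      have := hN p hpN
      rwa [claim1 p hp] at this
    exact le_antisymm (csSup_le ⟨s, hsmem⟩ hbdd) (le_csSup ⟨s, hbdd⟩ hsmem)
  exact ⟨claim1, claim2, claim3, claim4, claim5⟩
end
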